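/- arXiv:math/0407185 — 5 statements merged into one kernel-verified Lean document; each statement's English description precedes it below -/
import Mathlib

section
/- Let G be a graph whose vertex set is partitioned as V = S ∪ S̄, let v ∈ S, and consider independent bond percolation on G. Suppose that for every edge e crossing the cut (S, S̄), the probability that v is connected to an endpoint of e by an open path lying entirely inside S is at most η. If u ∈ S̄, then for any (possibly adaptive) local routing algorithm that probes edges starting from u and only probes edges incident to vertices already reached from u by open paths, the probability that the algorithm finds an open path from u to v using fewer than t probes, conditioned on u being connected to v, is at most tη / Pr[u ∼ v]. -/
open MeasureTheory ProbabilityTheory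
open scoped ENNReal

/-- Bernoulli measure on `Bool` with parameter `p` (truncated to `[0,1]`). -/
noncomputable def bern (p : ℝ) : Measure Bool :=
  (PMF.bernoulli (min (Real.toNNReal p) 1) (min_le_right _ _)).toMeasure

instance (p : ℝ) : IsProbabilityMeasure (bern p) := by
  unfold bern; infer_instance

/-- Independent percolation: product Bernoulli measure on configurations indexed by `E`. -/
noncomputable def perc (E : Type*) [Fintype E] (p : ℝ) : Measure (E → Bool) :=
  Measure.pi fun _ => bern p

variable {V : Type*}

/-- `x` and `y` are joined by an open path all of whose vertices lie in `S`. -/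
def OpenConnOn (G : SimpleGraph V) (ω : Sym2 V → Bool) (S : Set V) (x y : V) : Prop :=
  ∃ w : G.Walk x y, (∀ e ∈ w.edges, ω e = true) ∧ ∀ z ∈ w.support, z ∈ S

/-- `x` and `y` are joined by an open path. -/
def OpenConn (G : SimpleGraph V) (ω : Sym2 V → Bool) (x y : V) : Prop :=
  ∃ w : G.Walk x y, ∀ e ∈ w.edges, ω e = true

/-- A (deterministic, adaptive) routing algorithm: given the history of probed
edges together with their observed status, it chooses the next edge to probe. -/
structure Alg (V : Type*) where
  next : List (Sym2 V × Bool) → Sym2 V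

/-- The history (list of probed edges with their status) after `t` probes. -/
def Alg.hist (A : Alg V) (ω : Sym2 V → Bool) : ℕ → List (Sym2 V × Bool)
  | 0 => []
  | t + 1 => (A.next (A.hist ω t), ω (A.next (A.hist ω t))) :: A.hist ω t

/-- The set of edges probed and found open within the first `t` probes. -/
def Alg.probedOpen (A : Alg V) (ω : Sym2 V → Bool) (t : ℕ) : Set (Sym2 V) :=
  {e | (e, true) ∈ A.hist ω t}

/-- Vertices reachable from `u` using only edges in the set `F`. -/
def reachedFrom (G : SimpleGraph V) (u : V) (F : Set (Sym2 V)) : Set V :=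
  {x | ∃ w : G.Walk u x, ∀ e ∈ w.edges, e ∈ F}

/-- A local routing algorithm only probes edges incident to a vertex already
reached from `u` by probed open edges. -/
def Alg.IsLocal (A : Alg V) (G : SimpleGraph V) (u : V) : Prop :=
  ∀ ω t, ∃ x, x ∈ reachedFrom G u (A.probedOpen ω t) ∧ x ∈ A.next (A.hist ω t)

/-- The algorithm has succeeded within `t` probes: it has certified an open
path from `u` to `v` (all of whose edges were probed and found open). -/
def Alg.SucceedsBy (A : Alg V) (G : SimpleGraph V) (ω : Sym2 V → Bool) (u v : V) (t : ℕ) : Prop :=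
  ∃ w : G.Walk u v, ∀ e ∈ w.edges, e ∈ A.probedOpen ω t

/-! ### Auxiliary measure-theoretic lemmas -/

section MeasAux

variable {ι : Type*} [Fintype ι] [DecidableEq ι] (p : ℝ)

instance (E : Type*) [Fintype E] (p : ℝ) : IsProbabilityMeasure (perc E p) := by
  unfold perc; infer_instance

lemma measurableSet_all (s : Set (ι → Bool)) : MeasurableSet s := by
  have h1 : ∀ ω : ι → Bool, MeasurableSet ({ω} : Set (ι → Bool)) := by
    intro ω
    have h : ({ω} : Set (ι → Bool)) = ⋂ e, (fun f : ι → Bool => f e) ⁻¹' {ω e} := by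
      ext ω'; simp [funext_iff]
    rw [h]
    exact MeasurableSet.iInter fun e => (measurable_pi_apply e) (measurableSet_singleton _)
  have h : s = ⋃ ω ∈ s, {ω} := by ext; simp
  rw [h]
  exact MeasurableSet.biUnion (Set.to_countable s) fun ω _ => h1 ω

lemma perc_singleton (ω : ι → Bool) : perc ι p {ω} = ∏ e, bern p {ω e} := by
  have h : ({ω} : Set (ι → Bool)) = Set.pi Set.univ (fun e => {ω e}) := by
    ext ω'; simp [Set.mem_pi, funext_iff]
  rw [h, perc, Measure.pi_pi]

lemma perc_eq_sum (s : Set (ι → Bool)) :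
    perc ι p s = ∑ ω ∈ (Set.toFinite s).toFinset, perc ι p {ω} := by
  conv_lhs => rw [show s = ⋃ ω ∈ (Set.toFinite s).toFinset, ({ω} : Set (ι → Bool)) by
    ext ω; simp [Set.Finite.mem_toFinset]]
  exact measure_biUnion_finset (fun a _ b _ hab => Set.disjoint_singleton.mpr hab)
    (fun ω _ => measurableSet_all _)

lemma perc_indep (F : Finset ι) (H C : Set (ι → Bool))
    (hH : ∀ ω ω' : ι → Bool, (∀ e ∈ F, ω e = ω' e) → ω ∈ H → ω' ∈ H)
    (hC : ∀ ω ω' : ι → Bool, (∀ e ∉ F, ω e = ω' e) → ω ∈ C → ω' ∈ C) :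
    perc ι p (H ∩ C) = perc ι p H * perc ι p C := by
  classical
  set f : (ι → Bool) → ℝ≥0∞ := fun ω => ∏ e, bern p {ω e} with hf
  set m : (ι → Bool) → (ι → Bool) → (ι → Bool) := fun α β e => if e ∈ F then α e else β e with hm
  have key : ∀ α β, f α * f β = f (m α β) * f (m β α) := by
    intro α β
    simp only [hf, ← Finset.prod_mul_distrib]
    refine Finset.prod_congr rfl fun e _ => ?_
    by_cases he : e ∈ F <;> simp [hm, he, mul_comm]
  have hinv : ∀ α β : ι → Bool, m (m α β) (m β α) = α := by
    intro α β; funext e; by_cases he : e ∈ F <;> simp [hm, he]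
  have hmemH : ∀ α β, α ∈ H → m α β ∈ H :=
    fun α β hα => hH α (m α β) (fun e he => by simp [hm, he]) hα
  have hmemC : ∀ α β, β ∈ C → m α β ∈ C :=
    fun α β hβ => hC β (m α β) (fun e he => by simp [hm, he]) hβ
  have hmemH' : ∀ α β, m α β ∈ H → α ∈ H :=
    fun α β h => hH (m α β) α (fun e he => by simp [hm, he]) h
  have hmemC' : ∀ α β, m α β ∈ C → β ∈ C :=
    fun α β h => hC (m α β) β (fun e he => by simp [hm, he]) h
  have hμ : ∀ s : Set (ι → Bool), perc ι p s = ∑ ω ∈ (Set.toFinite s).toFinset, f ω := by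
    intro s; rw [perc_eq_sum p s]; exact Finset.sum_congr rfl fun ω _ => perc_singleton p ω
  have huniv : perc ι p (Set.univ : Set (ι → Bool)) = 1 := measure_univ
  have calc1 : perc ι p H * perc ι p C = perc ι p (H ∩ C) * perc ι p Set.univ := by
    rw [hμ H, hμ C, hμ (H ∩ C), hμ Set.univ, Finset.sum_mul_sum, Finset.sum_mul_sum,
      ← Finset.sum_product', ← Finset.sum_product']
    refine Finset.sum_nbij' (fun q => (m q.1 q.2, m q.2 q.1)) (fun q => (m q.1 q.2, m q.2 q.1))
      ?_ ?_ ?_ ?_ ?_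
    · rintro ⟨α, β⟩ hq
      rw [Finset.mem_product, Set.Finite.mem_toFinset, Set.Finite.mem_toFinset] at hq
      rw [Finset.mem_product, Set.Finite.mem_toFinset, Set.Finite.mem_toFinset]
      exact ⟨⟨hmemH α β hq.1, hmemC α β hq.2⟩, Set.mem_univ _⟩
    · rintro ⟨α, β⟩ hq
      rw [Finset.mem_product, Set.Finite.mem_toFinset, Set.Finite.mem_toFinset] at hq
      rw [Finset.mem_product, Set.Finite.mem_toFinset, Set.Finite.mem_toFinset]
      exact ⟨hmemH α β hq.1.1, hmemC β α hq.1.2⟩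
    · rintro ⟨α, β⟩ _; simp only [Prod.mk.injEq]; exact ⟨hinv α β, hinv β α⟩
    · rintro ⟨α, β⟩ _; simp only [Prod.mk.injEq]; exact ⟨hinv α β, hinv β α⟩
    · rintro ⟨α, β⟩ _; exact key α β
  rw [calc1, huniv, mul_one]

end MeasAux

/-! ### Auxiliary combinatorial lemmas -/

section CombAux

variable [DecidableEq V] {G : SimpleGraph V} {S : Set V} {ω : Sym2 V → Bool}

lemma openConnOn_symm {a b : V} (h : OpenConnOn G ω S a b) : OpenConnOn G ω S b a := by
  obtain ⟨w, hopen, hsupp⟩ := h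
  exact ⟨w.reverse,
    fun e he => hopen e (by rwa [SimpleGraph.Walk.edges_reverse, List.mem_reverse] at he),
    fun z hz => hsupp z (by rwa [SimpleGraph.Walk.support_reverse, List.mem_reverse] at hz)⟩

lemma openConnOn_trans {a b c : V} (h₁ : OpenConnOn G ω S a b) (h₂ : OpenConnOn G ω S b c) :
    OpenConnOn G ω S a c := by
  obtain ⟨w₁, ho₁, hs₁⟩ := h₁
  obtain ⟨w₂, ho₂, hs₂⟩ := h₂
  refine ⟨w₁.append w₂, fun e he => ?_, fun z hz => ?_⟩
  · rw [SimpleGraph.Walk.edges_append, List.mem_append] at he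
    rcases he with he | he
    exacts [ho₁ e he, ho₂ e he]
  · rw [SimpleGraph.Walk.support_append, List.mem_append] at hz
    rcases hz with hz | hz
    exacts [hs₁ z hz, hs₂ z (List.mem_of_mem_tail hz)]

lemma walk_last_crossing {a b : V} (w : G.Walk a b) (hb : b ∈ S) :
    (∀ z ∈ w.support, z ∈ S) ∨
    ∃ (x y : V) (w' : G.Walk x b), x ∈ S ∧ y ∉ S ∧ s(x, y) ∈ w.edges ∧
      (∀ e ∈ w'.edges, e ∈ w.edges) ∧ ∀ z ∈ w'.support, z ∈ S := by
  induction w with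
  | nil =>
    left; intro z hz
    rw [SimpleGraph.Walk.support_nil, List.mem_singleton] at hz
    exact hz ▸ hb
  | @cons a c b h q ih =>
    rcases ih hb with hall | ⟨x, y, w', hx, hy, hmem, hsub, hsupp⟩
    · by_cases huS : a ∈ S
      · left; intro z hz
        rw [SimpleGraph.Walk.support_cons] at hz
        rcases List.mem_cons.mp hz with rfl | hz
        exacts [huS, hall z hz]
      · right
        refine ⟨c, a, q, hall c q.start_mem_support, huS, ?_, fun e he => ?_, hall⟩
        · rw [SimpleGraph.Walk.edges_cons, show s(c, a) = s(a, c) from Sym2.eq_swap]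
          exact List.mem_cons_self
        · rw [SimpleGraph.Walk.edges_cons]; exact List.mem_cons_of_mem _ he
    · right
      exact ⟨x, y, w', hx, hy,
        by rw [SimpleGraph.Walk.edges_cons]; exact List.mem_cons_of_mem _ hmem,
        fun e he => by rw [SimpleGraph.Walk.edges_cons]; exact List.mem_cons_of_mem _ (hsub e he),
        hsupp⟩

lemma reach_crossing {a b : V} (ha : a ∉ S) (hb : b ∈ S)
    (w : G.Walk a b) (hopen : ∀ e ∈ w.edges, ω e = true) (P : Set (Sym2 V))
    (hP : ∀ e ∈ w.edges, e ∈ P) :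
    ∃ x y, x ∈ S ∧ y ∉ S ∧ s(x, y) ∈ P ∧ s(x, y) ∈ G.edgeSet ∧ OpenConnOn G ω S x b := by
  rcases walk_last_crossing w hb with hall | ⟨x, y, w', hx, hy, hmem, hsub, hsupp⟩
  · exact absurd (hall a w.start_mem_support) ha
  · exact ⟨x, y, hx, hy, hP _ hmem, w.edges_subset_edgeSet hmem,
      ⟨w', fun e he => hopen e (hsub e he), hsupp⟩⟩

end CombAux

/-! ### Auxiliary lemmas about histories -/

lemma Alg.hist_congr (A : Alg V) (ω ω' : Sym2 V → Bool) :
    ∀ i, (∀ e ∈ (A.hist ω i).map Prod.fst, ω e = ω' e) → A.hist ω' i = A.hist ω i := by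
  intro i
  induction i with
  | zero => intro _; rfl
  | succ i ih =>
    intro h
    have hsub : ∀ e ∈ (A.hist ω i).map Prod.fst, ω e = ω' e := by
      intro e he
      exact h e (by simp only [Alg.hist, List.map_cons]; exact List.mem_cons_of_mem _ he)
    have hh := ih hsub
    have hv : ω (A.next (A.hist ω i)) = ω' (A.next (A.hist ω i)) :=
      h _ (by simp only [Alg.hist, List.map_cons]; exact List.mem_cons_self)
    simp only [Alg.hist, hh, ← hv]

lemma Alg.hist_snd (A : Alg V) (ω : Sym2 V → Bool) :
    ∀ i, ∀ pr ∈ A.hist ω i, ω pr.1 = pr.2 := by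
  intro i
  induction i with
  | zero => intro pr h; exact absurd h List.not_mem_nil
  | succ i ih =>
    intro pr h
    rcases List.mem_cons.mp h with rfl | h'
    · rfl
    · exact ih pr h'

lemma Alg.hist_mem (A : Alg V) (ω : Sym2 V → Bool) :
    ∀ i, ∀ pr ∈ A.hist ω i, ∃ j < i, pr.1 = A.next (A.hist ω j) := by
  intro i
  induction i with
  | zero => intro pr h; exact absurd h List.not_mem_nil
  | succ i ih =>
    intro pr h
    rcases List.mem_cons.mp h with rfl | h'
    · exact ⟨i, Nat.lt_succ_self i, rfl⟩
    · obtain ⟨j, hj, hje⟩ := ih pr h'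
      exact ⟨j, hj.trans (Nat.lt_succ_self i), hje⟩

/-- The "good step" predicate: the edge probed at step `i` crosses the cut and
`v` is connected inside `S` to one of its endpoints. -/
def GoodStep (A : Alg V) (G : SimpleGraph V) (S : Set V) (v : V)
    (ω : Sym2 V → Bool) (i : ℕ) : Prop :=
  A.next (A.hist ω i) ∈ G.edgeSet ∧
  (∃ x y : V, A.next (A.hist ω i) = s(x, y) ∧ x ∈ S ∧ y ∉ S) ∧
  ∃ x, x ∈ A.next (A.hist ω i) ∧ OpenConnOn G ω S v x

lemma goodStep_intro {A : Alg V} {G : SimpleGraph V} {S : Set V} {v : V}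
    {ω : Sym2 V → Bool} {j : ℕ} {x y : V}
    (hje : s(x, y) = A.next (A.hist ω j)) (hE : s(x, y) ∈ G.edgeSet)
    (hx : x ∈ S) (hy : y ∉ S) (hconn : OpenConnOn G ω S v x) :
    GoodStep A G S v ω j :=
  ⟨hje ▸ hE, ⟨x, y, hje.symm, hx, hy⟩, x, hje ▸ Sym2.mem_mk_left x y, hconn⟩

/-- Core counting bound: a local algorithm reaches `v` within fewer than `t`
probes with probability at most `t·η`. -/
lemma key_bound {V : Type*} [Fintype V] [DecidableEq V]
    (G : SimpleGraph V) (p : ℝ)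
    (S : Set V) (u v : V) (hv : v ∈ S) (hu : u ∉ S) (η : ℝ≥0∞)
    (hη : ∀ e ∈ G.edgeSet, (∃ x y : V, e = s(x, y) ∧ x ∈ S ∧ y ∉ S) →
      perc (Sym2 V) p {ω | ∃ x, x ∈ e ∧ OpenConnOn G ω S v x} ≤ η)
    (A : Alg V) (hA : A.IsLocal G u) (t : ℕ) :
    perc (Sym2 V) p {ω | ∃ s < t, A.SucceedsBy G ω u v s} ≤ (t : ℝ≥0∞) * η := by
  classical
  set μ := perc (Sym2 V) p with hμdef
  -- Step 1: success implies some good step before `t`.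
  have hD : {ω | ∃ s < t, A.SucceedsBy G ω u v s} ⊆ {ω | ∃ i < t, GoodStep A G S v ω i} := by
    rintro ω ⟨s, hst, w, hw⟩
    have hopen : ∀ e ∈ w.edges, ω e = true := fun e he => A.hist_snd ω s _ (hw e he)
    obtain ⟨x, y, hx, hy, hP, hE, hconn⟩ :=
      reach_crossing hu hv w hopen (A.probedOpen ω s) hw
    obtain ⟨j, hj, hje⟩ := A.hist_mem ω s (s(x, y), true) hP
    exact ⟨j, hj.trans hst, goodStep_intro hje hE hx hy (openConnOn_symm hconn)⟩
  -- Step 2: each "first good step at time `i`" event has probability ≤ η.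
  have hT : ∀ i, μ {ω | GoodStep A G S v ω i ∧ ∀ j < i, ¬ GoodStep A G S v ω j} ≤ η := by
    intro i
    set T : Set (Sym2 V → Bool) :=
      {ω | GoodStep A G S v ω i ∧ ∀ j < i, ¬ GoodStep A G S v ω j} with hTdef
    set Hs : Finset (List (Sym2 V × Bool)) :=
      Finset.image (fun ω => A.hist ω i) Finset.univ with hHs
    have hcover : T ⊆ ⋃ h ∈ Hs, T ∩ {ω | A.hist ω i = h} := fun ω hω =>
      Set.mem_biUnion (Finset.mem_image_of_mem _ (Finset.mem_univ ω)) ⟨hω, rfl⟩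
    refine le_trans (measure_mono hcover) (le_trans (measure_biUnion_finset_le _ _) ?_)
    have hterm : ∀ h ∈ Hs, μ (T ∩ {ω | A.hist ω i = h}) ≤ μ {ω | A.hist ω i = h} * η := by
      intro h _
      set e := A.next h with he
      set F : Finset (Sym2 V) := (h.map Prod.fst).toFinset with hF
      by_cases hcr : e ∈ G.edgeSet ∧ ∃ x y : V, e = s(x, y) ∧ x ∈ S ∧ y ∉ S
      · set C' : Set (Sym2 V → Bool) := {ω | ∃ x, x ∈ e ∧ ∃ w : G.Walk v x,
          (∀ f ∈ w.edges, ω f = true ∧ f ∉ F) ∧ ∀ z ∈ w.support, z ∈ S} with hC'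
        have hsub : T ∩ {ω | A.hist ω i = h} ⊆ {ω | A.hist ω i = h} ∩ C' := by
          rintro ω ⟨⟨hGoodi, hmin⟩, hh⟩
          refine ⟨hh, ?_⟩
          obtain ⟨hEdge, hXR, x, hxe, wv, hwopen, hwsupp⟩ := hGoodi
          refine ⟨x, by rwa [hh] at hxe, wv, fun f hf => ⟨hwopen f hf, ?_⟩, hwsupp⟩
          intro hfF
          rw [hF, List.mem_toFinset, List.mem_map] at hfF
          obtain ⟨pr, hpr, hprf⟩ := hfF
          rw [← hh] at hpr
          obtain ⟨k, hk, hke⟩ := A.hist_mem ω i pr hpr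
          obtain ⟨a, ha_reach, ha_mem⟩ := hA ω k
          have haf : a ∈ f := by rw [← hprf, hke]; exact ha_mem
          obtain ⟨b, hb⟩ := Sym2.mem_iff_exists.mp haf
          have haw : a ∈ wv.support := wv.fst_mem_support_of_mem_edges (hb ▸ hf)
          have haS : a ∈ S := hwsupp a haw
          have hva : OpenConnOn G ω S v a :=
            ⟨wv.takeUntil a haw, fun e' he' => hwopen e' (wv.edges_takeUntil_subset haw he'),
             fun z hz => hwsupp z (wv.support_takeUntil_subset haw hz)⟩
          obtain ⟨W, hW⟩ := ha_reach
          have hWopen : ∀ e' ∈ W.edges, ω e' = true :=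
            fun e' he' => A.hist_snd ω k _ (hW e' he')
          obtain ⟨x', y', hx', hy', hP', hE', hconn'⟩ :=
            reach_crossing hu haS W hWopen (A.probedOpen ω k) hW
          obtain ⟨j, hjk, hje⟩ := A.hist_mem ω k (s(x', y'), true) hP'
          exact hmin j (hjk.trans hk)
            (goodStep_intro hje hE' hx' hy'
              (openConnOn_trans hva (openConnOn_symm hconn')))
        have hindep := perc_indep p F {ω | A.hist ω i = h} C'
          (by
            intro ω ω' hagree hωh
            have hcongr : A.hist ω' i = A.hist ω i := A.hist_congr ω ω' i (by
              intro e' he'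
              apply hagree
              rw [hF, List.mem_toFinset]
              rwa [hωh] at he')
            show A.hist ω' i = h
            rw [hcongr]; exact hωh)
          (by
            rintro ω ω' hagree ⟨x, hx, w, hw, hws⟩
            exact ⟨x, hx, w, fun f hf =>
              ⟨by rw [← hagree f (hw f hf).2]; exact (hw f hf).1, (hw f hf).2⟩, hws⟩)
        have hC'le : μ C' ≤ η := by
          refine le_trans (measure_mono ?_) (hη e hcr.1 hcr.2)
          rintro ω ⟨x, hx, w, hw, hws⟩
          exact ⟨x, hx, w, fun f hf => (hw f hf).1, hws⟩
        calc μ (T ∩ {ω | A.hist ω i = h}) ≤ μ ({ω | A.hist ω i = h} ∩ C') :=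
              measure_mono hsub
          _ = μ {ω | A.hist ω i = h} * μ C' := hindep
          _ ≤ μ {ω | A.hist ω i = h} * η := mul_le_mul_right hC'le _
      · have hempty : T ∩ {ω | A.hist ω i = h} ⊆ ∅ := by
          rintro ω ⟨⟨hGoodi, _⟩, hh⟩
          obtain ⟨h1, h2, _⟩ := hGoodi
          rw [hh] at h1 h2
          exact hcr ⟨h1, h2⟩
        exact le_trans (measure_mono hempty) (by simp)
    refine le_trans (Finset.sum_le_sum hterm) ?_
    rw [← Finset.sum_mul]
    have hsum1 : (∑ h ∈ Hs, μ {ω | A.hist ω i = h}) = 1 := by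
      have hdisj : (↑Hs : Set (List (Sym2 V × Bool))).PairwiseDisjoint
          (fun h => {ω : Sym2 V → Bool | A.hist ω i = h}) := by
        intro a _ b _ hab
        refine Set.disjoint_left.mpr ?_
        rintro ω h1 h2
        exact hab (h1.symm.trans h2)
      rw [← measure_biUnion_finset hdisj (fun h _ => measurableSet_all _)]
      have huniv : (⋃ h ∈ Hs, {ω : Sym2 V → Bool | A.hist ω i = h}) = Set.univ := by
        ext ω
        simp only [Set.mem_iUnion, Set.mem_univ, iff_true, Set.mem_setOf_eq, exists_prop]
        exact ⟨A.hist ω i, Finset.mem_image_of_mem _ (Finset.mem_univ ω), rfl⟩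
      rw [huniv]
      exact measure_univ
    rw [hsum1, one_mul]
  -- Step 3: assemble by taking the first good step.
  have hDT : {ω | ∃ s < t, A.SucceedsBy G ω u v s} ⊆
      ⋃ i ∈ Finset.range t, {ω | GoodStep A G S v ω i ∧ ∀ j < i, ¬ GoodStep A G S v ω j} := by
    intro ω hω
    obtain ⟨i, hit, hGi⟩ := hD hω
    have hex : ∃ n, GoodStep A G S v ω n := ⟨i, hGi⟩
    exact Set.mem_biUnion
      (Finset.mem_range.mpr (lt_of_le_of_lt (Nat.find_min' hex hGi) hit))
      ⟨Nat.find_spec hex, fun j hj => Nat.find_min hex hj⟩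
  refine le_trans (measure_mono hDT) (le_trans (measure_biUnion_finset_le _ _) ?_)
  refine le_trans (Finset.sum_le_sum fun i _ => hT i) ?_
  rw [Finset.sum_const, Finset.card_range, nsmul_eq_mul]

/-- **Lower bound lemma (case `u ∈ S̄`).** If every edge `e` crossing the cut
`(S, S̄)` satisfies `Pr[(v ∼ e) ∈ S] ≤ η`, and `u ∉ S`, then any local routing
algorithm from `u` to `v` succeeds within fewer than `t` probes with
conditional probability (given `u ∼ v`) at most `t·η / Pr[u ∼ v]`. -/
theorem lower_bound_lemma_crossing {V : Type*} [Fintype V] [DecidableEq V]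
    (G : SimpleGraph V) (p : ℝ) (hp0 : 0 ≤ p) (hp1 : p ≤ 1)
    (S : Set V) (u v : V) (hv : v ∈ S) (hu : u ∉ S) (η : ℝ≥0∞)
    (hη : ∀ e ∈ G.edgeSet, (∃ x y : V, e = s(x, y) ∧ x ∈ S ∧ y ∉ S) →
      perc (Sym2 V) p {ω | ∃ x, x ∈ e ∧ OpenConnOn G ω S v x} ≤ η)
    (A : Alg V) (hA : A.IsLocal G u) (t : ℕ) :
    (perc (Sym2 V) p)[|{ω | OpenConn G ω u v}]
        {ω | ∃ s < t, A.SucceedsBy G ω u v s}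
      ≤ (t : ℝ≥0∞) * η / perc (Sym2 V) p {ω | OpenConn G ω u v} := by
  have hkey := key_bound G p S u v hv hu η hη A hA t
  rw [ProbabilityTheory.cond_apply (measurableSet_all _)]
  calc (perc (Sym2 V) p {ω | OpenConn G ω u v})⁻¹ *
        perc (Sym2 V) p ({ω | OpenConn G ω u v} ∩ {ω | ∃ s < t, A.SucceedsBy G ω u v s})
      ≤ (perc (Sym2 V) p {ω | OpenConn G ω u v})⁻¹ * ((t : ℝ≥0∞) * η) :=
        mul_le_mul_right (le_trans (measure_mono Set.inter_subset_right) hkey) _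
    _ = (t : ℝ≥0∞) * η / perc (Sym2 V) p {ω | OpenConn G ω u v} := by
        rw [div_eq_mul_inv, mul_comm]
end

section
/- Let G be a graph with vertex partition V = S ∪ S̄ and v ∈ S, under independent bond percolation. Suppose for every edge e crossing the cut (S, S̄), Pr[(v ∼ e) ∈ S] ≤ η. Then for any vertex u (possibly in S) and any local routing algorithm from u to v, Pr[algorithm succeeds within t probes | u ∼ v] ≤ (tη + Pr[(u ∼ v) ∈ S]) / Pr[u ∼ v]. -/
open MeasureTheory ProbabilityTheory
open scoped ENNReal

variable {V : Type*}

/-! ### Auxiliary lemmas -/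

lemma hist_snd (A : Alg V) (ω : Sym2 V → Bool) (n : ℕ) {e : Sym2 V} {b : Bool}
    (h : (e, b) ∈ A.hist ω n) : ω e = b := by
  induction n with
  | zero => simp [Alg.hist] at h
  | succ n ih =>
    rcases List.mem_cons.mp h with h | h
    · obtain ⟨he, hb⟩ := Prod.mk.injEq .. ▸ h; simp_all
    · exact ih h

lemma mem_hist (A : Alg V) (ω : Sym2 V → Bool) (n : ℕ) {e : Sym2 V} {b : Bool}
    (h : (e, b) ∈ A.hist ω n) : ∃ j < n, e = A.next (A.hist ω j) := by
  induction n with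
  | zero => simp [Alg.hist] at h
  | succ n ih =>
    rcases List.mem_cons.mp h with h | h
    · exact ⟨n, n.lt_succ_self, congrArg Prod.fst h⟩
    · obtain ⟨j, hj, he⟩ := ih h; exact ⟨j, hj.trans n.lt_succ_self, he⟩

/-- Determinism: if `ω'` agrees with `ω` on probed edges, histories agree. -/
lemma hist_det (A : Alg V) (ω ω' : Sym2 V → Bool) (n : ℕ)
    (h : ∀ e b, (e, b) ∈ A.hist ω n → ω' e = ω e) : A.hist ω' n = A.hist ω n := by
  induction n with
  | zero => rfl
  | succ n ih =>
    have hn : A.hist ω' n = A.hist ω n := ih fun e b he => h e b (List.mem_cons_of_mem _ he)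
    show (A.next (A.hist ω' n), ω' (A.next (A.hist ω' n))) :: A.hist ω' n
        = (A.next (A.hist ω n), ω (A.next (A.hist ω n))) :: A.hist ω n
    rw [hn]
    rw [h (A.next (A.hist ω n)) (ω (A.next (A.hist ω n))) List.mem_cons_self]

/-- The history fiber is exactly a cylinder. -/
lemma hist_eq_iff (A : Alg V) (ω ω' : Sym2 V → Bool) (n : ℕ) :
    A.hist ω' n = A.hist ω n ↔ ∀ e b, (e, b) ∈ A.hist ω n → ω' e = b := by
  constructor
  · intro h e b he
    exact hist_snd A ω' n (h ▸ he)
  · intro h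
    exact hist_det A ω ω' n fun e b he => (h e b he).trans (hist_snd A ω n he).symm

lemma OpenConnOn.symm {G : SimpleGraph V} {ω S} {x y : V} (h : OpenConnOn G ω S x y) :
    OpenConnOn G ω S y x := by
  obtain ⟨w, ho, hs⟩ := h
  exact ⟨w.reverse, fun e he => ho e (by simpa using he),
    fun z hz => hs z (by simpa using hz)⟩

lemma OpenConnOn.trans {G : SimpleGraph V} {ω S} {x y z : V}
    (h1 : OpenConnOn G ω S x y) (h2 : OpenConnOn G ω S y z) : OpenConnOn G ω S x z := by
  obtain ⟨w1, ho1, hs1⟩ := h1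
  obtain ⟨w2, ho2, hs2⟩ := h2
  refine ⟨w1.append w2, fun e he => ?_, fun a ha => ?_⟩
  · rcases List.mem_append.mp (by simpa [SimpleGraph.Walk.edges_append] using he) with h | h
    exacts [ho1 e h, ho2 e h]
  · rcases (SimpleGraph.Walk.mem_support_append_iff _ _).mp ha with h | h
    exacts [hs1 a h, hs2 a h]

/-- Last-exit decomposition of a walk ending in `S` but not contained in `S`. -/
lemma lastExit {G : SimpleGraph V} {S : Set V} {a b : V} (w : G.Walk a b) (hb : b ∈ S)
    (hns : ¬ ∀ z ∈ w.support, z ∈ S) :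
    ∃ (c d : V) (w' : G.Walk d b), c ∉ S ∧ d ∈ S ∧ s(c, d) ∈ w.edges ∧
      (∀ e ∈ w'.edges, e ∈ w.edges) ∧ ∀ z ∈ w'.support, z ∈ S := by
  induction w with
  | nil => simp_all
  | @cons x y b hadj q ih =>
    by_cases hq : ∀ z ∈ q.support, z ∈ S
    · have hx : x ∉ S := by
        by_contra hx
        exact hns (by
          intro z hz
          rcases List.mem_cons.mp (by simpa [SimpleGraph.Walk.support_cons] using hz) with h | h
          · exact h ▸ hx
          · exact hq z h)
      exact ⟨x, y, q, hx, hq y q.start_mem_support, by simp [SimpleGraph.Walk.edges_cons],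
        fun e he => by simp [SimpleGraph.Walk.edges_cons, he], hq⟩
    · obtain ⟨c, d, w', hc, hd, hcd, hsub, hss⟩ := ih hb hq
      exact ⟨c, d, w', hc, hd, by simp [SimpleGraph.Walk.edges_cons, hcd],
        fun e he => by simp [SimpleGraph.Walk.edges_cons, hsub e he], hss⟩

instance inst_s1 (E : Type*) [Fintype E] (p : ℝ) : IsProbabilityMeasure (perc E p) := by
  unfold perc; infer_instance

open Classical in
/-- The configuration `ω` with all edges probed in the first `i` probes forced closed. -/
noncomputable def Pmask (A : Alg V) (ω : Sym2 V → Bool) (i : ℕ) : Sym2 V → Bool :=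
  fun e => if ∃ b, (e, b) ∈ A.hist ω i then false else ω e

/-- Probe `j` is a cut edge witnessing `v`'s in-`S` connection to the cut. -/
def Wit (G : SimpleGraph V) (S : Set V) (v : V) (A : Alg V) (ω : Sym2 V → Bool) (j : ℕ) : Prop :=
  A.next (A.hist ω j) ∈ G.edgeSet ∧
    (∃ x y : V, A.next (A.hist ω j) = s(x, y) ∧ x ∈ S ∧ y ∉ S) ∧
    ∃ x, x ∈ A.next (A.hist ω j) ∧ OpenConnOn G ω S v x

/-- **Combinatorial core.**  If a local algorithm succeeds but `u` and `v` are not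
connected within `S`, then some probe `i < t` is a crossing edge to which `v` is
connected within `S` avoiding all probed edges. -/
lemma key_combinatorial {G : SimpleGraph V} [DecidableEq V] {S : Set V} {u v : V} (hv : v ∈ S)
    {A : Alg V} (hA : A.IsLocal G u) {ω : Sym2 V → Bool} {t s : ℕ} (hs : s < t)
    (hsucc : A.SucceedsBy G ω u v s) (hns : ¬ OpenConnOn G ω S u v) :
    ∃ i < t, A.next (A.hist ω i) ∈ G.edgeSet ∧
      (∃ x y : V, A.next (A.hist ω i) = s(x, y) ∧ x ∈ S ∧ y ∉ S) ∧
      ∃ x, x ∈ A.next (A.hist ω i) ∧ OpenConnOn G (Pmask A ω i) S v x := by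
  classical
  obtain ⟨w, hw⟩ := hsucc
  have hwopen : ∀ e ∈ w.edges, ω e = true := fun e he => hist_snd A ω s (hw e he)
  -- Step A: some witness exists
  have hexW : ∃ j, j < t ∧ Wit G S v A ω j := by
    have hnsupp : ¬ ∀ z ∈ w.support, z ∈ S := fun h => hns ⟨w, hwopen, h⟩
    obtain ⟨c, d, w', hc, hd, hcd, hsub, hss⟩ := lastExit w hv hnsupp
    obtain ⟨j, hj, hje⟩ := mem_hist A ω s (hw _ hcd)
    refine ⟨j, hj.trans hs, hje ▸ w.edges_subset_edgeSet hcd,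
      ⟨d, c, by rw [← hje, Sym2.eq_swap], hd, hc⟩, d, by rw [← hje]; simp, ?_⟩
    exact OpenConnOn.symm ⟨w', fun e he => hwopen e (hsub e he), hss⟩
  -- Step B: minimal witness
  obtain ⟨j₀, hj₀t, hWj₀⟩ := hexW
  have hWex : ∃ j, Wit G S v A ω j := ⟨j₀, hWj₀⟩
  set i := Nat.find hWex with hi
  have hWi : Wit G S v A ω i := Nat.find_spec hWex
  have hmin : ∀ k < i, ¬ Wit G S v A ω k := fun k hk => Nat.find_min hWex hk
  have hit : i < t := lt_of_le_of_lt (Nat.find_le hWj₀) hj₀t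
  obtain ⟨hedge, hcut, x, hx, q0, hq0open, hq0S⟩ := hWi
  -- Step C: the witnessing path avoids all probed edges
  have hclean : ∀ e ∈ q0.edges, ¬ ∃ b, (e, b) ∈ A.hist ω i := by
    intro f hfq hfh
    obtain ⟨b, hfh⟩ := hfh
    obtain ⟨j, hji, hfe⟩ := mem_hist A ω i hfh
    induction f using Sym2.ind with
    | _ c1 c2 =>
    have hc1 : c1 ∈ q0.support := q0.fst_mem_support_of_mem_edges hfq
    have hc2 : c2 ∈ q0.support := q0.snd_mem_support_of_mem_edges hfq
    obtain ⟨a, ⟨Q, hQ⟩, haf⟩ := hA ω j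
    have haS : a ∈ S := by
      rw [← hfe] at haf
      rcases Sym2.mem_iff.mp haf with rfl | rfl
      exacts [hq0S _ hc1, hq0S _ hc2]
    have haq : a ∈ q0.support := by
      rw [← hfe] at haf
      rcases Sym2.mem_iff.mp haf with rfl | rfl
      exacts [hc1, hc2]
    have hQopen : ∀ e ∈ Q.edges, ω e = true := fun e he => hist_snd A ω j (hQ e he)
    have hva : OpenConnOn G ω S v a :=
      ⟨q0.takeUntil a haq, fun e he => hq0open e (q0.edges_takeUntil_subset haq he),
        fun z hz => hq0S z (q0.support_takeUntil_subset haq hz)⟩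
    by_cases hQS : ∀ z ∈ Q.support, z ∈ S
    · exact hns (OpenConnOn.trans ⟨Q, hQopen, hQS⟩ hva.symm)
    · obtain ⟨c', d', Q', hc', hd', hcd', hsub', hss'⟩ := lastExit Q haS hQS
      obtain ⟨k, hkj, hke⟩ := mem_hist A ω j (hQ _ hcd')
      refine hmin k (hkj.trans hji) ⟨hke ▸ Q.edges_subset_edgeSet hcd',
        ⟨d', c', by rw [← hke, Sym2.eq_swap], hd', hc'⟩, d', by rw [← hke]; simp, ?_⟩
      exact hva.trans (OpenConnOn.symm ⟨Q', fun e he => hQopen e (hsub' e he), hss'⟩)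
  refine ⟨i, hit, hedge, hcut, x, hx, q0, fun e he => ?_, hq0S⟩
  rw [Pmask, if_neg (hclean e he)]
  exact hq0open e he

/-- Independence of a cylinder event and an event depending on the other coordinates. -/
lemma cyl_indep {E : Type*} [Fintype E] [DecidableEq E]
    (μi : E → Measure Bool) [∀ e, IsProbabilityMeasure (μi e)]
    (P : Set E) (Cy B : Set (E → Bool))
    (hCy : ∀ ω ω' : E → Bool, (∀ e ∈ P, ω e = ω' e) → ω ∈ Cy → ω' ∈ Cy)
    (hB : ∀ ω ω' : E → Bool, (∀ e ∉ P, ω e = ω' e) → ω ∈ B → ω' ∈ B) :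
    Measure.pi μi (Cy ∩ B) = Measure.pi μi Cy * Measure.pi μi B := by
  classical
  set φ := MeasurableEquiv.piEquivPiSubtypeProd (fun _ : E => Bool) (· ∈ P) with hφ
  have hmp := measurePreserving_piEquivPiSubtypeProd μi (· ∈ P)
  set s : Set ({ e // e ∈ P } → Bool) :=
    {f | (fun e => if h : e ∈ P then f ⟨e, h⟩ else false) ∈ Cy} with hs
  set tt : Set ({ e // ¬ e ∈ P } → Bool) :=
    {g | (fun e => if h : e ∈ P then false else g ⟨e, h⟩) ∈ B} with ht
  have hCyl : Cy = φ ⁻¹' (s ×ˢ Set.univ) := by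
    ext ω
    simp only [Set.mem_preimage, Set.mem_prod, Set.mem_univ, and_true, hs, Set.mem_setOf_eq, hφ,
      MeasurableEquiv.piEquivPiSubtypeProd, Equiv.piEquivPiSubtypeProd, MeasurableEquiv.coe_mk,
      Equiv.coe_fn_mk]
    constructor
    · intro h; exact hCy ω _ (fun e he => by simp [he]) h
    · intro h; exact hCy _ ω (fun e he => by simp [he]) h
  have hBl : B = φ ⁻¹' (Set.univ ×ˢ tt) := by
    ext ω
    simp only [Set.mem_preimage, Set.mem_prod, Set.mem_univ, true_and, ht, Set.mem_setOf_eq, hφ,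
      MeasurableEquiv.piEquivPiSubtypeProd, Equiv.piEquivPiSubtypeProd, MeasurableEquiv.coe_mk,
      Equiv.coe_fn_mk]
    constructor
    · intro h; exact hB ω _ (fun e he => by simp [he]) h
    · intro h; exact hB _ ω (fun e he => by simp [he]) h
  have hint : Cy ∩ B = φ ⁻¹' (s ×ˢ tt) := by
    rw [hCyl, hBl, ← Set.preimage_inter, Set.prod_inter_prod, Set.univ_inter, Set.inter_univ]
  have hm : ∀ X : Set (({ e // e ∈ P } → Bool) × ({ e // ¬ e ∈ P } → Bool)), MeasurableSet X :=
    fun X => .of_discrete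
  rw [hint, hCyl, hBl, hmp.measure_preimage (hm _).nullMeasurableSet,
    hmp.measure_preimage (hm _).nullMeasurableSet, hmp.measure_preimage (hm _).nullMeasurableSet,
    Measure.prod_prod, Measure.prod_prod, Measure.prod_prod]
  simp [measure_univ]

/-- **Per-probe bound.**  The probability that probe `i` is a crossing edge to
which `v` connects within `S` avoiding probed edges is at most `η`. -/
lemma probe_bound {V : Type*} [Fintype V] [DecidableEq V]
    (G : SimpleGraph V) (p : ℝ) (S : Set V) (v : V) (η : ℝ≥0∞)
    (hη : ∀ e ∈ G.edgeSet, (∃ x y : V, e = s(x, y) ∧ x ∈ S ∧ y ∉ S) →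
      perc (Sym2 V) p {ω | ∃ x, x ∈ e ∧ OpenConnOn G ω S v x} ≤ η)
    (A : Alg V) (i : ℕ) :
    perc (Sym2 V) p {ω | A.next (A.hist ω i) ∈ G.edgeSet ∧
      (∃ x y : V, A.next (A.hist ω i) = s(x, y) ∧ x ∈ S ∧ y ∉ S) ∧
      ∃ x, x ∈ A.next (A.hist ω i) ∧ OpenConnOn G (Pmask A ω i) S v x} ≤ η := by
  classical
  set μ := perc (Sym2 V) p with hμ
  set K : (Sym2 V → Bool) → List (Sym2 V × Bool) := fun ω => A.hist ω i with hK
  set F : Finset (List (Sym2 V × Bool)) := Finset.image K Finset.univ with hF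
  set M : Set (Sym2 V → Bool) := {ω | A.next (A.hist ω i) ∈ G.edgeSet ∧
      (∃ x y : V, A.next (A.hist ω i) = s(x, y) ∧ x ∈ S ∧ y ∉ S) ∧
      ∃ x, x ∈ A.next (A.hist ω i) ∧ OpenConnOn G (Pmask A ω i) S v x} with hM
  have hMsub : M ⊆ ⋃ h ∈ F, (K ⁻¹' {h} ∩ M) := by
    intro ω hω
    exact Set.mem_biUnion (Finset.mem_image_of_mem K (Finset.mem_univ ω)) ⟨rfl, hω⟩
  have hterm : ∀ h ∈ F, μ (K ⁻¹' {h} ∩ M) ≤ η * μ (K ⁻¹' {h}) := by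
    intro h hh
    rcases Set.eq_empty_or_nonempty (K ⁻¹' {h} ∩ M) with hemp | ⟨ω₁, hω₁K, hω₁M⟩
    · rw [hemp]; simp
    have hω₁h : A.hist ω₁ i = h := hω₁K
    set e₀ : Sym2 V := A.next h with he₀
    set P : Set (Sym2 V) := {e | ∃ b, (e, b) ∈ h} with hP
    set Cy : Set (Sym2 V → Bool) := {ω | ∀ e b, (e, b) ∈ h → ω e = b} with hCy
    set B : Set (Sym2 V → Bool) :=
      {ω | ∃ x, x ∈ e₀ ∧
        OpenConnOn G (fun e => if e ∈ P then false else ω e) S v x} with hB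
    -- the fiber is the cylinder
    have hfib : K ⁻¹' {h} = Cy := by
      ext ω
      show A.hist ω i = h ↔ _
      rw [← hω₁h, hist_eq_iff A ω₁ ω i, hω₁h]
      exact Iff.rfl
    -- on the fiber the mask agrees with the fixed-history mask
    have hmask : ∀ ω : Sym2 V → Bool, K ω = h →
        Pmask A ω i = fun e => if e ∈ P then false else ω e := by
      intro ω hωh
      funext e
      by_cases hc : e ∈ P
      · rw [Pmask, if_pos (by rwa [show A.hist ω i = h from hωh]), if_pos hc]
      · rw [Pmask, if_neg (by rwa [show A.hist ω i = h from hωh]), if_neg hc]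
    have hsub : K ⁻¹' {h} ∩ M ⊆ Cy ∩ B := by
      rintro ω ⟨hωK, hωM⟩
      have hωh : K ω = h := hωK
      refine ⟨hfib ▸ hωK, ?_⟩
      obtain ⟨-, -, x, hx, hconn⟩ := hωM
      have hne : A.next (A.hist ω i) = e₀ := by rw [show A.hist ω i = h from hωh]
      rw [hmask ω hωh] at hconn
      exact ⟨x, hne ▸ hx, hconn⟩
    have hindep : μ (Cy ∩ B) = μ Cy * μ B := by
      refine cyl_indep _ P Cy B ?_ ?_
      · intro ω ω' hag hω e b heb
        rw [← hag e ⟨b, heb⟩]; exact hω e b heb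
      · intro ω ω' hag hω
        obtain ⟨x, hx, hconn⟩ := hω
        refine ⟨x, hx, ?_⟩
        have : (fun e => if e ∈ P then false else ω e)
            = (fun e => if e ∈ P then false else ω' e) := by
          funext e
          by_cases hc : e ∈ P
          · rw [if_pos hc, if_pos hc]
          · rw [if_neg hc, if_neg hc, hag e hc]
        exact this ▸ hconn
    -- bound μ B by η
    have hBsub : B ⊆ {ω | ∃ x, x ∈ e₀ ∧ OpenConnOn G ω S v x} := by
      rintro ω ⟨x, hx, w, hwopen, hwS⟩
      refine ⟨x, hx, w, fun e he => ?_, hwS⟩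
      have := hwopen e he
      by_cases hc : e ∈ P
      · simp [hc] at this
      · simpa [hc] using this
    have he₀cut : e₀ ∈ G.edgeSet ∧ ∃ x y : V, e₀ = s(x, y) ∧ x ∈ S ∧ y ∉ S := by
      obtain ⟨hedge, hcut, -⟩ := hω₁M
      have : A.next (A.hist ω₁ i) = e₀ := by rw [hω₁h]
      exact ⟨this ▸ hedge, this ▸ hcut⟩
    have hBη : μ B ≤ η :=
      le_trans (measure_mono hBsub) (hη e₀ he₀cut.1 he₀cut.2)
    calc μ (K ⁻¹' {h} ∩ M) ≤ μ (Cy ∩ B) := measure_mono hsub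
      _ = μ Cy * μ B := hindep
      _ ≤ μ Cy * η := mul_le_mul_right hBη _
      _ = η * μ (K ⁻¹' {h}) := by rw [hfib, mul_comm]
  have hfibs : ∑ h ∈ F, μ (K ⁻¹' {h}) = 1 := by
    have hdisj : (F : Set (List (Sym2 V × Bool))).PairwiseDisjoint
        (fun h => K ⁻¹' {h}) := by
      intro a _ b _ hab
      exact Set.disjoint_left.mpr fun ω ha hb => hab ((ha : K ω = a).symm.trans hb)
    have hcover : (⋃ h ∈ F, K ⁻¹' {h}) = Set.univ := by
      ext ω
      simp only [Set.mem_iUnion, Set.mem_univ, iff_true]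
      exact ⟨K ω, Finset.mem_image_of_mem K (Finset.mem_univ ω), rfl⟩
    rw [← measure_biUnion_finset hdisj (fun _ _ => .of_discrete), hcover, measure_univ]
  calc μ M ≤ μ (⋃ h ∈ F, (K ⁻¹' {h} ∩ M)) := measure_mono hMsub
    _ ≤ ∑ h ∈ F, μ (K ⁻¹' {h} ∩ M) := measure_biUnion_finset_le F _
    _ ≤ ∑ h ∈ F, η * μ (K ⁻¹' {h}) := Finset.sum_le_sum hterm
    _ = η * ∑ h ∈ F, μ (K ⁻¹' {h}) := (Finset.mul_sum _ _ _).symm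
    _ = η := by rw [hfibs, mul_one]

/-- **Lower bound lemma (general `u`).** If every edge `e` crossing the cut
`(S, S̄)` satisfies `Pr[(v ∼ e) ∈ S] ≤ η`, then any local routing algorithm
from `u` to `v` succeeds within fewer than `t` probes with conditional
probability (given `u ∼ v`) at most `(t·η + Pr[(u ∼ v) ∈ S]) / Pr[u ∼ v]`. -/
theorem lower_bound_lemma {V : Type*} [Fintype V] [DecidableEq V]
    (G : SimpleGraph V) (p : ℝ) (hp0 : 0 ≤ p) (hp1 : p ≤ 1)
    (S : Set V) (u v : V) (hv : v ∈ S) (η : ℝ≥0∞)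
    (hη : ∀ e ∈ G.edgeSet, (∃ x y : V, e = s(x, y) ∧ x ∈ S ∧ y ∉ S) →
      perc (Sym2 V) p {ω | ∃ x, x ∈ e ∧ OpenConnOn G ω S v x} ≤ η)
    (A : Alg V) (hA : A.IsLocal G u) (t : ℕ) :
    (perc (Sym2 V) p)[|{ω | OpenConn G ω u v}]
        {ω | ∃ s < t, A.SucceedsBy G ω u v s}
      ≤ ((t : ℝ≥0∞) * η + perc (Sym2 V) p {ω | OpenConnOn G ω S u v})
          / perc (Sym2 V) p {ω | OpenConn G ω u v} := by
  classical
  set μ := perc (Sym2 V) p with hμ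
  set M : ℕ → Set (Sym2 V → Bool) := fun i => {ω | A.next (A.hist ω i) ∈ G.edgeSet ∧
      (∃ x y : V, A.next (A.hist ω i) = s(x, y) ∧ x ∈ S ∧ y ∉ S) ∧
      ∃ x, x ∈ A.next (A.hist ω i) ∧ OpenConnOn G (Pmask A ω i) S v x} with hM
  have hkey : μ ({ω | OpenConn G ω u v} ∩ {ω | ∃ s < t, A.SucceedsBy G ω u v s})
      ≤ (t : ℝ≥0∞) * η + μ {ω | OpenConnOn G ω S u v} := by
    have hsub : {ω | OpenConn G ω u v} ∩ {ω | ∃ s < t, A.SucceedsBy G ω u v s}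
        ⊆ {ω | OpenConnOn G ω S u v} ∪ ⋃ i ∈ Finset.range t, M i := by
      rintro ω ⟨-, s, hst, hsucc⟩
      by_cases hin : OpenConnOn G ω S u v
      · exact Or.inl hin
      · obtain ⟨i, hit, h1, h2, h3⟩ := key_combinatorial hv hA hst hsucc hin
        exact Or.inr (Set.mem_biUnion (Finset.mem_range.mpr hit) ⟨h1, h2, h3⟩)
    calc μ _ ≤ μ ({ω | OpenConnOn G ω S u v} ∪ ⋃ i ∈ Finset.range t, M i) :=
          measure_mono hsub
      _ ≤ μ {ω | OpenConnOn G ω S u v} + μ (⋃ i ∈ Finset.range t, M i) := measure_union_le _ _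
      _ ≤ μ {ω | OpenConnOn G ω S u v} + ∑ i ∈ Finset.range t, μ (M i) :=
          add_le_add_right (measure_biUnion_finset_le _ _) _
      _ ≤ μ {ω | OpenConnOn G ω S u v} + ∑ _i ∈ Finset.range t, η :=
          add_le_add_right (Finset.sum_le_sum fun i _ => probe_bound G p S v η hη A i) _
      _ = (t : ℝ≥0∞) * η + μ {ω | OpenConnOn G ω S u v} := by
          rw [Finset.sum_const, Finset.card_range, nsmul_eq_mul, add_comm]
  rw [ProbabilityTheory.cond_apply (MeasurableSet.of_discrete),
    ENNReal.div_eq_inv_mul]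
  exact mul_le_mul_right hkey _
end

section
/- In the n-dimensional hypercube, let v be a vertex and l ≥ 1. For k ≥ 0, let A_k be the set of walks of length l + 2k from v to a fixed vertex x at Hamming distance l from v, such that the walk stays within the ball of radius l around v. Then |A_k| ≤ n^k · l^{2k} · l!. -/
open MeasureTheory ProbabilityTheory
open scoped ENNReal

variable {V : Type*}

/-- The `n`-dimensional hypercube graph on `Fin n → Bool`: two vertices are
adjacent iff they differ in exactly one coordinate. -/
def cube (n : ℕ) : SimpleGraph (Fin n → Bool) where
  Adj x y := hammingDist x y = 1
  symm := ⟨fun x y (h : hammingDist x y = 1) => show hammingDist y x = 1 by rwa [hammingDist_comm]⟩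
  loopless := ⟨fun x (h : hammingDist x x = 1) => by simp only [hammingDist_self] at h; exact Nat.zero_ne_one h⟩

instance (n : ℕ) : DecidableRel (cube n).Adj := fun x y => show Decidable (hammingDist x y = 1) from Nat.decEq _ _

/-- `Ak n l k v x`: walks of length `l + 2k` from `v` to `x` in the hypercube
that stay within the ball of radius `l` around `v`. -/
def Ak (n l k : ℕ) (v x : Fin n → Bool) : Finset ((cube n).Walk v x) :=
  ((cube n).finsetWalkLength (l + 2 * k) v x).filter
    (fun w => ∀ z ∈ w.support, hammingDist v z ≤ l)

namespace CW
variable {n : ℕ}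

def flip (c : Fin n) (u : Fin n → Bool) : Fin n → Bool := Function.update u c (!u c)

@[simp] lemma flip_self (c : Fin n) (u : Fin n → Bool) : flip c u c = !u c :=
  Function.update_self _ _ _

lemma flip_ne {c j : Fin n} (u : Fin n → Bool) (h : j ≠ c) : flip c u j = u j :=
  Function.update_of_ne h _ _

lemma flip_ne' {c j : Fin n} (u : Fin n → Bool) (h : j ≠ c) : flip c u j = u j :=
  Function.update_of_ne h _ _

@[simp] lemma flip_flip (c : Fin n) (u : Fin n → Bool) : flip c (flip c u) = u := by
  funext j
  by_cases h : j = c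
  · subst h; simp [flip_ne, flip_self]
  · rw [flip_ne _ h, flip_ne _ h]

lemma flip_comm (c c' : Fin n) (u : Fin n → Bool) : flip c (flip c' u) = flip c' (flip c u) := by
  by_cases h : c = c'
  · subst h; rfl
  · funext j
    by_cases h1 : j = c
    · subst h1; simp [flip_self, flip_ne _ h]
    · by_cases h2 : j = c'
      · subst h2; simp [flip_self, flip_ne _ h1]
      · rw [flip_ne _ h1, flip_ne _ h2, flip_ne _ h2, flip_ne _ h1]

lemma hammingDist_flip_left {c : Fin n} {u y : Fin n → Bool} (h : u c = y c) :
    hammingDist (flip c u) y = hammingDist u y + 1 := by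
  classical
  have hs : (Finset.univ.filter fun i => flip c u i ≠ y i) =
      insert c (Finset.univ.filter fun i => u i ≠ y i) := by
    ext j
    by_cases hj : j = c
    · subst hj
      simp [flip_self, h]
    · simp [flip_ne _ hj, hj]
  show (Finset.univ.filter fun i => flip c u i ≠ y i).card = _
  rw [hs, Finset.card_insert_of_notMem (by simp [h])]
  rfl

lemma hammingDist_flip_right {c : Fin n} {u y : Fin n → Bool} (h : u c ≠ y c) :
    hammingDist u y = hammingDist (flip c u) y + 1 := by
  have h2 : flip c u c = y c := by
    rw [flip_self]
    revert h; cases u c <;> cases y c <;> simp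
  have := hammingDist_flip_left (u := flip c u) (y := y) (c := c) h2
  rwa [flip_flip] at this

lemma hammingDist_flip (c : Fin n) (u : Fin n → Bool) : hammingDist u (flip c u) = 1 := by
  have : hammingDist (flip c u) u = hammingDist u u + 1 := hammingDist_flip_left rfl
  rw [hammingDist_self] at this
  rw [hammingDist_comm]; exact this


def applyFlips (u : Fin n → Bool) (s : List (Fin n)) : Fin n → Bool :=
  s.foldl (fun w c => flip c w) u

@[simp] lemma applyFlips_nil (u : Fin n → Bool) : applyFlips u ([]) = u := rfl

@[simp] lemma applyFlips_cons (u : Fin n → Bool) (c : Fin n) (t : List (Fin n)) :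
    applyFlips u (c :: t) = applyFlips (flip c u) t := rfl

lemma applyFlips_append (u : Fin n → Bool) (s t : List (Fin n)) :
    applyFlips u (s ++ t) = applyFlips (applyFlips u s) t :=
  List.foldl_append ..


lemma applyFlips_flip (c : Fin n) : ∀ (s : List (Fin n)) (u : Fin n → Bool),
    applyFlips (flip c u) s = flip c (applyFlips u s)
  | [], u => rfl
  | c' :: t, u => by
    rw [applyFlips_cons, applyFlips_cons, flip_comm, applyFlips_flip c t]

/-- middle cancellation -/
lemma applyFlips_cancel (u : Fin n → Bool) (c : Fin n) (b d : List (Fin n)) :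
    applyFlips u (c :: (b ++ c :: d)) = applyFlips u (b ++ d) := by
  rw [applyFlips_cons, applyFlips_append, applyFlips_cons]
  simp only [applyFlips_flip]
  rw [flip_flip, ← applyFlips_append]

lemma applyFlips_notMem (c : Fin n) : ∀ (s : List (Fin n)) (u : Fin n → Bool), c ∉ s →
    applyFlips u s c = u c
  | [], u, _ => rfl
  | c' :: t, u, h => by
    have h1 : c ∉ t := fun hm => h (List.mem_cons_of_mem _ hm)
    have h2 : c ≠ c' := fun hc => h (by simp [hc])
    rw [applyFlips_cons, applyFlips_notMem c t _ h1, flip_ne' u h2]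

def trace (u : Fin n → Bool) : List (Fin n) → List (Fin n → Bool)
  | [] => [u]
  | c :: t => u :: trace (flip c u) t

lemma applyFlips_take_mem_trace : ∀ (s : List (Fin n)) (u : Fin n → Bool) (m : ℕ),
    applyFlips u (s.take m) ∈ trace u s
  | [], u, m => by simp [trace]
  | c :: t, u, 0 => by simp [trace]
  | c :: t, u, m + 1 => by
    rw [List.take_succ_cons, applyFlips_cons]
    exact List.mem_cons_of_mem _ (applyFlips_take_mem_trace t (flip c u) m)

lemma mem_trace : ∀ (s : List (Fin n)) (u : Fin n → Bool) (z : Fin n → Bool), z ∈ trace u s →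
    ∃ m, m ≤ s.length ∧ z = applyFlips u (s.take m)
  | [], u, z, h => by
    simp [trace] at h
    exact ⟨0, by simp [h]⟩
  | c :: t, u, z, h => by
    rw [trace, List.mem_cons] at h
    rcases h with h | h
    · exact ⟨0, by simp [h]⟩
    · obtain ⟨m, hm, hz⟩ := mem_trace t (flip c u) z h
      exact ⟨m + 1, by simpa using hm, by simpa using hz⟩

lemma hammingDist_applyFlips_le : ∀ (s : List (Fin n)) (u : Fin n → Bool),
    hammingDist u (applyFlips u s) ≤ s.length
  | [], u => by simp
  | c :: t, u => by
    rw [applyFlips_cons]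
    calc hammingDist u (applyFlips (flip c u) t)
        ≤ hammingDist u (flip c u) + hammingDist (flip c u) (applyFlips (flip c u) t) :=
          hammingDist_triangle ..
      _ ≤ 1 + t.length := by
          rw [hammingDist_flip]
          exact Nat.add_le_add_left (hammingDist_applyFlips_le t _) 1
      _ = (c :: t).length := by simp [Nat.add_comm]

lemma hammingDist_applyFlips_nodup : ∀ (s : List (Fin n)), s.Nodup → ∀ (u : Fin n → Bool),
    hammingDist u (applyFlips u s) = s.length
  | [], _, u => by simp
  | c :: t, h, u => by
    rw [List.nodup_cons] at h
    rw [applyFlips_cons]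
    have hc : applyFlips (flip c u) t c = flip c u c := applyFlips_notMem c t _ h.1
    have hne : u c ≠ applyFlips (flip c u) t c := by
      rw [hc, flip_self]; cases u c <;> simp
    have h2 := hammingDist_flip_right hne
    rw [h2, hammingDist_applyFlips_nodup t h.2 (flip c u)]
    simp

lemma dist_eq_length_nodup : ∀ (s : List (Fin n)) (u : Fin n → Bool),
    hammingDist u (applyFlips u s) = s.length →
    s.Nodup ∧ ∀ c ∈ s, u c ≠ applyFlips u s c
  | [], u, _ => ⟨List.nodup_nil, by simp⟩
  | c :: t, u, h => by
    rw [applyFlips_cons] at h ⊢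
    simp only [List.length_cons] at h
    set d := flip c u with hd
    set y := applyFlips d t with hy
    have hub : hammingDist d y ≤ t.length := hammingDist_applyFlips_le t d
    have hlb : t.length ≤ hammingDist d y := by
      have htri : hammingDist u y ≤ hammingDist u d + hammingDist d y := hammingDist_triangle ..
      rw [hammingDist_flip] at htri
      omega
    have heq : hammingDist d y = t.length := le_antisymm hub hlb
    obtain ⟨hnd, hmem⟩ := dist_eq_length_nodup t d heq
    have hyc : u c ≠ y c := by
      intro hcc
      have h2 : hammingDist d y = hammingDist u y + 1 := hammingDist_flip_left hcc
      rw [h, heq] at h2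
      omega
    have hcnot : c ∉ t := by
      intro hct
      have h3 := hmem c hct
      rw [← hy] at h3
      have h4 : d c = !u c := flip_self c u
      have h5 : y c = !u c := by
        cases h6 : u c <;> cases h7 : y c <;> simp_all
      exact h3 (by rw [h4, h5])
    refine ⟨List.nodup_cons.2 ⟨hcnot, hnd⟩, ?_⟩
    intro c' hc'
    rcases List.mem_cons.1 hc' with rfl | hc't
    · exact hyc
    · by_cases hcc' : c' = c
      · subst hcc'; exact hyc
      · have := hmem c' hc't
        rwa [hd, flip_ne' u hcc'] at this


lemma adj_flip (c : Fin n) (u : Fin n → Bool) : (cube n).Adj u (flip c u) :=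
  hammingDist_flip c u

lemma adj_exists {u b : Fin n → Bool} (h : (cube n).Adj u b) : ∃ c, b = flip c u := by
  have h1 : (Finset.univ.filter fun i => u i ≠ b i).card = 1 := h
  obtain ⟨c, hc⟩ := Finset.card_eq_one.1 h1
  refine ⟨c, funext fun j => ?_⟩
  by_cases hj : j = c
  · subst hj
    have : j ∈ Finset.univ.filter fun i => u i ≠ b i := by rw [hc]; exact Finset.mem_singleton_self _
    rw [Finset.mem_filter] at this
    rw [flip_self]
    revert this
    cases u j <;> cases b j <;> simp
  · have : j ∉ Finset.univ.filter fun i => u i ≠ b i := by rw [hc]; simpa using hj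
    rw [Finset.mem_filter] at this
    rw [flip_ne' u hj]
    exact (by simpa using this : u j = b j).symm

def fromCoords (u : Fin n → Bool) : (s : List (Fin n)) → (cube n).Walk u (applyFlips u s)
  | [] => SimpleGraph.Walk.nil
  | c :: t => SimpleGraph.Walk.cons (adj_flip c u) (fromCoords (flip c u) t)

@[simp] lemma length_fromCoords : ∀ (s : List (Fin n)) (u : Fin n → Bool),
    (fromCoords u s).length = s.length
  | [], u => rfl
  | c :: t, u => by
    change (fromCoords (flip c u) t).length + 1 = _
    rw [length_fromCoords t]
    rfl

@[simp] lemma support_fromCoords : ∀ (s : List (Fin n)) (u : Fin n → Bool),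
    (fromCoords u s).support = trace u s
  | [], u => rfl
  | c :: t, u => by
    change u :: (fromCoords (flip c u) t).support = _
    rw [support_fromCoords t, trace]

lemma exists_fromCoords {u y : Fin n → Bool} (w : (cube n).Walk u y) :
    ∃ s, ∃ h : applyFlips u s = y, w = (fromCoords u s).copy rfl h := by
  induction w with
  | nil => exact ⟨[], rfl, (SimpleGraph.Walk.copy_rfl_rfl _).symm⟩
  | @cons a b y h p ih =>
    obtain ⟨c, hc⟩ := adj_exists h
    subst hc
    obtain ⟨s, hs, hp⟩ := ih
    subst hs
    refine ⟨c :: s, rfl, ?_⟩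
    subst hp
    rfl


lemma surgery {α : Type*} (s : List α) (i j : ℕ) (hij : i < j) (hj : j < s.length)
    (he : s[i]? = s[j]?) :
    ∃ (a b d : List α) (c : α),
      s = a ++ c :: (b ++ c :: d) ∧ a.length = i ∧ b.length = j - i - 1 ∧
      (s.eraseIdx j).eraseIdx i = a ++ (b ++ d) := by
  have hi : i < s.length := lt_trans hij hj
  set a := s.take i with ha
  set e := s.drop (i + 1) with hedef
  set m := j - i - 1 with hm
  have hme : m < e.length := by
    rw [hedef, List.length_drop]
    omega
  set b := e.take m with hb
  set d := e.drop (m + 1) with hd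
  set c := s[i] with hc
  have hia : a.length = i := by rw [ha, List.length_take]; omega
  have hmb : b.length = m := by rw [hb, List.length_take]; omega
  have hsj : s[j] = c := by
    have h1 : s[i]? = some c := by rw [List.getElem?_eq_getElem hi]
    have h2 : s[j]? = some s[j] := by rw [List.getElem?_eq_getElem hj]
    rw [h1, h2] at he
    exact (Option.some_inj.1 he).symm
  have hem : e[m]'hme = c := by
    have h3 : e[m]? = s[i + 1 + m]? := by rw [hedef]; exact List.getElem?_drop
    have h4 : i + 1 + m = j := by omega
    rw [h4] at h3
    rw [List.getElem?_eq_getElem hme, List.getElem?_eq_getElem hj] at h3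
    rw [Option.some_inj.1 h3, hsj]
  have hse : s = a ++ c :: e := by
    rw [ha, hc, hedef, ← List.drop_eq_getElem_cons hi]
    exact (List.take_append_drop i s).symm
  have hebd : e = b ++ c :: d := by
    rw [hb, hd, ← hem, ← List.drop_eq_getElem_cons hme]
    exact (List.take_append_drop m e).symm
  refine ⟨a, b, d, c, by rw [hse, hebd], hia, hmb.trans hm, ?_⟩
  rw [List.eraseIdx_eq_take_drop_succ, List.eraseIdx_eq_take_drop_succ]
  have h1 : (s.take j ++ s.drop (j+1)).take i = s.take i := by
    rw [List.take_append, List.take_take, min_eq_left (le_of_lt hij),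
      List.length_take, show i - min j s.length = 0 by omega, List.take_zero, List.append_nil]
  have h2 : (s.take j ++ s.drop (j+1)).drop (i+1) = (s.take j).drop (i+1) ++ s.drop (j+1) := by
    rw [List.drop_append, List.length_take,
      show i + 1 - min j s.length = 0 by omega, List.drop_zero]
  rw [h1, h2, List.drop_take]
  have e1 : j - (i+1) = m := by omega
  have e2 : j + 1 = i + 1 + (m + 1) := by omega
  rw [ha, hb, hd, hedef, List.drop_drop, e1, e2]

noncomputable def Lset (n l len : ℕ) (v x : Fin n → Bool) : Finset (List (Fin n)) :=
  ((Finset.univ : Finset (List.Vector (Fin n) len)).image List.Vector.toList).filter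
    (fun s => applyFlips v s = x ∧ ∀ z ∈ trace v s, hammingDist v z ≤ l)

lemma mem_Lset {l len : ℕ} {v x : Fin n → Bool} {s : List (Fin n)} :
    s ∈ Lset n l len v x ↔
      s.length = len ∧ applyFlips v s = x ∧ ∀ z ∈ trace v s, hammingDist v z ≤ l := by
  rw [Lset, Finset.mem_filter, Finset.mem_image]
  constructor
  · rintro ⟨⟨a, -, rfl⟩, h2⟩
    exact ⟨a.toList_length, h2⟩
  · rintro ⟨h1, h2⟩
    exact ⟨⟨(⟨s, h1⟩ : List.Vector (Fin n) len), Finset.mem_univ _, rfl⟩, h2⟩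

lemma card_Ak_le_Lset (n l k : ℕ) (v x : Fin n → Bool) :
    (Ak n l k v x).card ≤ (Lset n l (l + 2 * k) v x).card := by
  rcases Finset.eq_empty_or_nonempty (Ak n l k v x) with h | ⟨w₀, hw₀⟩
  · simp [h]
  · classical
    apply Finset.card_le_card_of_surjOn
      (fun s => if h : applyFlips v s = x then (fromCoords v s).copy rfl h else w₀)
    intro w hw
    rw [Finset.mem_coe, Ak, Finset.mem_filter,
      SimpleGraph.mem_finsetWalkLength_iff] at hw
    obtain ⟨hlen, hball⟩ := hw
    obtain ⟨s, hxs, hws⟩ := exists_fromCoords w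
    have hsupp : w.support = trace v s := by
      rw [hws, SimpleGraph.Walk.support_copy, support_fromCoords]
    refine ⟨s, ?_, ?_⟩
    · rw [Finset.mem_coe, mem_Lset]
      refine ⟨?_, hxs, ?_⟩
      · rw [← hlen, hws, SimpleGraph.Walk.length_copy, length_fromCoords]
      · intro z hz
        exact hball z (hsupp ▸ hz)
    · simp only [dif_pos hxs]
      exact hws.symm

def DupAt (l : ℕ) (s : List (Fin n)) (p : ℕ × ℕ) : Prop :=
  p.1 < p.2 ∧ p.2 ≤ l ∧ p.2 < s.length ∧ s[p.1]? = s[p.2]?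

lemma exists_dupAt {l : ℕ} {s : List (Fin n)} {v : Fin n → Bool}
    (hlen : l + 1 ≤ s.length) (hball : ∀ z ∈ trace v s, hammingDist v z ≤ l) :
    ∃ p, DupAt l s p := by
  have htl : (s.take (l + 1)).length = l + 1 := by rw [List.length_take]; omega
  have hnd : ¬ (s.take (l + 1)).Nodup := by
    intro hnd
    have h1 : hammingDist v (applyFlips v (s.take (l + 1))) = l + 1 := by
      rw [hammingDist_applyFlips_nodup _ hnd, htl]
    have h2 := hball _ (applyFlips_take_mem_trace s v (l + 1))
    omega
  rw [List.nodup_iff_injective_get, Function.not_injective_iff] at hnd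
  obtain ⟨a, b, hab, hne⟩ := hnd
  simp only [List.get_eq_getElem, List.getElem_take] at hab
  have ha : (a : ℕ) < l + 1 := by have := a.2; omega
  have hb : (b : ℕ) < l + 1 := by have := b.2; omega
  have hval : (a : ℕ) ≠ b := fun h => hne (Fin.ext h)
  have key : ∀ (p q : ℕ) (_ : p < l + 1) (_ : q < l + 1) (_ : p < q)
      (hps : p < s.length) (hqs : q < s.length), s[p]'hps = s[q]'hqs →
      ∃ pr, DupAt l s pr := by
    intro p q hp hq hpq hps hqs hpqe
    refine ⟨(p, q), hpq, by omega, hqs, ?_⟩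
    rw [List.getElem?_eq_getElem hps, List.getElem?_eq_getElem hqs]
    exact congrArg some hpqe
  rcases lt_or_gt_of_ne hval with h | h
  · exact key a b ha hb h (by omega) (by omega) hab
  · exact key b a hb ha h (by omega) (by omega) hab.symm

noncomputable def dup (l : ℕ) (s : List (Fin n)) : ℕ × ℕ :=
  letI := Classical.dec (∃ p, DupAt l s p)
  if h : ∃ p, DupAt l s p then h.choose else (0, 0)

lemma dup_spec {l : ℕ} {s : List (Fin n)} (h : ∃ p, DupAt l s p) : DupAt l s (dup l s) := by
  unfold dup
  split
  next hpos => exact hpos.choose_spec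
  next hneg => exact absurd h hneg

noncomputable def sig (l : ℕ) (s : List (Fin n)) : List (Fin n) :=
  (s.eraseIdx (dup l s).2).eraseIdx (dup l s).1


lemma card_Lset_zero (l : ℕ) (v x : Fin n → Bool) (hd : hammingDist v x = l) :
    (Lset n l l v x).card ≤ l.factorial := by
  classical
  have hD : Fintype.card {i : Fin n // v i ≠ x i} = l := by
    rw [Fintype.card_subtype]
    exact hd
  have hlD : Fintype.card (Fin l) = Fintype.card {i : Fin n // v i ≠ x i} := by
    simp [hD]
  have e := Fintype.equivOfCardEq hlD
  have key : ∀ s ∈ Lset n l l v x, s.length = l ∧ s.Nodup ∧ ∀ c ∈ s, v c ≠ x c := by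
    intro s hs
    rw [mem_Lset] at hs
    obtain ⟨h1, h2, _⟩ := hs
    have h4 := dist_eq_length_nodup s v (by rw [h2, hd, h1])
    exact ⟨h1, h4.1, fun c hc => by have h5 := h4.2 c hc; rwa [h2] at h5⟩
  set g : List (Fin n) → (Fin l ↪ {i : Fin n // v i ≠ x i}) := fun s =>
    if h : s.length = l ∧ s.Nodup ∧ ∀ c ∈ s, v c ≠ x c then
      ⟨fun i => ⟨s.get (Fin.cast h.1.symm i), h.2.2 _ (s.get_mem _)⟩, by
        intro i1 i2 hii
        simp only [Subtype.mk.injEq] at hii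
        have h6 := (List.nodup_iff_injective_get.1 h.2.1) hii
        have h7 := congrArg Fin.val h6
        exact Fin.ext h7⟩
    else e.toEmbedding with hg
  calc (Lset n l l v x).card
      ≤ (Finset.univ : Finset (Fin l ↪ {i : Fin n // v i ≠ x i})).card := by
        apply Finset.card_le_card_of_injOn g (fun _ _ => Finset.mem_univ _)
        intro s1 hs1 s2 hs2 hgg
        have k1 := key s1 (Finset.mem_coe.1 hs1)
        have k2 := key s2 (Finset.mem_coe.1 hs2)
        rw [hg] at hgg
        simp only [dif_pos k1, dif_pos k2] at hgg
        have hfun := congrArg (fun E => E.toFun) hgg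
        apply List.ext_get (k1.1.trans k2.1.symm)
        intro i hi1 hi2
        have h8 := congrFun hfun ⟨i, k1.1 ▸ hi1⟩
        simp only [Subtype.mk.injEq] at h8
        exact h8
    _ = l.factorial := by
        rw [Finset.card_univ, Fintype.card_embedding_eq, hD, Fintype.card_fin,
          Nat.descFactorial_self]


lemma take_append_of_ge {α : Type*} (p q : List α) (m : ℕ) (h : p.length ≤ m) :
    (p ++ q).take m = p ++ q.take (m - p.length) := by
  rw [List.take_append, List.take_of_length_le h]

lemma step_data {l k : ℕ} {v x : Fin n → Bool} (hl : 1 ≤ l) :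
    ∀ s ∈ Lset n l (l + 2 * (k + 1)) v x,
      DupAt l s (dup l s) ∧
      ∃ a b d : List (Fin n), ∃ c : Fin n,
        s = a ++ c :: (b ++ c :: d) ∧ a.length = (dup l s).1 ∧
        b.length = (dup l s).2 - (dup l s).1 - 1 ∧ sig l s = a ++ (b ++ d) := by
  intro s hs
  rw [mem_Lset] at hs
  obtain ⟨hlen, hend, hball⟩ := hs
  have hex : ∃ p, DupAt l s p := exists_dupAt (by omega) hball
  have hspec := dup_spec hex
  obtain ⟨hij, hjl, hjs, hee⟩ := hspec
  obtain ⟨a, b, d, c, h1, h2, h3, h4⟩ := surgery s _ _ hij hjs hee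
  exact ⟨dup_spec hex, a, b, d, c, h1, h2, h3, h4⟩

lemma sig_mem {l k : ℕ} {v x : Fin n → Bool} (hl : 1 ≤ l)
    {s : List (Fin n)} (hs : s ∈ Lset n l (l + 2 * (k + 1)) v x) :
    sig l s ∈ Lset n l (l + 2 * k) v x := by
  obtain ⟨⟨hij, hjl, hjs, -⟩, a, b, d, c, hdec, hal, hbl, hsig⟩ := step_data hl s hs
  rw [mem_Lset] at hs ⊢
  obtain ⟨hlen, hend, hball⟩ := hs
  have hslen : s.length = a.length + b.length + d.length + 2 := by
    rw [hdec]; simp; omega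
  refine ⟨?_, ?_, ?_⟩
  · rw [hsig]; simp; omega
  · rw [hsig, applyFlips_append, ← applyFlips_cancel _ c, ← applyFlips_append, ← hdec, hend]
  · intro z hz
    obtain ⟨m, hm, rfl⟩ := mem_trace _ _ _ hz
    by_cases hml : m ≤ l
    · calc hammingDist v (applyFlips v ((sig l s).take m))
          ≤ ((sig l s).take m).length := hammingDist_applyFlips_le _ _
        _ ≤ m := List.length_take_le _ _
        _ ≤ l := hml
    · -- m > l ≥ j - 1 = a.length + b.length
      have hab_le : a.length + b.length ≤ m := by omega
      set r := m - (a.length + b.length) with hr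
      have hid : (sig l s).take m = a ++ (b ++ d.take r) := by
        rw [hsig, take_append_of_ge _ _ _ (by omega), take_append_of_ge _ _ _ (by omega)]
        have h7 : m - a.length - b.length = r := by omega
        rw [h7]
      have hid2 : s.take (m + 2) = a ++ c :: (b ++ c :: d.take r) := by
        rw [hdec, take_append_of_ge _ _ _ (by omega)]
        have h5 : m + 2 - a.length = (m + 1 - a.length) + 1 := by omega
        rw [h5, List.take_succ_cons, take_append_of_ge _ _ _ (by omega)]
        have h6 : m + 1 - a.length - b.length = r + 1 := by omega
        rw [h6, List.take_succ_cons]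
      have heq : applyFlips v ((sig l s).take m) = applyFlips v (s.take (m + 2)) :=
        calc applyFlips v ((sig l s).take m)
            = applyFlips (applyFlips v a) (b ++ d.take r) := by rw [hid, applyFlips_append]
          _ = applyFlips (applyFlips v a) (c :: (b ++ c :: d.take r)) :=
              (applyFlips_cancel _ _ _ _).symm
          _ = applyFlips v (s.take (m + 2)) := by rw [hid2, applyFlips_append]
      rw [heq]
      exact hball _ (applyFlips_take_mem_trace _ _ _)

lemma card_Lset_succ (l k : ℕ) (hl : 1 ≤ l) (hn : 0 < n) (v x : Fin n → Bool) :
    (Lset n l (l + 2 * (k + 1)) v x).card ≤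
      (n * (l * l)) * (Lset n l (l + 2 * k) v x).card := by
  classical
  set c₀ : Fin n := ⟨0, hn⟩
  set L1 := Lset n l (l + 2 * (k + 1)) v x with hL1
  have hbound := Finset.card_le_mul_card_image (f := sig l) L1 (n * (l * l)) ?fiber
  case fiber =>
    intro s' _
    -- fiber injects into Fin n × (range l ×ˢ range l)
    set ψ : List (Fin n) → Fin n × ℕ × ℕ := fun s =>
      (s.getD (dup l s).1 c₀, (dup l s).1, (dup l s).2 - 1) with hψ
    refine le_trans (Finset.card_le_card_of_injOn
      (t := (Finset.univ : Finset (Fin n)) ×ˢ Finset.range l ×ˢ Finset.range l) ψ ?_ ?_) ?_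
    · intro s hsf
      rw [Finset.mem_coe, Finset.mem_filter] at hsf
      obtain ⟨⟨hij, hjl, hjs, -⟩, -, -, -, -, -, -, -, -⟩ := step_data hl s hsf.1
      refine Finset.mem_product.2 ⟨Finset.mem_univ _, Finset.mem_product.2 ⟨?_, ?_⟩⟩ <;>
        · simp only [hψ, Finset.mem_range]; omega
    · intro s1 hs1 s2 hs2 hpsi
      simp only [Finset.coe_filter, Set.mem_setOf_eq] at hs1 hs2
      obtain ⟨hm1, hσ1⟩ := hs1
      obtain ⟨hm2, hσ2⟩ := hs2
      obtain ⟨⟨hij1, -, hjs1, -⟩, a1, b1, d1, c1, hd1, ha1, hb1, hs1'⟩ := step_data hl s1 hm1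
      obtain ⟨⟨hij2, -, hjs2, -⟩, a2, b2, d2, c2, hd2, ha2, hb2, hs2'⟩ := step_data hl s2 hm2
      set i1 := (dup l s1).1 with hdi1
      set j1 := (dup l s1).2 with hdj1
      set i2 := (dup l s2).1 with hdi2
      set j2 := (dup l s2).2 with hdj2
      rw [hψ] at hpsi
      simp only [Prod.mk.injEq] at hpsi
      obtain ⟨hc, hi, hj⟩ := hpsi
      have hjeq : j1 = j2 := by omega
      -- c values
      have hc1 : s1.getD i1 c₀ = c1 := by
        rw [hd1, List.getD_eq_getElem?_getD, ← ha1, List.getElem?_append_right (le_refl _)]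
        simp
      have hc2 : s2.getD i2 c₀ = c2 := by
        rw [hd2, List.getD_eq_getElem?_getD, ← ha2, List.getElem?_append_right (le_refl _)]
        simp
      have hcc : c1 = c2 := by rw [← hc1, ← hc2]; exact hc
      -- reconstruct
      have hrec : ∀ (s : List (Fin n)) (a b d : List (Fin n)) (c : Fin n),
          s = a ++ c :: (b ++ c :: d) → sig l s = a ++ (b ++ d) →
          s = (sig l s).take a.length ++ c ::
            (((sig l s).drop a.length).take b.length ++ c ::
              ((sig l s).drop a.length).drop b.length) := by
        intro s a b d c hdc hsg
        rw [hsg, List.take_left' rfl, List.drop_left' rfl, List.take_left' rfl,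
          List.drop_left' rfl, ← hdc]
      have hr1 := hrec s1 a1 b1 d1 c1 hd1 hs1'
      have hr2 := hrec s2 a2 b2 d2 c2 hd2 hs2'
      rw [hσ1] at hr1
      rw [hσ2] at hr2
      have e_a : a1.length = a2.length := by omega
      have e_b : b1.length = b2.length := by omega
      rw [hr1, hr2, hcc, e_a, e_b]
    · rw [Finset.card_product, Finset.card_product, Finset.card_univ, Fintype.card_fin,
        Finset.card_range]
  have himg : L1.image (sig l) ⊆ Lset n l (l + 2 * k) v x := by
    intro s' hs'
    obtain ⟨s, hs, rfl⟩ := Finset.mem_image.1 hs'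
    exact sig_mem hl hs
  calc L1.card ≤ n * (l * l) * (L1.image (sig l)).card := hbound
    _ ≤ n * (l * l) * (Lset n l (l + 2 * k) v x).card :=
        Nat.mul_le_mul_left _ (Finset.card_le_card himg)


lemma card_Lset_le (l : ℕ) (hl : 1 ≤ l) (hn : 0 < n) (v x : Fin n → Bool)
    (hd : hammingDist v x = l) :
    ∀ k, (Lset n l (l + 2 * k) v x).card ≤ n ^ k * l ^ (2 * k) * l.factorial := by
  intro k
  induction k with
  | zero => simpa using card_Lset_zero l v x hd
  | succ k ih =>
    calc (Lset n l (l + 2 * (k + 1)) v x).card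
        ≤ n * (l * l) * (Lset n l (l + 2 * k) v x).card := card_Lset_succ l k hl hn v x
      _ ≤ n * (l * l) * (n ^ k * l ^ (2 * k) * l.factorial) := Nat.mul_le_mul_left _ ih
      _ = n ^ (k + 1) * l ^ (2 * (k + 1)) * l.factorial := by ring

end CW

/-- **Counting walks in the hypercube ball.** If `x` is at Hamming distance `l`
from `v`, the number of walks of length `l + 2k` from `v` to `x` staying in the
ball of radius `l` around `v` is at most `n^k · l^{2k} · l!`. -/
theorem card_Ak_le (n l k : ℕ) (hl : 1 ≤ l) (v x : Fin n → Bool)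
    (hd : hammingDist v x = l) :
    (Ak n l k v x).card ≤ n ^ k * l ^ (2 * k) * l.factorial := by
  have hn : 0 < n := by
    have h1 := hammingDist_le_card_fintype (x := v) (y := x)
    rw [hd, Fintype.card_fin] at h1
    omega
  calc (Ak n l k v x).card
      ≤ (CW.Lset n l (l + 2 * k) v x).card := CW.card_Ak_le_Lset n l k v x
    _ ≤ n ^ k * l ^ (2 * k) * l.factorial := CW.card_Lset_le l hl hn v x hd k
end

section
/- Consider a supercritical Galton–Watson binary branching tree where each of the two children of a node is present independently with probability q > 1/2. A depth-first search that explores the tree until reaching depth n visits, in expectation, O(n) edges; equivalently, the expected number of edges explored before finding a root-to-depth-n path, conditioned on the root's cluster reaching depth n, is at most C(q)·n for some constant C(q) < ∞. -/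
open MeasureTheory ProbabilityTheory
open scoped ENNReal

variable {V : Type*}

/-- Nodes of the complete binary tree of depth `n`: a node at depth `k` is a
boolean string of length `k`. -/
abbrev BTNode (n : ℕ) := Σ k : Fin (n + 1), (Fin (k : ℕ) → Bool)

/-- The root of the binary tree. -/
def btRoot (n : ℕ) : BTNode n := ⟨⟨0, Nat.succ_pos n⟩, Fin.elim0⟩

/-- The `b`-child of a node of depth `< n`. -/
def btChild {n : ℕ} (s : BTNode n) (h : (s.1 : ℕ) < n) (b : Bool) : BTNode n :=
  ⟨⟨(s.1 : ℕ) + 1, by omega⟩, Fin.snoc s.2 b⟩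

/-- Depth-first search for an open path from a node `s` to depth `n`, in the
configuration `ω` (where `ω m = true` means the edge from the parent of `m` to
`m` is present).  Returns the number of edges probed and whether depth `n` was
reached; `fuel` is the remaining depth budget (`n` minus the depth of `s`). -/
def dfs (n : ℕ) (ω : BTNode n → Bool) : ℕ → BTNode n → ℕ × Bool
  | 0, _ => (0, true)
  | fuel + 1, s =>
    if h : (s.1 : ℕ) < n then
      let resL := if ω (btChild s h false) then dfs n ω fuel (btChild s h false) else (0, false)
      if resL.2 then (resL.1 + 1, true)
      else
        let resR := if ω (btChild s h true) then dfs n ω fuel (btChild s h true) else (0, false)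
        (resL.1 + resR.1 + 2, resR.2)
    else (0, true)

/-- The number of edges probed by a depth-first search from the root until an
open path to depth `n` is found (or the whole open cluster is exhausted). -/
def dfsCount (n : ℕ) (ω : BTNode n → Bool) : ℕ := (dfs n ω n (btRoot n)).1

/-- The DFS found an open path from the root to depth `n`. -/
def dfsFound (n : ℕ) (ω : BTNode n → Bool) : Prop := (dfs n ω n (btRoot n)).2 = true

namespace DFSAux

def Cfg : ℕ → Type
  | 0 => Unit
  | m + 1 => (Bool × Cfg m) × (Bool × Cfg m)

def cfgFintype : ∀ m, Fintype (Cfg m)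
  | 0 => inferInstanceAs (Fintype Unit)
  | m + 1 => letI := cfgFintype m; inferInstanceAs (Fintype ((Bool × Cfg m) × (Bool × Cfg m)))

instance (m : ℕ) : Fintype (Cfg m) := cfgFintype m

instance (m : ℕ) : MeasurableSpace (Cfg m) := ⊤
instance (m : ℕ) : MeasurableSingletonClass (Cfg m) := ⟨fun _ => trivial⟩

def mdfs : ∀ m, Cfg m → ℕ × Bool
  | 0, _ => (0, true)
  | m + 1, ((b1, c1), (b2, c2)) =>
    let resL := if b1 then mdfs m c1 else (0, false)
    if resL.2 then (resL.1 + 1, true)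
    else
      let resR := if b2 then mdfs m c2 else (0, false)
      (resL.1 + resR.1 + 2, resR.2)

def pres (m : ℕ) (x : Bool × Cfg m) : ℕ × Bool := if x.1 then mdfs m x.2 else (0, false)

lemma mdfs_succ (m : ℕ) (x y : Bool × Cfg m) :
    mdfs (m+1) ((x, y) : Cfg (m+1)) =
      if (pres m x).2 then ((pres m x).1 + 1, true)
      else ((pres m x).1 + (pres m y).1 + 2, (pres m y).2) := by
  obtain ⟨b1, c1⟩ := x; obtain ⟨b2, c2⟩ := y
  rfl

noncomputable def wB (q' : ℝ≥0∞) (b : Bool) : ℝ≥0∞ := if b then q' else 1 - q'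

noncomputable def W (q' : ℝ≥0∞) : ∀ m, Cfg m → ℝ≥0∞
  | 0, _ => 1
  | m + 1, ((b1, c1), (b2, c2)) => (wB q' b1 * W q' m c1) * (wB q' b2 * W q' m c2)

noncomputable def pW (q' : ℝ≥0∞) (m : ℕ) (x : Bool × Cfg m) : ℝ≥0∞ := wB q' x.1 * W q' m x.2

lemma W_succ (q' : ℝ≥0∞) (m : ℕ) (x y : Bool × Cfg m) :
    W q' (m+1) ((x, y) : Cfg (m+1)) = pW q' m x * pW q' m y := by
  obtain ⟨b1, c1⟩ := x; obtain ⟨b2, c2⟩ := y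
  rfl

noncomputable def Ex (q' : ℝ≥0∞) (m : ℕ) (f : Cfg m → ℝ≥0∞) : ℝ≥0∞ := ∑ c, W q' m c * f c
noncomputable def pEx (q' : ℝ≥0∞) (m : ℕ) (g : Bool × Cfg m → ℝ≥0∞) : ℝ≥0∞ := ∑ x, pW q' m x * g x

def cfgEquiv (m : ℕ) : Cfg (m+1) ≃ (Bool × Cfg m) × (Bool × Cfg m) :=
  ⟨fun c => c, fun z => z, fun _ => rfl, fun _ => rfl⟩

lemma Ex_succ_prod (q' : ℝ≥0∞) (m : ℕ) (g h : Bool × Cfg m → ℝ≥0∞) :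
    Ex q' (m+1) (fun c => g c.1 * h c.2) = pEx q' m g * pEx q' m h := by
  unfold Ex pEx
  rw [Fintype.sum_equiv (cfgEquiv m)
    (fun c : Cfg (m+1) => W q' (m+1) c * (g c.1 * h c.2))
    (fun z : (Bool × Cfg m) × (Bool × Cfg m) => (pW q' m z.1 * g z.1) * (pW q' m z.2 * h z.2))
    (by
      intro x
      obtain ⟨a, b⟩ := x
      show W q' (m+1) ((a, b) : Cfg (m+1)) * (g a * h b) = _
      rw [W_succ]
      simp only [cfgEquiv, Equiv.coe_fn_mk]
      show _ = (pW q' m a * g a) * (pW q' m b * h b)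
      ring)]
  rw [Fintype.sum_prod_type]
  simp only [Prod.fst, Prod.snd]
  rw [← Finset.sum_mul_sum]


lemma Ex_zero_fn (q' : ℝ≥0∞) (m : ℕ) : Ex q' m (fun _ => 0) = 0 := by
  simp [Ex]

lemma Ex_add (q' : ℝ≥0∞) (m : ℕ) (f g : Cfg m → ℝ≥0∞) :
    Ex q' m (fun c => f c + g c) = Ex q' m f + Ex q' m g := by
  simp [Ex, mul_add, Finset.sum_add_distrib]

lemma Ex_mono (q' : ℝ≥0∞) (m : ℕ) {f g : Cfg m → ℝ≥0∞} (h : ∀ c, f c ≤ g c) :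
    Ex q' m f ≤ Ex q' m g :=
  Finset.sum_le_sum fun c _ => mul_le_mul_right (h c) _

lemma pEx_eq (q' : ℝ≥0∞) (m : ℕ) (g : Bool × Cfg m → ℝ≥0∞) :
    pEx q' m g = q' * Ex q' m (fun c => g (true, c)) + (1 - q') * Ex q' m (fun c => g (false, c)) := by
  unfold pEx Ex
  rw [Fintype.sum_prod_type, Fintype.sum_bool]
  rw [Finset.mul_sum, Finset.mul_sum]
  congr 1
  · exact Finset.sum_congr rfl fun c _ => by simp [pW, wB, mul_assoc]
  · exact Finset.sum_congr rfl fun c _ => by simp [pW, wB, mul_assoc]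

lemma Ex_unit (q' : ℝ≥0∞) (f : Cfg 0 → ℝ≥0∞) : Ex q' 0 f = f () := by
  haveI : Unique (Cfg 0) := ⟨⟨()⟩, fun _ => rfl⟩
  unfold Ex
  rw [Fintype.sum_unique]
  show (1 : ℝ≥0∞) * f _ = _
  rw [one_mul]
  rfl

lemma Ex_one (q' : ℝ≥0∞) (hq' : q' ≤ 1) : ∀ m, Ex q' m (fun _ => 1) = 1 := by
  intro m
  induction m with
  | zero => rw [Ex_unit]
  | succ m ih =>
    have h := Ex_succ_prod q' m (fun _ : Bool × Cfg m => (1:ℝ≥0∞)) (fun _ => 1)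
    simp only [mul_one, one_mul] at h
    have hp : pEx q' m (fun _ => (1:ℝ≥0∞)) = 1 := by
      rw [pEx_eq]
      simp only [ih, mul_one]
      exact add_tsub_cancel_of_le hq'
    rw [h, hp, one_mul]

lemma pEx_one (q' : ℝ≥0∞) (hq' : q' ≤ 1) (m : ℕ) : pEx q' m (fun _ => 1) = 1 := by
  rw [pEx_eq]
  simp only [Ex_one q' hq', mul_one]
  exact add_tsub_cancel_of_le hq'

lemma Ex_succ_left (q' : ℝ≥0∞) (hq' : q' ≤ 1) (m : ℕ) (g : Bool × Cfg m → ℝ≥0∞) :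
    Ex q' (m+1) (fun c => g c.1) = pEx q' m g := by
  have h := Ex_succ_prod q' m g (fun _ => 1)
  rw [pEx_one q' hq', mul_one] at h
  simpa using h

/-! Functionals -/

noncomputable def cSf (m : ℕ) (c : Cfg m) : ℝ≥0∞ := if (mdfs m c).2 then 1 else 0
noncomputable def cFf (m : ℕ) (c : Cfg m) : ℝ≥0∞ := if (mdfs m c).2 then 0 else 1
noncomputable def cAf (m : ℕ) (c : Cfg m) : ℝ≥0∞ := if (mdfs m c).2 then ((mdfs m c).1 : ℝ≥0∞) else 0
noncomputable def cBf (m : ℕ) (c : Cfg m) : ℝ≥0∞ := if (mdfs m c).2 then 0 else ((mdfs m c).1 : ℝ≥0∞)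

noncomputable def pSf (m : ℕ) (x : Bool × Cfg m) : ℝ≥0∞ := if (pres m x).2 then 1 else 0
noncomputable def pFf (m : ℕ) (x : Bool × Cfg m) : ℝ≥0∞ := if (pres m x).2 then 0 else 1
noncomputable def pAf (m : ℕ) (x : Bool × Cfg m) : ℝ≥0∞ := if (pres m x).2 then ((pres m x).1 : ℝ≥0∞) else 0
noncomputable def pBf (m : ℕ) (x : Bool × Cfg m) : ℝ≥0∞ := if (pres m x).2 then 0 else ((pres m x).1 : ℝ≥0∞)

noncomputable def pFf2 (m : ℕ) (x : Bool × Cfg m) : ℝ≥0∞ := 2 * pFf m x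

lemma pEx_pFf2 (q' : ℝ≥0∞) (m : ℕ) : pEx q' m (pFf2 m) = 2 * pEx q' m (pFf m) := by
  unfold pEx pFf2
  rw [Finset.mul_sum]
  exact Finset.sum_congr rfl fun x _ => by ring

lemma pEx_pSf (q' : ℝ≥0∞) (m : ℕ) : pEx q' m (pSf m) = q' * Ex q' m (cSf m) := by
  rw [pEx_eq]
  have h1 : (fun c => pSf m (true, c)) = cSf m := by
    funext c; simp [pSf, cSf, pres]
  have h2 : (fun c => pSf m (false, c)) = fun _ => (0:ℝ≥0∞) := by
    funext c; simp [pSf, pres]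
  rw [h1, h2, Ex_zero_fn, mul_zero, add_zero]

lemma pEx_pFf (q' : ℝ≥0∞) (hq' : q' ≤ 1) (m : ℕ) :
    pEx q' m (pFf m) = q' * Ex q' m (cFf m) + (1 - q') := by
  rw [pEx_eq]
  have h1 : (fun c => pFf m (true, c)) = cFf m := by
    funext c; simp [pFf, cFf, pres]
  have h2 : (fun c => pFf m (false, c)) = fun _ => (1:ℝ≥0∞) := by
    funext c; simp [pFf, pres]
  rw [h1, h2, Ex_one q' hq', mul_one]

lemma pEx_pAf (q' : ℝ≥0∞) (m : ℕ) : pEx q' m (pAf m) = q' * Ex q' m (cAf m) := by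
  rw [pEx_eq]
  have h1 : (fun c => pAf m (true, c)) = cAf m := by
    funext c; simp [pAf, cAf, pres]
  have h2 : (fun c => pAf m (false, c)) = fun _ => (0:ℝ≥0∞) := by
    funext c; simp [pAf, pres]
  rw [h1, h2, Ex_zero_fn, mul_zero, add_zero]

lemma pEx_pBf (q' : ℝ≥0∞) (m : ℕ) : pEx q' m (pBf m) = q' * Ex q' m (cBf m) := by
  rw [pEx_eq]
  have h1 : (fun c => pBf m (true, c)) = cBf m := by
    funext c; simp [pBf, cBf, pres]
  have h2 : (fun c => pBf m (false, c)) = fun _ => (0:ℝ≥0∞) := by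
    funext c; simp [pBf, pres]
  rw [h1, h2, Ex_zero_fn, mul_zero, add_zero]

/-! Pointwise decompositions on `Cfg (m+1)`. -/

lemma cSf_succ (m : ℕ) (c : Cfg (m+1)) :
    cSf (m+1) c = pSf m c.1 + pFf m c.1 * pSf m c.2 := by
  obtain ⟨x, y⟩ := c
  show cSf (m+1) ((x, y) : Cfg (m+1)) = _
  cases h1 : (pres m x).2 <;> cases h2 : (pres m y).2 <;>
    simp [cSf, pSf, pFf, mdfs_succ, h1, h2]

lemma cFf_succ (m : ℕ) (c : Cfg (m+1)) :
    cFf (m+1) c = pFf m c.1 * pFf m c.2 := by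
  obtain ⟨x, y⟩ := c
  show cFf (m+1) ((x, y) : Cfg (m+1)) = _
  cases h1 : (pres m x).2 <;> cases h2 : (pres m y).2 <;>
    simp [cFf, pFf, mdfs_succ, h1, h2]

lemma cAf_succ (m : ℕ) (c : Cfg (m+1)) :
    cAf (m+1) c = (pAf m c.1 + pSf m c.1)
      + (pBf m c.1 * pSf m c.2 + pFf m c.1 * pAf m c.2 + pFf2 m c.1 * pSf m c.2) := by
  obtain ⟨x, y⟩ := c
  show cAf (m+1) ((x, y) : Cfg (m+1)) = _
  cases h1 : (pres m x).2 <;> cases h2 : (pres m y).2 <;>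
    simp [cAf, pSf, pFf, pFf2, pAf, pBf, mdfs_succ, h1, h2] <;> push_cast <;> ring

lemma cBf_succ (m : ℕ) (c : Cfg (m+1)) :
    cBf (m+1) c = (pBf m c.1 * pFf m c.2 + pFf m c.1 * pBf m c.2) + pFf2 m c.1 * pFf m c.2 := by
  obtain ⟨x, y⟩ := c
  show cBf (m+1) ((x, y) : Cfg (m+1)) = _
  cases h1 : (pres m x).2 <;> cases h2 : (pres m y).2 <;>
    simp [cBf, pFf, pFf2, pBf, mdfs_succ, h1, h2] <;> push_cast <;> ring

/-! Recursions for the four expectations. -/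

lemma S_succ (q' : ℝ≥0∞) (hq' : q' ≤ 1) (m : ℕ) :
    Ex q' (m+1) (cSf (m+1)) =
      pEx q' m (pSf m) + pEx q' m (pFf m) * pEx q' m (pSf m) := by
  have h : Ex q' (m+1) (cSf (m+1)) = Ex q' (m+1)
      (fun c => pSf m c.1 + pFf m c.1 * pSf m c.2) := congrArg _ (funext (cSf_succ m))
  rw [h, Ex_add, Ex_succ_left q' hq', Ex_succ_prod]

lemma F_succ (q' : ℝ≥0∞) (m : ℕ) :
    Ex q' (m+1) (cFf (m+1)) = pEx q' m (pFf m) * pEx q' m (pFf m) := by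
  have : Ex q' (m+1) (cFf (m+1)) = Ex q' (m+1) (fun c => pFf m c.1 * pFf m c.2) :=
    congrArg _ (funext (cFf_succ m))
  rw [this, Ex_succ_prod]

lemma A_succ (q' : ℝ≥0∞) (hq' : q' ≤ 1) (m : ℕ) :
    Ex q' (m+1) (cAf (m+1)) =
      (pEx q' m (pAf m) + pEx q' m (pSf m))
      + (pEx q' m (pBf m) * pEx q' m (pSf m) + pEx q' m (pFf m) * pEx q' m (pAf m)
          + (2 * pEx q' m (pFf m)) * pEx q' m (pSf m)) := by
  have h : Ex q' (m+1) (cAf (m+1)) = Ex q' (m+1)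
      (fun c => (pAf m c.1 + pSf m c.1)
        + (pBf m c.1 * pSf m c.2 + pFf m c.1 * pAf m c.2 + pFf2 m c.1 * pSf m c.2)) :=
    congrArg _ (funext (cAf_succ m))
  rw [h, Ex_add, Ex_add, Ex_add, Ex_add, Ex_succ_left q' hq', Ex_succ_left q' hq',
    Ex_succ_prod, Ex_succ_prod, Ex_succ_prod, pEx_pFf2]

lemma B_succ (q' : ℝ≥0∞) (m : ℕ) :
    Ex q' (m+1) (cBf (m+1)) =
      (pEx q' m (pBf m) * pEx q' m (pFf m) + pEx q' m (pFf m) * pEx q' m (pBf m))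
      + (2 * pEx q' m (pFf m)) * pEx q' m (pFf m) := by
  have h : Ex q' (m+1) (cBf (m+1)) = Ex q' (m+1)
      (fun c => (pBf m c.1 * pFf m c.2 + pFf m c.1 * pBf m c.2) + pFf2 m c.1 * pFf m c.2) :=
    congrArg _ (funext (cBf_succ m))
  rw [h, Ex_add, Ex_add, Ex_succ_prod, Ex_succ_prod, Ex_succ_prod, pEx_pFf2]


/-! ### Numeric bounds -/

section Bounds

variable {q' : ℝ≥0∞} (hq' : q' ≤ 1)

lemma cSf_le_one (m : ℕ) (c : Cfg m) : cSf m c ≤ 1 := by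
  unfold cSf; split <;> simp

lemma cFf_le_one (m : ℕ) (c : Cfg m) : cFf m c ≤ 1 := by
  unfold cFf; split <;> simp

include hq'

lemma S_le_one (m : ℕ) : Ex q' m (cSf m) ≤ 1 := by
  calc Ex q' m (cSf m) ≤ Ex q' m (fun _ => 1) := Ex_mono q' m (cSf_le_one m)
  _ = 1 := Ex_one q' hq' m

lemma F_le_one (m : ℕ) : Ex q' m (cFf m) ≤ 1 := by
  calc Ex q' m (cFf m) ≤ Ex q' m (fun _ => 1) := Ex_mono q' m (cFf_le_one m)
  _ = 1 := Ex_one q' hq' m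

lemma S_add_F (m : ℕ) : Ex q' m (cSf m) + Ex q' m (cFf m) = 1 := by
  rw [← Ex_add]
  have : (fun c => cSf m c + cFf m c) = fun _ : Cfg m => (1:ℝ≥0∞) := by
    funext c; unfold cSf cFf; split <;> simp
  rw [this, Ex_one q' hq']

lemma PF_le_one (m : ℕ) : pEx q' m (pFf m) ≤ 1 := by
  rw [pEx_pFf q' hq']
  calc q' * Ex q' m (cFf m) + (1 - q') ≤ q' * 1 + (1 - q') := by
        gcongr; exact F_le_one hq' m
  _ = 1 := by rw [mul_one, add_tsub_cancel_of_le hq']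

lemma F_zero : Ex q' 0 (cFf 0) = 0 := by
  rw [Ex_unit]
  show (if (mdfs 0 ()).2 then (0:ℝ≥0∞) else 1) = 0
  show (if true then (0:ℝ≥0∞) else 1) = 0
  simp

lemma A_zero : Ex q' 0 (cAf 0) = 0 := by
  rw [Ex_unit]
  show (if (mdfs 0 ()).2 then (((mdfs 0 ()).1 : ℕ) : ℝ≥0∞) else 0) = 0
  show (if true then (((0:ℕ)) : ℝ≥0∞) else 0) = 0
  simp

lemma B_zero : Ex q' 0 (cBf 0) = 0 := by
  rw [Ex_unit]
  show (if (mdfs 0 ()).2 then 0 else (((mdfs 0 ()).1 : ℕ) : ℝ≥0∞)) = 0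
  show (if true then (0:ℝ≥0∞) else _) = 0
  simp

lemma q_mul_PF_le (m : ℕ) : q' * pEx q' m (pFf m) ≤ 1 - q' := by
  induction m with
  | zero =>
      rw [pEx_pFf q' hq', F_zero hq', mul_zero, zero_add]
      calc q' * (1 - q') ≤ 1 * (1 - q') := by gcongr
      _ = 1 - q' := one_mul _
  | succ m ih =>
      rw [pEx_pFf q' hq', F_succ]
      calc q' * (q' * (pEx q' m (pFf m) * pEx q' m (pFf m)) + (1 - q'))
          = (q' * pEx q' m (pFf m)) * (q' * pEx q' m (pFf m)) + q' * (1 - q') := by ring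
      _ ≤ (1 - q') * (1 - q') + q' * (1 - q') := by gcongr
      _ = ((1 - q') + q') * (1 - q') := by ring
      _ = 1 * (1 - q') := by rw [tsub_add_cancel_of_le hq']
      _ = 1 - q' := one_mul _

lemma PF_le_rho {ρ : ℝ≥0∞} (hq0 : q' ≠ 0) (hρ : q' * ρ = 1 - q') (m : ℕ) :
    pEx q' m (pFf m) ≤ ρ := by
  have h := q_mul_PF_le hq' m
  rw [← hρ] at h
  exact (ENNReal.mul_le_mul_iff_right hq0 (lt_of_le_of_lt hq' ENNReal.one_lt_top).ne).1 h

lemma F_le_rho_sq {ρ : ℝ≥0∞} (hq0 : q' ≠ 0) (hρ : q' * ρ = 1 - q') (m : ℕ) :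
    Ex q' (m+1) (cFf (m+1)) ≤ ρ * ρ := by
  rw [F_succ]
  exact mul_le_mul' (PF_le_rho hq' hq0 hρ m) (PF_le_rho hq' hq0 hρ m)

lemma S_ge {ρ : ℝ≥0∞} (hq0 : q' ≠ 0) (hρ : q' * ρ = 1 - q') (m : ℕ) :
    1 - ρ * ρ ≤ Ex q' (m+1) (cSf (m+1)) := by
  have hSF := S_add_F hq' (m+1)
  have hS : Ex q' (m+1) (cSf (m+1)) = 1 - Ex q' (m+1) (cFf (m+1)) :=
    ENNReal.eq_sub_of_add_eq (lt_of_le_of_lt (F_le_one hq' (m+1)) ENNReal.one_lt_top).ne hSF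
  rw [hS]
  exact tsub_le_tsub_left (F_le_rho_sq hq' hq0 hρ m) 1

lemma B_le {B' : ℝ≥0∞} (hB : 2 * (1 - q') * B' + 2 ≤ B') (m : ℕ) :
    Ex q' m (cBf m) ≤ B' := by
  induction m with
  | zero =>
      rw [B_zero hq']
      exact zero_le
  | succ m ih =>
      rw [B_succ]
      refine le_trans ?_ hB
      have hPB : pEx q' m (pBf m) * pEx q' m (pFf m) ≤ (1 - q') * B' := by
        rw [pEx_pBf]
        calc q' * Ex q' m (cBf m) * pEx q' m (pFf m)
            = (q' * pEx q' m (pFf m)) * Ex q' m (cBf m) := by ring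
        _ ≤ (1 - q') * B' := mul_le_mul' (q_mul_PF_le hq' m) ih
      have hPB2 : pEx q' m (pFf m) * pEx q' m (pBf m) ≤ (1 - q') * B' := by
        rw [mul_comm]; exact hPB
      have hPF2 : (2:ℝ≥0∞) * pEx q' m (pFf m) * pEx q' m (pFf m) ≤ 2 := by
        calc (2:ℝ≥0∞) * pEx q' m (pFf m) * pEx q' m (pFf m) ≤ 2 * 1 * 1 := by
              gcongr <;> exact PF_le_one hq' m
        _ = 2 := by norm_num
      calc pEx q' m (pBf m) * pEx q' m (pFf m) + pEx q' m (pFf m) * pEx q' m (pBf m)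
            + 2 * pEx q' m (pFf m) * pEx q' m (pFf m)
          ≤ (1 - q') * B' + (1 - q') * B' + 2 := by gcongr
      _ = 2 * (1 - q') * B' + 2 := by ring

lemma A_le {B' : ℝ≥0∞} (hB : 2 * (1 - q') * B' + 2 ≤ B') (m : ℕ) :
    Ex q' m (cAf m) ≤ (B' + 3) * m := by
  induction m with
  | zero =>
      rw [A_zero hq']
      exact zero_le
  | succ m ih =>
      rw [A_succ q' hq']
      have hPS : pEx q' m (pSf m) ≤ 1 := by
        rw [pEx_pSf]
        exact mul_le_one' hq' (S_le_one hq' m)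
      have hPA : pEx q' m (pAf m) + pEx q' m (pFf m) * pEx q' m (pAf m) ≤ Ex q' m (cAf m) := by
        rw [pEx_pAf]
        calc q' * Ex q' m (cAf m) + pEx q' m (pFf m) * (q' * Ex q' m (cAf m))
            = (q' + q' * pEx q' m (pFf m)) * Ex q' m (cAf m) := by ring
        _ ≤ (q' + (1 - q')) * Ex q' m (cAf m) := by gcongr; exact q_mul_PF_le hq' m
        _ = 1 * Ex q' m (cAf m) := by rw [add_tsub_cancel_of_le hq']
        _ = Ex q' m (cAf m) := one_mul _
      have hPBS : pEx q' m (pBf m) * pEx q' m (pSf m) ≤ B' := by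
        calc pEx q' m (pBf m) * pEx q' m (pSf m) ≤ pEx q' m (pBf m) * 1 := by gcongr
        _ = pEx q' m (pBf m) := mul_one _
        _ = q' * Ex q' m (cBf m) := pEx_pBf q' m
        _ ≤ 1 * B' := mul_le_mul' hq' (B_le hq' hB m)
        _ = B' := one_mul _
      have hPFS : (2:ℝ≥0∞) * pEx q' m (pFf m) * pEx q' m (pSf m) ≤ 2 := by
        calc (2:ℝ≥0∞) * pEx q' m (pFf m) * pEx q' m (pSf m) ≤ 2 * 1 * 1 :=
              mul_le_mul' (mul_le_mul' le_rfl (PF_le_one hq' m)) hPS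
        _ = 2 := by norm_num
      calc pEx q' m (pAf m) + pEx q' m (pSf m)
            + (pEx q' m (pBf m) * pEx q' m (pSf m) + pEx q' m (pFf m) * pEx q' m (pAf m)
              + 2 * pEx q' m (pFf m) * pEx q' m (pSf m))
          = (pEx q' m (pAf m) + pEx q' m (pFf m) * pEx q' m (pAf m))
            + pEx q' m (pSf m) + pEx q' m (pBf m) * pEx q' m (pSf m)
            + 2 * pEx q' m (pFf m) * pEx q' m (pSf m) := by ring
      _ ≤ Ex q' m (cAf m) + 1 + B' + 2 := by gcongr
      _ ≤ (B' + 3) * m + 1 + B' + 2 := by gcongr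
      _ = (B' + 3) * (m + 1) := by ring
      _ = (B' + 3) * ((m : ℕ) + 1 : ℕ) := by push_cast; ring

end Bounds

end DFSAux

namespace DFSAux

lemma btChild_fst {n : ℕ} (s : BTNode n) (h : (s.1 : ℕ) < n) (b : Bool) :
    (((btChild s h b).1 : Fin (n+1)) : ℕ) = (s.1 : ℕ) + 1 := rfl

def extract (n : ℕ) (ω : BTNode n → Bool) : ∀ m (s : BTNode n), (s.1 : ℕ) + m ≤ n → Cfg m
  | 0, _, _ => ()
  | m+1, s, h =>
    have h' : (s.1 : ℕ) < n := by omega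
    ((ω (btChild s h' false),
        extract n ω m (btChild s h' false) (by simp only [btChild_fst]; omega)),
     (ω (btChild s h' true),
        extract n ω m (btChild s h' true) (by simp only [btChild_fst]; omega)))

lemma dfs_eq {n : ℕ} (ω : BTNode n → Bool) :
    ∀ m (s : BTNode n) (h : (s.1 : ℕ) + m ≤ n),
      dfs n ω m s = mdfs m (extract n ω m s h)
  | 0, s, h => rfl
  | m+1, s, h => by
    have h' : (s.1 : ℕ) < n := by omega
    have h1 : ((btChild s h' false).1 : ℕ) + m ≤ n := by simp only [btChild_fst]; omega
    have h2 : ((btChild s h' true).1 : ℕ) + m ≤ n := by simp only [btChild_fst]; omega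
    have he : extract n ω (m+1) s h =
        (((ω (btChild s h' false), extract n ω m (btChild s h' false) h1)),
         ((ω (btChild s h' true), extract n ω m (btChild s h' true) h2))) := rfl
    rw [he, mdfs_succ]
    simp only [pres]
    rw [show dfs n ω (m+1) s = if h : (s.1 : ℕ) < n then
      (let resL := if ω (btChild s h false) then dfs n ω m (btChild s h false) else (0, false)
       if resL.2 then (resL.1 + 1, true)
       else
         let resR := if ω (btChild s h true) then dfs n ω m (btChild s h true) else (0, false)
         (resL.1 + resR.1 + 2, resR.2)) else (0, true) from rfl]
    rw [dif_pos h']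
    rw [dfs_eq ω m (btChild s h' false) h1, dfs_eq ω m (btChild s h' true) h2]

end DFSAux



namespace DFSAux

/-- `i` is a strict descendant of `s` in the binary tree. -/
def Ext {n : ℕ} (s i : BTNode n) : Prop :=
  (s.1 : ℕ) < (i.1 : ℕ) ∧ ∀ (j : ℕ) (hj : j < (s.1 : ℕ)) (hj' : j < (i.1 : ℕ)),
    i.2 ⟨j, hj'⟩ = s.2 ⟨j, hj⟩

lemma ext_child {n : ℕ} (s : BTNode n) (h' : (s.1 : ℕ) < n) (b : Bool) :
    Ext s (btChild s h' b) := by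
  constructor
  · show (s.1 : ℕ) < (s.1 : ℕ) + 1; omega
  · intro j hj hj'
    have hcast : (⟨j, hj'⟩ : Fin (((btChild s h' b).1 : ℕ))) = Fin.castSucc ⟨j, hj⟩ :=
      Fin.ext rfl
    rw [hcast]
    exact Fin.snoc_castSucc (α := fun _ => Bool) b s.2 ⟨j, hj⟩

lemma ext_trans {n : ℕ} {s t i : BTNode n} (h1 : Ext s t) (h2 : Ext t i) : Ext s i := by
  obtain ⟨ha, hb⟩ := h1
  obtain ⟨hc, hd⟩ := h2
  refine ⟨by omega, fun j hj hj' => ?_⟩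
  rw [hd j (by omega) hj', hb j hj (by omega)]

lemma btChild_snd_last {n : ℕ} (s : BTNode n) (h' : (s.1:ℕ) < n) (b : Bool)
    (k : Fin (((btChild s h' b).1 : ℕ))) (hk : (k : ℕ) = (s.1:ℕ)) :
    (btChild s h' b).2 k = b := by
  have hk' : k = Fin.last (s.1:ℕ) := Fin.ext hk
  rw [hk']
  exact Fin.snoc_last (α := fun _ => Bool) b s.2

lemma ext_child_val {n : ℕ} {s : BTNode n} {h' : (s.1 : ℕ) < n} {b : Bool} {i : BTNode n}
    (hE : Ext (btChild s h' b) i) (hlt : (s.1 : ℕ) < (i.1 : ℕ)) :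
    i.2 ⟨(s.1 : ℕ), hlt⟩ = b := by
  rw [hE.2 (s.1 : ℕ) (Nat.lt_succ_self _) hlt]
  exact btChild_snd_last s h' b _ rfl

lemma ext_irrefl {n : ℕ} {s : BTNode n} (h : Ext s s) : False := by
  exact absurd h.1 (lt_irrefl _)

lemma btChild_ne {n : ℕ} (s : BTNode n) (h1 h2 : (s.1 : ℕ) < n) :
    btChild s h1 false ≠ btChild s h2 true := by
  intro he
  have hf := congrArg (fun t : BTNode n =>
    if h : (s.1:ℕ) < ((t.1 : Fin (n+1)) : ℕ) then t.2 ⟨(s.1:ℕ), h⟩ else false) he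
  beta_reduce at hf
  rw [dif_pos (show (s.1:ℕ) < (((btChild s h1 false).1 : Fin (n+1)) : ℕ) from Nat.lt_succ_self _),
    dif_pos (show (s.1:ℕ) < (((btChild s h2 true).1 : Fin (n+1)) : ℕ) from Nat.lt_succ_self _)] at hf
  rw [btChild_snd_last s h1 false _ rfl, btChild_snd_last s h2 true _ rfl] at hf
  exact Bool.noConfusion hf

/-- The partial assignment of tree coordinates determined by a configuration. -/
def pa (n : ℕ) : ∀ m (s : BTNode n), (s.1 : ℕ) + m ≤ n → Cfg m → BTNode n → Option Bool
  | 0, _, _, _, _ => none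
  | m+1, s, h, c, i =>
    have h' : (s.1 : ℕ) < n := by omega
    if i = btChild s h' false then some c.1.1
    else if i = btChild s h' true then some c.2.1
    else (pa n m (btChild s h' false) (by simp only [btChild_fst]; omega) c.1.2 i).orElse
         (fun _ => pa n m (btChild s h' true) (by simp only [btChild_fst]; omega) c.2.2 i)

lemma pa_dom {n : ℕ} : ∀ m (s : BTNode n) (h : (s.1 : ℕ) + m ≤ n) (c : Cfg m) (i : BTNode n)
    (b : Bool), pa n m s h c i = some b → Ext s i
  | 0, s, h, c, i, b => by intro hpa; exact absurd hpa (by simp [pa])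
  | m+1, s, h, c, i, b => by
    intro hpa
    have h' : (s.1 : ℕ) < n := by omega
    have h1 : ((btChild s h' false).1 : ℕ) + m ≤ n := by simp only [btChild_fst]; omega
    have h2 : ((btChild s h' true).1 : ℕ) + m ≤ n := by simp only [btChild_fst]; omega
    have hpa' : (if i = btChild s h' false then some c.1.1
      else if i = btChild s h' true then some c.2.1
      else (pa n m (btChild s h' false) h1 c.1.2 i).orElse
           (fun _ => pa n m (btChild s h' true) h2 c.2.2 i)) = some b := hpa
    by_cases hil : i = btChild s h' false
    · subst hil; exact ext_child s h' false
    · rw [if_neg hil] at hpa'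
      by_cases hir : i = btChild s h' true
      · subst hir; exact ext_child s h' true
      · rw [if_neg hir] at hpa'
        cases hl : pa n m (btChild s h' false) h1 c.1.2 i with
        | some b0 =>
            exact ext_trans (ext_child s h' false) (pa_dom m _ h1 c.1.2 i b0 hl)
        | none =>
            rw [hl] at hpa'
            exact ext_trans (ext_child s h' true)
              (pa_dom m _ h2 c.2.2 i b hpa')

/-- Disjointness of the domains of the two children's assignments. -/
lemma pa_disj {n : ℕ} {m : ℕ} {s : BTNode n} {h' : (s.1:ℕ) < n}
    {h1 : ((btChild s h' false).1 : ℕ) + m ≤ n} {h2 : ((btChild s h' true).1 : ℕ) + m ≤ n}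
    {c1 c2 : Cfg m} {i : BTNode n} {b b' : Bool}
    (hl : pa n m (btChild s h' false) h1 c1 i = some b)
    (hr : pa n m (btChild s h' true) h2 c2 i = some b') : False := by
  have hEl := pa_dom m _ h1 c1 i b hl
  have hEr := pa_dom m _ h2 c2 i b' hr
  have hlt : (s.1 : ℕ) < (i.1 : ℕ) := by
    have := hEl.1
    have hc : ((btChild s h' false).1 : ℕ) = (s.1:ℕ)+1 := rfl
    omega
  have hv1 := ext_child_val hEl hlt
  have hv2 := ext_child_val hEr hlt
  rw [hv1] at hv2
  exact Bool.noConfusion hv2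


/-- Compatibility of a configuration with a partial assignment. -/
def Compat {n : ℕ} (ω : BTNode n → Bool) (v : BTNode n → Option Bool) : Prop :=
  ∀ i b, v i = some b → ω i = b

instance : Unique (Cfg 0) := ⟨⟨()⟩, fun _ => rfl⟩

lemma extract_eq_iff {n : ℕ} (ω : BTNode n → Bool) :
    ∀ m (s : BTNode n) (h : (s.1:ℕ) + m ≤ n) (c : Cfg m),
      extract n ω m s h = c ↔ Compat ω (pa n m s h c)
  | 0, s, h, c => by
      constructor
      · intro _ i b hb; exact absurd hb (by simp [pa])
      · intro _; exact Subsingleton.elim _ _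
  | m+1, s, h, c => by
      have h' : (s.1 : ℕ) < n := by omega
      have h1 : ((btChild s h' false).1 : ℕ) + m ≤ n := by simp only [btChild_fst]; omega
      have h2 : ((btChild s h' true).1 : ℕ) + m ≤ n := by simp only [btChild_fst]; omega
      obtain ⟨⟨b1, c1⟩, ⟨b2, c2⟩⟩ := c
      have hpa : ∀ i, pa n (m+1) s h ((b1, c1), (b2, c2)) i =
          (if i = btChild s h' false then some b1
           else if i = btChild s h' true then some b2
           else (pa n m (btChild s h' false) h1 c1 i).orElse
                (fun _ => pa n m (btChild s h' true) h2 c2 i)) := fun i => rfl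
      have he : extract n ω (m+1) s h =
          (((ω (btChild s h' false), extract n ω m (btChild s h' false) h1)),
           ((ω (btChild s h' true), extract n ω m (btChild s h' true) h2))) := rfl
      rw [he]
      have hrl : btChild s h' true ≠ btChild s h' false :=
        fun e => btChild_ne s h' h' e.symm
      constructor
      · intro heq
        have e1 : ω (btChild s h' false) = b1 := congrArg (fun z : Cfg (m+1) => z.1.1) heq
        have e2 : extract n ω m (btChild s h' false) h1 = c1 :=
          congrArg (fun z : Cfg (m+1) => z.1.2) heq
        have e3 : ω (btChild s h' true) = b2 := congrArg (fun z : Cfg (m+1) => z.2.1) heq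
        have e4 : extract n ω m (btChild s h' true) h2 = c2 :=
          congrArg (fun z : Cfg (m+1) => z.2.2) heq
        have hc1 : Compat ω (pa n m (btChild s h' false) h1 c1) :=
          (extract_eq_iff ω m _ h1 c1).1 e2
        have hc2 : Compat ω (pa n m (btChild s h' true) h2 c2) :=
          (extract_eq_iff ω m _ h2 c2).1 e4
        intro i b hb
        rw [hpa i] at hb
        by_cases hil : i = btChild s h' false
        · rw [if_pos hil] at hb
          have hb' : b1 = b := Option.some.inj hb
          rw [hil, e1, hb']
        · rw [if_neg hil] at hb
          by_cases hir : i = btChild s h' true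
          · rw [if_pos hir] at hb
            have hb' : b2 = b := Option.some.inj hb
            rw [hir, e3, hb']
          · rw [if_neg hir] at hb
            cases hl : pa n m (btChild s h' false) h1 c1 i with
            | some b0 =>
                rw [hl] at hb
                have hb' : some b0 = some b := hb
                rw [← Option.some.inj hb']
                exact hc1 i b0 hl
            | none =>
                rw [hl] at hb
                have hb' : pa n m (btChild s h' true) h2 c2 i = some b := hb
                exact hc2 i b hb'
      · intro hC
        have e1 : ω (btChild s h' false) = b1 := hC _ b1 (by rw [hpa, if_pos rfl])
        have e3 : ω (btChild s h' true) = b2 :=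
          hC _ b2 (by rw [hpa, if_neg hrl, if_pos rfl])
        have hc1 : Compat ω (pa n m (btChild s h' false) h1 c1) := by
          intro i b hb
          apply hC i b
          rw [hpa i]
          have hEl := pa_dom m _ h1 c1 i b hb
          have hfst : ((btChild s h' false).1 : ℕ) = (s.1:ℕ)+1 := rfl
          have hfst2 : ((btChild s h' true).1 : ℕ) = (s.1:ℕ)+1 := rfl
          have hil : i ≠ btChild s h' false := by
            intro e; rw [e] at hEl; exact ext_irrefl hEl
          have hir : i ≠ btChild s h' true := by
            intro e
            have hlt := hEl.1
            rw [e] at hlt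
            omega
          rw [if_neg hil, if_neg hir, hb]
          rfl
        have hc2 : Compat ω (pa n m (btChild s h' true) h2 c2) := by
          intro i b hb
          apply hC i b
          rw [hpa i]
          have hEr := pa_dom m _ h2 c2 i b hb
          have hfst : ((btChild s h' false).1 : ℕ) = (s.1:ℕ)+1 := rfl
          have hfst2 : ((btChild s h' true).1 : ℕ) = (s.1:ℕ)+1 := rfl
          have hir : i ≠ btChild s h' true := by
            intro e; rw [e] at hEr; exact ext_irrefl hEr
          have hil : i ≠ btChild s h' false := by
            intro e
            have hlt := hEr.1
            rw [e] at hlt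
            omega
          rw [if_neg hil, if_neg hir]
          cases hl : pa n m (btChild s h' false) h1 c1 i with
          | some b0 => exact absurd (pa_disj hl hb) (fun f => f)
          | none => exact hb
        have e2 : extract n ω m (btChild s h' false) h1 = c1 :=
          (extract_eq_iff ω m _ h1 c1).2 hc1
        have e4 : extract n ω m (btChild s h' true) h2 = c2 :=
          (extract_eq_iff ω m _ h2 c2).2 hc2
        rw [e1, e2, e3, e4]

/-- Weight of an optional prescribed value. -/
noncomputable def owt (q' : ℝ≥0∞) : Option Bool → ℝ≥0∞
  | none => 1
  | some b => wB q' b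

lemma pa_weight {n : ℕ} (q' : ℝ≥0∞) :
    ∀ m (s : BTNode n) (h : (s.1:ℕ) + m ≤ n) (c : Cfg m),
      ∏ i : BTNode n, owt q' (pa n m s h c i) = W q' m c
  | 0, s, h, c => by
      simp [pa, owt]
      rfl
  | m+1, s, h, c => by
      have h' : (s.1 : ℕ) < n := by omega
      have h1 : ((btChild s h' false).1 : ℕ) + m ≤ n := by simp only [btChild_fst]; omega
      have h2 : ((btChild s h' true).1 : ℕ) + m ≤ n := by simp only [btChild_fst]; omega
      obtain ⟨⟨b1, c1⟩, ⟨b2, c2⟩⟩ := c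
      have hfst : ((btChild s h' false).1 : ℕ) = (s.1:ℕ)+1 := rfl
      have hfst2 : ((btChild s h' true).1 : ℕ) = (s.1:ℕ)+1 := rfl
      have hrl : btChild s h' true ≠ btChild s h' false :=
        fun e => btChild_ne s h' h' e.symm
      have key : ∀ i : BTNode n, owt q' (pa n (m+1) s h ((b1, c1), (b2, c2)) i) =
          ((if i = btChild s h' false then wB q' b1 else 1)
            * (if i = btChild s h' true then wB q' b2 else 1))
          * (owt q' (pa n m (btChild s h' false) h1 c1 i)
            * owt q' (pa n m (btChild s h' true) h2 c2 i)) := by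
        intro i
        have hpa : pa n (m+1) s h ((b1, c1), (b2, c2)) i =
            (if i = btChild s h' false then some b1
             else if i = btChild s h' true then some b2
             else (pa n m (btChild s h' false) h1 c1 i).orElse
                  (fun _ => pa n m (btChild s h' true) h2 c2 i)) := rfl
        rw [hpa]
        by_cases hil : i = btChild s h' false
        · rw [if_pos hil, if_pos hil, if_neg (by rw [hil]; exact Ne.symm hrl)]
          have hl0 : pa n m (btChild s h' false) h1 c1 i = none := by
            cases hl : pa n m (btChild s h' false) h1 c1 i with
            | none => rfl
            | some b0 =>
                have := pa_dom m _ h1 c1 i b0 hl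
                rw [hil] at this
                exact absurd this ext_irrefl
          have hr0 : pa n m (btChild s h' true) h2 c2 i = none := by
            cases hl : pa n m (btChild s h' true) h2 c2 i with
            | none => rfl
            | some b0 =>
                have hE := pa_dom m _ h2 c2 i b0 hl
                have hlt := hE.1
                rw [hil] at hlt
                omega
          rw [hl0, hr0]
          show wB q' b1 = wB q' b1 * 1 * (1 * 1)
          ring
        · rw [if_neg hil, if_neg hil]
          by_cases hir : i = btChild s h' true
          · rw [if_pos hir, if_pos hir]
            have hl0 : pa n m (btChild s h' false) h1 c1 i = none := by
              cases hl : pa n m (btChild s h' false) h1 c1 i with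
              | none => rfl
              | some b0 =>
                  have hE := pa_dom m _ h1 c1 i b0 hl
                  have hlt := hE.1
                  rw [hir] at hlt
                  omega
            have hr0 : pa n m (btChild s h' true) h2 c2 i = none := by
              cases hl : pa n m (btChild s h' true) h2 c2 i with
              | none => rfl
              | some b0 =>
                  have := pa_dom m _ h2 c2 i b0 hl
                  rw [hir] at this
                  exact absurd this ext_irrefl
            rw [hl0, hr0]
            show wB q' b2 = 1 * wB q' b2 * (1 * 1)
            ring
          · rw [if_neg hir, if_neg hir]
            cases hl : pa n m (btChild s h' false) h1 c1 i with
            | some b0 =>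
                have hr0 : pa n m (btChild s h' true) h2 c2 i = none := by
                  cases hr : pa n m (btChild s h' true) h2 c2 i with
                  | none => rfl
                  | some b0' => exact absurd (pa_disj hl hr) (fun f => f)
                rw [hr0]
                show owt q' (some b0) = 1 * 1 * (owt q' (some b0) * owt q' none)
                show owt q' (some b0) = 1 * 1 * (owt q' (some b0) * 1)
                ring
            | none =>
                show owt q' (pa n m (btChild s h' true) h2 c2 i)
                  = 1 * 1 * (owt q' none * owt q' (pa n m (btChild s h' true) h2 c2 i))
                show owt q' (pa n m (btChild s h' true) h2 c2 i)
                  = 1 * 1 * (1 * owt q' (pa n m (btChild s h' true) h2 c2 i))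
                ring
      rw [Finset.prod_congr rfl (fun i _ => key i)]
      rw [Finset.prod_mul_distrib, Finset.prod_mul_distrib, Finset.prod_mul_distrib]
      rw [Finset.prod_ite_eq' Finset.univ (btChild s h' false) (fun _ => wB q' b1)]
      rw [Finset.prod_ite_eq' Finset.univ (btChild s h' true) (fun _ => wB q' b2)]
      rw [pa_weight q' m _ h1 c1, pa_weight q' m _ h2 c2]
      simp only [Finset.mem_univ, if_pos]
      show _ = (wB q' b1 * W q' m c1) * (wB q' b2 * W q' m c2)
      ring


lemma perc_compat {n : ℕ} (q : ℝ) (hq1 : q ≤ 1) (v : BTNode n → Option Bool) :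
    perc (BTNode n) q {ω | Compat ω v} = ∏ i : BTNode n, owt (ENNReal.ofReal q) (v i) := by
  have hmin : min (Real.toNNReal q) 1 = Real.toNNReal q :=
    min_eq_left (Real.toNNReal_le_one.2 hq1)
  have hset : {ω : BTNode n → Bool | Compat ω v} =
      Set.pi Set.univ (fun i => (v i).elim Set.univ (fun b => {b})) := by
    ext ω
    simp only [Set.mem_setOf_eq, Set.mem_pi, Set.mem_univ, forall_true_left]
    constructor
    · intro hc i
      cases hv : v i with
      | none => simp
      | some b => simpa using hc i b hv
    · intro hp i b hv
      have h2 := hp i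
      rw [hv] at h2
      simpa using h2
  rw [hset]
  unfold perc
  rw [Measure.pi_pi]
  refine Finset.prod_congr rfl fun i _ => ?_
  cases hv : v i with
  | none =>
      show bern q Set.univ = owt (ENNReal.ofReal q) none
      rw [measure_univ]
      rfl
  | some b =>
      show bern q {b} = owt (ENNReal.ofReal q) (some b)
      unfold bern
      rw [PMF.toMeasure_apply_singleton _ _ (measurableSet_singleton b)]
      rw [PMF.bernoulli_apply, hmin]
      cases b
      · simp [owt, wB, ENNReal.ofReal, ENNReal.coe_sub]
      · simp [owt, wB, ENNReal.ofReal]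

lemma lintegral_extract {n : ℕ} (q : ℝ) (hq1 : q ≤ 1) (m : ℕ) (s : BTNode n)
    (h : (s.1:ℕ) + m ≤ n) (g : Cfg m → ℝ≥0∞) :
    ∫⁻ ω, g (extract n ω m s h) ∂(perc (BTNode n) q) = Ex (ENNReal.ofReal q) m g := by
  have hme : Measurable (fun ω : BTNode n → Bool => extract n ω m s h) :=
    measurable_of_countable _
  have hg : Measurable g := measurable_of_countable _
  rw [← lintegral_map hg hme, lintegral_fintype]
  unfold Ex
  refine Finset.sum_congr rfl fun c _ => ?_
  rw [Measure.map_apply hme (measurableSet_singleton c)]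
  have hpre : (fun ω : BTNode n → Bool => extract n ω m s h) ⁻¹' {c} =
      {ω | Compat ω (pa n m s h c)} := by
    ext ω
    simp only [Set.mem_preimage, Set.mem_singleton_iff, Set.mem_setOf_eq]
    exact extract_eq_iff ω m s h c
  rw [hpre, perc_compat q hq1, pa_weight]
  exact mul_comm _ _

end DFSAux


/-- **DFS in a supercritical Galton–Watson binary tree is linear.** If each of
the two children of every node is present independently with probability
`q > 1/2`, then the expected number of edges explored by depth-first search
before finding a root-to-depth-`n` path, conditioned on the root's cluster
reaching depth `n`, is at most `C(q)·n`. -/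

theorem dfs_supercritical_linear (q : ℝ) (hq : 1 / 2 < q) (hq1 : q ≤ 1) :
    ∃ C : ℝ, 0 < C ∧ ∀ n : ℕ, 1 ≤ n →
      ∫⁻ ω, (dfsCount n ω : ℝ≥0∞)
          ∂((perc (BTNode n) q)[|{ω | dfsFound n ω}])
        ≤ ENNReal.ofReal (C * n) := by
  classical
  open DFSAux in
  have hq0 : (0:ℝ) < q := by linarith
  set q' : ℝ≥0∞ := ENNReal.ofReal q with hq'def
  have hq'1 : q' ≤ 1 := ENNReal.ofReal_le_one.2 hq1
  have hq'ne0 : q' ≠ 0 := (ENNReal.ofReal_pos.2 hq0).ne'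
  set ρr : ℝ := (1 - q) / q with hρrdef
  set Br : ℝ := 2 / (2 * q - 1) with hBrdef
  set θr : ℝ := 1 - ρr ^ 2 with hθrdef
  have h2q : (0:ℝ) < 2 * q - 1 := by linarith
  have hBr0 : 0 < Br := div_pos two_pos h2q
  have hρr0 : 0 ≤ ρr := div_nonneg (by linarith) hq0.le
  have hρr1 : ρr < 1 := by rw [hρrdef, div_lt_one hq0]; linarith
  have hθr : 0 < θr := by rw [hθrdef]; nlinarith
  have h1q : (1 : ℝ≥0∞) - q' = ENNReal.ofReal (1 - q) := by
    rw [ENNReal.ofReal_sub _ hq0.le, ENNReal.ofReal_one]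
  have hρ : q' * ENNReal.ofReal ρr = 1 - q' := by
    rw [hq'def, ← ENNReal.ofReal_mul hq0.le,
      show q * ρr = 1 - q by rw [hρrdef]; field_simp, h1q]
  have hB : 2 * (1 - q') * ENNReal.ofReal Br + 2 ≤ ENNReal.ofReal Br := by
    rw [h1q, show (2:ℝ≥0∞) = ENNReal.ofReal 2 from (ENNReal.ofReal_ofNat 2).symm,
      ← ENNReal.ofReal_mul (by norm_num), ← ENNReal.ofReal_mul (by linarith),
      ← ENNReal.ofReal_add (mul_nonneg (by linarith) hBr0.le) (by norm_num)]
    apply ENNReal.ofReal_le_ofReal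
    have hBid : 2 * (1 - q) * Br + 2 = Br := by
      rw [hBrdef]; field_simp; ring
    linarith
  refine ⟨(Br + 3) / θr, by positivity, ?_⟩
  intro n hn
  obtain ⟨m, rfl⟩ : ∃ m, n = m + 1 := ⟨n - 1, by omega⟩
  have hroot : (((btRoot (m+1)).1 : Fin (m+2)) : ℕ) + (m+1) ≤ m+1 := by
    show 0 + (m+1) ≤ m+1
    omega
  have hSmeas : MeasurableSet {ω : BTNode (m+1) → Bool | dfsFound (m+1) ω} :=
    (Set.to_countable _).measurableSet
  -- pointwise identifications
  have hpt : ∀ ω : BTNode (m+1) → Bool,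
      ({ω : BTNode (m+1) → Bool | dfsFound (m+1) ω}).indicator (fun _ => (1:ℝ≥0∞)) ω
        = cSf (m+1) (extract (m+1) ω (m+1) (btRoot (m+1)) hroot) := by
    intro ω
    rw [Set.indicator_apply]
    unfold cSf
    by_cases hA : (mdfs (m+1) (extract (m+1) ω (m+1) (btRoot (m+1)) hroot)).2 = true
    · have hd : ω ∈ {ω : BTNode (m+1) → Bool | dfsFound (m+1) ω} := by
        show (dfs (m+1) ω (m+1) (btRoot (m+1))).2 = true
        rw [dfs_eq ω (m+1) (btRoot (m+1)) hroot]
        exact hA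
      rw [if_pos hd, if_pos hA]
    · have hd : ω ∉ {ω : BTNode (m+1) → Bool | dfsFound (m+1) ω} := by
        show ¬ (dfs (m+1) ω (m+1) (btRoot (m+1))).2 = true
        rw [dfs_eq ω (m+1) (btRoot (m+1)) hroot]
        exact hA
      rw [if_neg hd, if_neg hA]
  have hptA : ∀ ω : BTNode (m+1) → Bool,
      ({ω : BTNode (m+1) → Bool | dfsFound (m+1) ω}).indicator
          (fun ω => ((dfsCount (m+1) ω : ℕ) : ℝ≥0∞)) ω
        = cAf (m+1) (extract (m+1) ω (m+1) (btRoot (m+1)) hroot) := by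
    intro ω
    rw [Set.indicator_apply]
    unfold cAf
    by_cases hA : (mdfs (m+1) (extract (m+1) ω (m+1) (btRoot (m+1)) hroot)).2 = true
    · have hd : ω ∈ {ω : BTNode (m+1) → Bool | dfsFound (m+1) ω} := by
        show (dfs (m+1) ω (m+1) (btRoot (m+1))).2 = true
        rw [dfs_eq ω (m+1) (btRoot (m+1)) hroot]
        exact hA
      rw [if_pos hd, if_pos hA]
      show ((dfsCount (m+1) ω : ℕ) : ℝ≥0∞) = _
      unfold dfsCount
      rw [dfs_eq ω (m+1) (btRoot (m+1)) hroot]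
    · have hd : ω ∉ {ω : BTNode (m+1) → Bool | dfsFound (m+1) ω} := by
        show ¬ (dfs (m+1) ω (m+1) (btRoot (m+1))).2 = true
        rw [dfs_eq ω (m+1) (btRoot (m+1)) hroot]
        exact hA
      rw [if_neg hd, if_neg hA]
  -- measure of the success event
  have hμS : Ex q' (m+1) (cSf (m+1))
      = perc (BTNode (m+1)) q {ω : BTNode (m+1) → Bool | dfsFound (m+1) ω} := by
    rw [← lintegral_extract q hq1 (m+1) (btRoot (m+1)) hroot (cSf (m+1))]
    rw [← lintegral_congr hpt]
    rw [lintegral_indicator_const hSmeas, one_mul]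
  have hIA : ∫⁻ ω, ({ω : BTNode (m+1) → Bool | dfsFound (m+1) ω}).indicator
        (fun ω => ((dfsCount (m+1) ω : ℕ) : ℝ≥0∞)) ω ∂(perc (BTNode (m+1)) q)
      = Ex q' (m+1) (cAf (m+1)) := by
    rw [lintegral_congr hptA, lintegral_extract q hq1]
  have hcond : (perc (BTNode (m+1)) q)[|{ω : BTNode (m+1) → Bool | dfsFound (m+1) ω}]
      = (perc (BTNode (m+1)) q {ω : BTNode (m+1) → Bool | dfsFound (m+1) ω})⁻¹
        • (perc (BTNode (m+1)) q).restrict {ω : BTNode (m+1) → Bool | dfsFound (m+1) ω} := rfl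
  rw [hcond, lintegral_smul_measure, ← lintegral_indicator hSmeas, hIA]
  have hSlow : ENNReal.ofReal θr
      ≤ perc (BTNode (m+1)) q {ω : BTNode (m+1) → Bool | dfsFound (m+1) ω} := by
    rw [← hμS]
    refine le_trans (le_of_eq ?_) (S_ge hq'1 hq'ne0 hρ m)
    rw [← ENNReal.ofReal_mul hρr0, hθrdef, sq,
      ENNReal.ofReal_sub _ (by positivity), ENNReal.ofReal_one]
  have hAup : Ex q' (m+1) (cAf (m+1)) ≤ ENNReal.ofReal ((Br + 3) * ((m:ℝ)+1)) := by
    refine le_trans (A_le hq'1 hB (m+1)) (le_of_eq ?_)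
    rw [ENNReal.ofReal_mul (by positivity), ENNReal.ofReal_add hBr0.le (by norm_num),
      ENNReal.ofReal_ofNat]
    congr 1
    rw [show (m:ℝ)+1 = ((m+1 : ℕ) : ℝ) by push_cast; ring, ENNReal.ofReal_natCast]
  calc (perc (BTNode (m+1)) q {ω : BTNode (m+1) → Bool | dfsFound (m+1) ω})⁻¹
        * Ex q' (m+1) (cAf (m+1))
      ≤ (ENNReal.ofReal θr)⁻¹ * ENNReal.ofReal ((Br + 3) * ((m:ℝ)+1)) :=
        mul_le_mul' (ENNReal.inv_le_inv' hSlow) hAup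
    _ = ENNReal.ofReal ((Br + 3) / θr * ((m+1 : ℕ) : ℝ)) := by
        rw [← ENNReal.ofReal_inv_of_pos hθr,
          ← ENNReal.ofReal_mul (by positivity)]
        congr 1
        push_cast
        ring
end

section
/- In the Erdős–Rényi random graph G(n, p) with p = c/n, c > 1, and vertices u, v with Pr[u ∼ v] ≥ a > 0, any local routing algorithm from u to v satisfies: for every k, Pr[the algorithm succeeds within k probes | u ∼ v] = O(√k / n). Consequently the expected number of probes conditioned on u ∼ v is Ω(n²). -/
open MeasureTheory ProbabilityTheory
open scoped ENNReal

variable {V : Type*}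

/-! ### Auxiliary lemmas -/

open scoped Classical


namespace RouteAux

variable {A : Alg V} {ω ω' : Sym2 V → Bool}

lemma hist_record (A : Alg V) (ω : Sym2 V → Bool) :
    ∀ t, ∀ q ∈ A.hist ω t, q.2 = ω q.1 := by
  intro t
  induction t with
  | zero => simp [Alg.hist]
  | succ t ih =>
    intro q hq
    rcases List.mem_cons.1 hq with h | h
    · subst h; rfl
    · exact ih q h

lemma hist_mono (A : Alg V) (ω : Sym2 V → Bool) {s t : ℕ} (hst : s ≤ t) :
    ∀ q ∈ A.hist ω s, q ∈ A.hist ω t := by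
  induction t with
  | zero =>
    have : s = 0 := Nat.le_zero.1 hst
    subst this; exact fun q hq => hq
  | succ t ih =>
    rcases Nat.lt_or_ge s (t+1) with h | h
    · intro q hq
      exact List.mem_cons_of_mem _ (ih (by omega) q hq)
    · have : s = t + 1 := le_antisymm hst h
      subst this; exact fun q hq => hq

lemma hist_agree (A : Alg V) (ω ω' : Sym2 V → Bool) :
    ∀ t, (∀ e ∈ (A.hist ω t).map Prod.fst, ω' e = ω e) → A.hist ω' t = A.hist ω t := by
  intro t
  induction t with
  | zero => intro _; rfl
  | succ t ih =>
    intro h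
    have hsub : ∀ e ∈ (A.hist ω t).map Prod.fst, ω' e = ω e := by
      intro e he
      exact h e (by simp only [Alg.hist, List.map_cons, List.mem_cons]; right; exact he)
    have ht := ih hsub
    have hhead : ω' (A.next (A.hist ω t)) = ω (A.next (A.hist ω t)) :=
      h _ (by simp [Alg.hist])
    simp only [Alg.hist, ht, hhead]

lemma fiber_eq (A : Alg V) (ω₀ : Sym2 V → Bool) (t : ℕ) :
    {ω : Sym2 V → Bool | A.hist ω t = A.hist ω₀ t} =
      {ω | ∀ e ∈ (A.hist ω₀ t).map Prod.fst, ω e = ω₀ e} := by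
  ext ω
  simp only [Set.mem_setOf_eq]
  constructor
  · intro h e he
    rcases List.mem_map.1 he with ⟨q, hq, rfl⟩
    have h1 := hist_record A ω₀ t q hq
    have h2 := hist_record A ω t q (by rw [h]; exact hq)
    rw [← h1, ← h2]
  · intro h
    exact hist_agree A ω₀ ω t h

lemma mem_probedOpen (A : Alg V) (ω : Sym2 V → Bool) (t : ℕ) (e : Sym2 V) :
    e ∈ A.probedOpen ω t ↔ e ∈ (A.hist ω t).map Prod.fst ∧ ω e = true := by
  constructor
  · intro h
    refine ⟨List.mem_map.2 ⟨(e, true), h, rfl⟩, ?_⟩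
    exact (hist_record A ω t _ h).symm
  · rintro ⟨h1, h2⟩
    rcases List.mem_map.1 h1 with ⟨q, hq, rfl⟩
    have hr := hist_record A ω t q hq
    show (q.1, true) ∈ A.hist ω t
    have : q = (q.1, true) := by
      rw [Prod.ext_iff]; exact ⟨rfl, by rw [hr, h2]⟩
    rw [← this]; exact hq

lemma probedOpen_mono (A : Alg V) (ω : Sym2 V → Bool) {s t : ℕ} (hst : s ≤ t) :
    A.probedOpen ω s ⊆ A.probedOpen ω t :=
  fun _ h => hist_mono A ω hst _ h

lemma last_edge {G : SimpleGraph V} {y x : V} (w : G.Walk y x) :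
    x = y ∨ ∃ e ∈ w.edges, x ∈ e := by
  induction w with
  | nil => left; rfl
  | @cons a b c h p ih =>
    rcases ih with rfl | ⟨e, he, hx⟩
    · right
      exact ⟨s(a, c), by simp, Sym2.mem_mk_right a c⟩
    · right
      exact ⟨e, by simp [he], hx⟩

lemma reached_cases {G : SimpleGraph V} {u x : V} {F : Set (Sym2 V)}
    (hx : x ∈ reachedFrom G u F) : x = u ∨ ∃ e ∈ F, x ∈ e := by
  rcases hx with ⟨w, hw⟩
  rcases last_edge w with h | ⟨e, he, hxe⟩
  · left; exact h
  · right; exact ⟨e, hw e he, hxe⟩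

lemma reached_mono {G : SimpleGraph V} {u : V} {F F' : Set (Sym2 V)} (h : F ⊆ F') :
    reachedFrom G u F ⊆ reachedFrom G u F' := by
  rintro x ⟨w, hw⟩
  exact ⟨w, fun e he => h (hw e he)⟩

lemma self_reached {G : SimpleGraph V} {u : V} {F : Set (Sym2 V)} :
    u ∈ reachedFrom G u F :=
  ⟨SimpleGraph.Walk.nil, by simp⟩

/-- every endpoint of every probed-open edge is reached. -/
lemma open_endpoints {A : Alg V} {u : V} (hloc : A.IsLocal ⊤ u) (ω : Sym2 V → Bool) :
    ∀ t, ∀ e ∈ A.probedOpen ω t, ∀ x ∈ e, x ∈ reachedFrom ⊤ u (A.probedOpen ω t) := by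
  intro t
  induction t with
  | zero => intro e he; exact absurd he (by simp [Alg.probedOpen, Alg.hist])
  | succ t ih =>
    intro e he x hx
    have hsub : A.probedOpen ω t ⊆ A.probedOpen ω (t+1) := probedOpen_mono A ω (Nat.le_succ t)
    rcases List.mem_cons.1 he with h | h
    · -- e = next edge, open
      have he' : e = A.next (A.hist ω t) := congrArg Prod.fst h
      have hopen : ω (A.next (A.hist ω t)) = true := (congrArg Prod.snd h).symm
      obtain ⟨y, hyU, hye⟩ := hloc ω t
      subst he'
      by_cases hxy : x = y
      · subst hxy
        exact reached_mono hsub hyU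
      · have hedge : A.next (A.hist ω t) = s(y, x) :=
          ((Sym2.mem_and_mem_iff (Ne.symm hxy)).1 ⟨hye, hx⟩)
        rcases hyU with ⟨w, hw⟩
        have hadj : (⊤ : SimpleGraph V).Adj y x := by
          simp only [SimpleGraph.top_adj]
          exact fun h => hxy h.symm
        refine ⟨w.concat hadj, ?_⟩
        intro e hee
        rw [SimpleGraph.Walk.edges_concat, List.concat_eq_append, List.mem_append] at hee
        rcases hee with hee | hee
        · exact hsub (hw e hee)
        · have : e = s(y, x) := by simpa using hee
          rw [this, ← hedge]
          show (A.next (A.hist ω t), true) ∈ A.hist ω (t+1)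
          rw [show (Alg.hist A ω (t+1)) = (A.next (A.hist ω t), ω (A.next (A.hist ω t))) :: A.hist ω t from rfl, hopen]
          exact List.mem_cons_self
    · exact reached_mono hsub (ih e h x hx)


open scoped Classical

lemma meas_all {α : Type*} [Fintype α] (S : Set (α → Bool)) : MeasurableSet S :=
  S.toFinite.measurableSet

lemma measurable_all {α β : Type*} [Fintype α] [MeasurableSpace β]
    (f : (α → Bool) → β) : Measurable f :=
  fun _ _ => meas_all _

instance percProb (E : Type*) [Fintype E] (p : ℝ) : IsProbabilityMeasure (perc E p) := by
  unfold perc; infer_instance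

lemma bern_true (p : ℝ) : bern p {true} = min (ENNReal.ofReal p) 1 := by
  unfold bern
  rw [PMF.toMeasure_apply_singleton _ _ (measurableSet_singleton _), PMF.bernoulli_apply]
  simp [ENNReal.ofReal]

lemma cyl_meas {E : Type*} [Fintype E] [DecidableEq E] (p : ℝ) (F : Finset E) (σ : E → Bool) :
    perc E p {ω | ∀ e ∈ F, ω e = σ e} = ∏ e ∈ F, bern p {σ e} := by
  have hset : {ω : E → Bool | ∀ e ∈ F, ω e = σ e} =
      Set.univ.pi (fun e => if e ∈ F then ({σ e} : Set Bool) else Set.univ) := by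
    ext ω
    simp only [Set.mem_setOf_eq, Set.mem_pi, Set.mem_univ, forall_true_left]
    constructor
    · intro h e
      by_cases he : e ∈ F <;> simp [he, h e]
    · intro h e he
      have := h e; simp [he] at this; exact this
  rw [hset]
  show Measure.pi (fun _ => bern p) _ = _
  rw [Measure.pi_pi]
  rw [show (∏ e : E, bern p (if e ∈ F then ({σ e} : Set Bool) else Set.univ)) =
      ∏ e : E, (if e ∈ F then bern p {σ e} else 1) from
    Finset.prod_congr rfl (fun e _ => by
      by_cases he : e ∈ F
      · simp [he]
      · simp only [if_neg he]; exact measure_univ)]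
  rw [Finset.prod_ite_mem, Finset.univ_inter]

lemma cyl_extra {E : Type*} [Fintype E] [DecidableEq E] (p : ℝ) (F : Finset E)
    (σ : E → Bool) (e₀ : E) (he₀ : e₀ ∉ F) :
    perc E p {ω | (∀ e ∈ F, ω e = σ e) ∧ ω e₀ = true} =
      bern p {true} * perc E p {ω | ∀ e ∈ F, ω e = σ e} := by
  have hset : {ω : E → Bool | (∀ e ∈ F, ω e = σ e) ∧ ω e₀ = true} =
      {ω | ∀ e ∈ insert e₀ F, ω e = Function.update σ e₀ true e} := by
    ext ω
    simp only [Set.mem_setOf_eq, Finset.mem_insert]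
    constructor
    · rintro ⟨h1, h2⟩ e he
      rcases he with rfl | he
      · simp [Function.update_self, h2]
      · rw [Function.update_of_ne (fun hc => he₀ (by rw [← hc]; exact he))]
        exact h1 e he
    · intro h
      constructor
      · intro e he
        have := h e (Or.inr he)
        rwa [Function.update_of_ne (fun hc => he₀ (by rw [← hc]; exact he))] at this
      · have := h e₀ (Or.inl rfl)
        rwa [Function.update_self] at this
  rw [hset, cyl_meas, Finset.prod_insert he₀, Function.update_self, cyl_meas]
  congr 1
  refine Finset.prod_congr rfl (fun e he => ?_)
  rw [Function.update_of_ne (fun hc => he₀ (by rw [← hc]; exact he))]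



variable [DecidableEq V]

def openE' (h : List (Sym2 V × Bool)) : Finset (Sym2 V) :=
  ((h.filter (fun q => q.2 = true)).map Prod.fst).toFinset

lemma mem_openE' (A : Alg V) (ω : Sym2 V → Bool) (t : ℕ) (e : Sym2 V) :
    e ∈ openE' (A.hist ω t) ↔ e ∈ A.probedOpen ω t := by
  simp only [openE', List.mem_toFinset, List.mem_map, List.mem_filter]
  constructor
  · rintro ⟨q, ⟨hq, h2⟩, h1⟩
    have hr := hist_record A ω t q hq
    have : q = (e, true) := by
      rw [Prod.ext_iff]
      exact ⟨h1, by simpa using h2⟩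
    show (e, true) ∈ A.hist ω t
    rw [← this]
    exact hq
  · intro h
    exact ⟨(e, true), ⟨h, by simp⟩, rfl⟩

lemma openE'_mono (A : Alg V) (ω : Sym2 V → Bool) {s t : ℕ} (hst : s ≤ t) :
    openE' (A.hist ω s) ⊆ openE' (A.hist ω t) := by
  intro e he
  rw [mem_openE'] at he ⊢
  exact probedOpen_mono A ω hst he

lemma exists_crossing {P : ℕ → Prop} : ∀ {k : ℕ}, ¬ P 0 → P k → ∃ t < k, ¬ P t ∧ P (t+1) := by
  intro k
  induction k with
  | zero => intro h0 hk; exact absurd hk h0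
  | succ k ih =>
    intro h0 hk
    by_cases h : P k
    · obtain ⟨t, ht, h1, h2⟩ := ih h0 h
      exact ⟨t, by omega, h1, h2⟩
    · exact ⟨k, by omega, h, hk⟩

/-- The "dangerous step" predicate, as a function of the history. -/
def QH (A : Alg V) (u v : V) (m : ℕ) (h : List (Sym2 V × Bool)) : Prop :=
  v ∈ A.next h ∧ v ∉ reachedFrom ⊤ u {e | (e, true) ∈ h} ∧
    A.next h ∉ h.map Prod.fst ∧ (openE' h).card ≤ m

lemma succ_subset {A : Alg V} {u v : V} (hloc : A.IsLocal ⊤ u) (huv : u ≠ v) {k m : ℕ}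
    (ω : Sym2 V → Bool) (hs : A.SucceedsBy ⊤ ω u v k)
    (hX : (openE' (A.hist ω k)).card ≤ m) :
    ∃ t < k, QH A u v m (A.hist ω t) ∧ ω (A.next (A.hist ω t)) = true := by
  have hPO : {e : Sym2 V | (e, true) ∈ A.hist ω 0} = (∅ : Set (Sym2 V)) := by
    simp [Alg.hist]
  have h0 : v ∉ reachedFrom ⊤ u (A.probedOpen ω 0) := by
    intro hv
    rcases reached_cases hv with h | ⟨e, he, _⟩
    · exact huv h.symm
    · rw [show A.probedOpen ω 0 = (∅ : Set (Sym2 V)) from hPO] at he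
      exact he
  have hk : v ∈ reachedFrom ⊤ u (A.probedOpen ω k) := by
    rcases hs with ⟨w, hw⟩
    exact ⟨w, hw⟩
  obtain ⟨t, htk, h1, h2⟩ :=
    exists_crossing (P := fun t => v ∈ reachedFrom ⊤ u (A.probedOpen ω t)) h0 hk
  refine ⟨t, htk, ?_, ?_⟩
  · -- establish QH pieces
    rcases reached_cases h2 with h | ⟨e, he, hve⟩
    · exact absurd h.symm huv
    · -- e ∈ probedOpen (t+1); if in probedOpen t then v reached at t, contra
      have henew : e ∉ A.probedOpen ω t := by
        intro hc
        exact h1 (open_endpoints hloc ω t e hc v hve)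
      have hcons : (e, true) ∈ (A.next (A.hist ω t), ω (A.next (A.hist ω t))) :: A.hist ω t := he
      rcases List.mem_cons.1 hcons with hh | hh
      · have he1 : e = A.next (A.hist ω t) := congrArg Prod.fst hh
        have he2 : ω (A.next (A.hist ω t)) = true := (congrArg Prod.snd hh).symm
        have hfresh : A.next (A.hist ω t) ∉ (A.hist ω t).map Prod.fst := by
          intro hc
          have : A.next (A.hist ω t) ∈ A.probedOpen ω t :=
            (mem_probedOpen A ω t _).2 ⟨hc, he2⟩
          exact henew (he1 ▸ this)
        refine ⟨he1 ▸ hve, h1, hfresh, ?_⟩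
        calc (openE' (A.hist ω t)).card ≤ (openE' (A.hist ω k)).card :=
              Finset.card_le_card (openE'_mono A ω (le_of_lt htk))
          _ ≤ m := hX
      · exact absurd hh henew
  · -- openness of probed edge
    rcases reached_cases h2 with h | ⟨e, he, hve⟩
    · exact absurd h.symm huv
    · have henew : e ∉ A.probedOpen ω t := fun hc =>
        h1 (open_endpoints hloc ω t e hc v hve)
      rcases List.mem_cons.1 (show (e, true) ∈ _ :: A.hist ω t from he) with hh | hh
      · exact (congrArg Prod.snd hh).symm
      · exact absurd hh henew

lemma endpts_mem {x : V} {e : Sym2 V} (hx : x ∈ e) : x ∈ ({e.out.1, e.out.2} : Finset V) := by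
  have hmk : s(e.out.1, e.out.2) = e := by
    exact Quot.out_eq e
  rw [← hmk] at hx
  rcases Sym2.mem_iff.1 hx with h | h <;> simp [h]

lemma count_QH {A : Alg V} {u v : V} (hloc : A.IsLocal ⊤ u) (ω : Sym2 V → Bool) (k m : ℕ) :
    ((Finset.range k).filter (fun t => QH A u v m (A.hist ω t))).card ≤ 2 * m + 1 := by
  set Tk := (Finset.range k).filter (fun t => QH A u v m (A.hist ω t)) with hTk
  rcases Finset.eq_empty_or_nonempty Tk with h | hne
  · simp [h]
  set xf : ℕ → V := fun t => Classical.choose (hloc ω t) with hxf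
  have hspec : ∀ t, xf t ∈ reachedFrom ⊤ u (A.probedOpen ω t) ∧ xf t ∈ A.next (A.hist ω t) :=
    fun t => Classical.choose_spec (hloc ω t)
  set tm := Tk.max' hne with htm
  have htmQ : QH A u v m (A.hist ω tm) := (Finset.mem_filter.1 (Tk.max'_mem hne)).2
  -- next edges at distinct Q-times are distinct
  have hedge : ∀ t ∈ Tk, A.next (A.hist ω t) = s(xf t, v) := by
    intro t ht
    have hQ : QH A u v m (A.hist ω t) := (Finset.mem_filter.1 ht).2
    have hxv : xf t ≠ v := by
      intro hc
      exact hQ.2.1 (hc ▸ (hspec t).1)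
    exact (Sym2.mem_and_mem_iff hxv).1 ⟨(hspec t).2, hQ.1⟩
  have hinj : Set.InjOn xf Tk := by
    intro t ht t' ht' hxx
    by_contra hne'
    rcases Nat.lt_or_ge t t' with hlt | hge
    · -- next ω t ∈ hist t' edges, but fresh at t'
      have hQ' : QH A u v m (A.hist ω t') := (Finset.mem_filter.1 ht').2
      have hmem : A.next (A.hist ω t) ∈ (A.hist ω t').map Prod.fst := by
        refine List.mem_map.2 ⟨(A.next (A.hist ω t), ω (A.next (A.hist ω t))), ?_, rfl⟩
        exact hist_mono A ω (show t + 1 ≤ t' from hlt) _ (List.mem_cons_self)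
      have : A.next (A.hist ω t) = A.next (A.hist ω t') := by
        rw [hedge t ht, hedge t' ht', hxx]
      exact hQ'.2.2.1 (this ▸ hmem)
    · have hlt : t' < t := by omega
      have hQ : QH A u v m (A.hist ω t) := (Finset.mem_filter.1 ht).2
      have hmem : A.next (A.hist ω t') ∈ (A.hist ω t).map Prod.fst := by
        refine List.mem_map.2 ⟨(A.next (A.hist ω t'), ω (A.next (A.hist ω t'))), ?_, rfl⟩
        exact hist_mono A ω (show t' + 1 ≤ t from hlt) _ (List.mem_cons_self)
      have : A.next (A.hist ω t) = A.next (A.hist ω t') := by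
        rw [hedge t ht, hedge t' ht', hxx]
      exact hQ.2.2.1 (this ▸ hmem)
  set B : Finset V :=
    insert u ((openE' (A.hist ω tm)).biUnion fun e => ({e.out.1, e.out.2} : Finset V)) with hB
  have himg : ∀ t ∈ Tk, xf t ∈ B := by
    intro t ht
    have htle : t ≤ tm := Tk.le_max' t ht
    have hx : xf t ∈ reachedFrom ⊤ u (A.probedOpen ω tm) :=
      reached_mono (probedOpen_mono A ω htle) (hspec t).1
    rcases reached_cases hx with h | ⟨e, he, hxe⟩
    · simp [hB, h]
    · refine Finset.mem_insert_of_mem (Finset.mem_biUnion.2 ⟨e, ?_, endpts_mem hxe⟩)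
      exact (mem_openE' A ω tm e).2 he
  calc Tk.card = (Tk.image xf).card := (Finset.card_image_of_injOn hinj).symm
    _ ≤ B.card := Finset.card_le_card (fun x hx => by
        rcases Finset.mem_image.1 hx with ⟨t, ht, rfl⟩
        exact himg t ht)
    _ ≤ 1 + ((openE' (A.hist ω tm)).biUnion fun e => ({e.out.1, e.out.2} : Finset V)).card := by
        rw [hB]; exact (Finset.card_insert_le _ _).trans (by omega)
    _ ≤ 1 + (openE' (A.hist ω tm)).card * 2 := by
        have h1 := Finset.card_biUnion_le (s := openE' (A.hist ω tm))
          (t := fun e => ({e.out.1, e.out.2} : Finset V))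
        have h2 : ∑ e ∈ openE' (A.hist ω tm), ({e.out.1, e.out.2} : Finset V).card
            ≤ (openE' (A.hist ω tm)).card * 2 := by
          calc ∑ e ∈ openE' (A.hist ω tm), ({e.out.1, e.out.2} : Finset V).card
              ≤ ∑ _e ∈ openE' (A.hist ω tm), 2 :=
                Finset.sum_le_sum (fun e _ => (Finset.card_insert_le _ _).trans (by simp))
            _ = (openE' (A.hist ω tm)).card * 2 := by rw [Finset.sum_const, smul_eq_mul]
        omega
    _ ≤ 2 * m + 1 := by
        have := htmQ.2.2.2
        omega

end RouteAux

namespace RouteAux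

variable {V : Type*} [Fintype V] [DecidableEq V]

lemma step_bound (p : ℝ) (A : Alg V) (P : List (Sym2 V × Bool) → Prop) (t : ℕ) :
    perc (Sym2 V) p {ω | P (A.hist ω t) ∧ A.next (A.hist ω t) ∉ (A.hist ω t).map Prod.fst ∧
        ω (A.next (A.hist ω t)) = true}
      ≤ bern p {true} * perc (Sym2 V) p {ω | P (A.hist ω t)} := by
  classical
  set μ := perc (Sym2 V) p with hμ
  set f : (Sym2 V → Bool) → List (Sym2 V × Bool) := fun ω => A.hist ω t with hf
  set H : Finset (List (Sym2 V × Bool)) := Finset.univ.image f with hH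
  set H1 := H.filter (fun h => P h ∧ A.next h ∉ h.map Prod.fst) with hH1
  set H2 := H.filter (fun h => P h) with hH2
  have hfib : ∀ h ∈ H, ∀ ω₀, f ω₀ = h →
      f ⁻¹' {h} = {ω | ∀ e ∈ ((A.hist ω₀ t).map Prod.fst).toFinset, ω e = ω₀ e} := by
    intro h _ ω₀ hω₀
    ext ω
    simp only [Set.mem_preimage, Set.mem_singleton_iff, ← hω₀, Set.mem_setOf_eq,
      List.mem_toFinset]
    rw [show (f ω = f ω₀) ↔ ω ∈ {ω | A.hist ω t = A.hist ω₀ t} from Iff.rfl, fiber_eq]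
    rfl
  have hdisj1 : Set.PairwiseDisjoint (↑H1)
      (fun h => f ⁻¹' {h} ∩ {ω | ω (A.next h) = true}) := by
    intro h1 _ h2 _ hne
    refine Set.disjoint_left.2 ?_
    rintro ω ⟨hω1, _⟩ ⟨hω2, _⟩
    exact hne (hω1.symm.trans hω2)
  have hdisj2 : Set.PairwiseDisjoint (↑H2) (fun h => f ⁻¹' {h}) := by
    intro h1 _ h2 _ hne
    refine Set.disjoint_left.2 ?_
    rintro ω hω1 hω2
    exact hne ((Set.mem_singleton_iff.1 hω1).symm.trans (Set.mem_singleton_iff.1 hω2))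
  have hS1 : {ω | P (A.hist ω t) ∧ A.next (A.hist ω t) ∉ (A.hist ω t).map Prod.fst ∧
      ω (A.next (A.hist ω t)) = true} =
      ⋃ h ∈ H1, (f ⁻¹' {h} ∩ {ω | ω (A.next h) = true}) := by
    ext ω
    simp only [Set.mem_setOf_eq, Set.mem_iUnion, Set.mem_inter_iff, Set.mem_preimage,
      Set.mem_singleton_iff, exists_prop]
    constructor
    · rintro ⟨h1, h2, h3⟩
      exact ⟨f ω, Finset.mem_filter.2 ⟨Finset.mem_image.2 ⟨ω, Finset.mem_univ _, rfl⟩,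
        h1, h2⟩, rfl, h3⟩
    · rintro ⟨h, hh, heq, h3⟩
      have hP := (Finset.mem_filter.1 hh).2
      rw [← heq] at hP h3
      exact ⟨hP.1, hP.2, h3⟩
  have hS2 : {ω | P (A.hist ω t)} = ⋃ h ∈ H2, f ⁻¹' {h} := by
    ext ω
    simp only [Set.mem_setOf_eq, Set.mem_iUnion, Set.mem_preimage, Set.mem_singleton_iff,
      exists_prop]
    constructor
    · intro h1
      exact ⟨f ω, Finset.mem_filter.2 ⟨Finset.mem_image.2 ⟨ω, Finset.mem_univ _, rfl⟩, h1⟩, rfl⟩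
    · rintro ⟨h, hh, heq⟩
      have hP := (Finset.mem_filter.1 hh).2
      rw [← heq] at hP
      exact hP
  rw [hS1, hS2]
  rw [measure_biUnion_finset hdisj1 (fun _ _ => meas_all _),
    measure_biUnion_finset hdisj2 (fun _ _ => meas_all _)]
  rw [Finset.mul_sum]
  have hterm : ∀ h ∈ H1, μ (f ⁻¹' {h} ∩ {ω | ω (A.next h) = true}) =
      bern p {true} * μ (f ⁻¹' {h}) := by
    intro h hh
    have hmem : h ∈ H := (Finset.mem_filter.1 hh).1
    obtain ⟨ω₀, _, hω₀⟩ := Finset.mem_image.1 hmem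
    have hfresh : A.next h ∉ h.map Prod.fst := (Finset.mem_filter.1 hh).2.2
    have hfresh' : A.next h ∉ ((A.hist ω₀ t).map Prod.fst).toFinset := by
      rw [List.mem_toFinset]
      have : A.hist ω₀ t = h := hω₀
      rw [this]
      exact hfresh
    rw [hfib h hmem ω₀ hω₀]
    have : {ω : Sym2 V → Bool | ∀ e ∈ ((A.hist ω₀ t).map Prod.fst).toFinset, ω e = ω₀ e} ∩
        {ω | ω (A.next h) = true} =
        {ω | (∀ e ∈ ((A.hist ω₀ t).map Prod.fst).toFinset, ω e = ω₀ e) ∧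
          ω (A.next h) = true} := rfl
    rw [this, hμ]
    exact cyl_extra p _ ω₀ (A.next h) hfresh'
  calc ∑ h ∈ H1, μ (f ⁻¹' {h} ∩ {ω | ω (A.next h) = true})
      = ∑ h ∈ H1, bern p {true} * μ (f ⁻¹' {h}) := Finset.sum_congr rfl hterm
    _ ≤ ∑ h ∈ H2, bern p {true} * μ (f ⁻¹' {h}) := by
        refine Finset.sum_le_sum_of_subset ?_
        intro h hh
        rw [hH1, Finset.mem_filter] at hh
        exact Finset.mem_filter.2 ⟨hh.1, hh.2.1⟩
    _ = _ := rfl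


lemma openE'_cons (q : Sym2 V × Bool) (l : List (Sym2 V × Bool)) :
    openE' (q :: l) = if q.2 = true then insert q.1 (openE' l) else openE' l := by
  by_cases h : q.2 = true
  · simp [openE', List.filter_cons, h]
  · simp [openE', List.filter_cons, h]

lemma X_step (A : Alg V) (ω : Sym2 V → Bool) (t : ℕ) :
    (openE' (A.hist ω (t+1))).card ≤ (openE' (A.hist ω t)).card +
      (if (A.next (A.hist ω t) ∉ (A.hist ω t).map Prod.fst ∧
          ω (A.next (A.hist ω t)) = true) then 1 else 0) := by
  have hh : A.hist ω (t+1) =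
      (A.next (A.hist ω t), ω (A.next (A.hist ω t))) :: A.hist ω t := rfl
  rw [hh, openE'_cons]
  by_cases hop : ω (A.next (A.hist ω t)) = true
  · simp only [hop, if_true]
    by_cases hfr : A.next (A.hist ω t) ∉ (A.hist ω t).map Prod.fst
    · simp only [hfr, true_and, if_true]
      exact Finset.card_insert_le _ _
    · push_neg at hfr
      have hmem : A.next (A.hist ω t) ∈ openE' (A.hist ω t) := by
        rw [mem_openE']
        exact (mem_probedOpen A ω t _).2 ⟨hfr, hop⟩
      rw [Finset.insert_eq_self.2 hmem]
      simp
  · simp only [hop, if_false]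
    simp [hop]

lemma EX (p : ℝ) (A : Alg V) :
    ∀ k : ℕ, ∫⁻ ω, ((openE' (A.hist ω k)).card : ℝ≥0∞) ∂(perc (Sym2 V) p)
      ≤ k * bern p {true} := by
  intro k
  induction k with
  | zero => simp [Alg.hist, openE']
  | succ k ih =>
    have goalcast : ((k+1 : ℕ) : ℝ≥0∞) = (k:ℝ≥0∞)+1 := by push_cast; ring
    rw [goalcast]
    set μ := perc (Sym2 V) p with hμ
    set B : Set (Sym2 V → Bool) := {ω | True ∧ A.next (A.hist ω k) ∉ (A.hist ω k).map Prod.fst ∧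
      ω (A.next (A.hist ω k)) = true} with hB
    have hpt : ∀ ω, ((openE' (A.hist ω (k+1))).card : ℝ≥0∞) ≤
        ((openE' (A.hist ω k)).card : ℝ≥0∞) + B.indicator (fun _ => 1) ω := by
      intro ω
      have h1 := X_step A ω k
      have h2 : B.indicator (fun _ => 1) ω =
          (if (A.next (A.hist ω k) ∉ (A.hist ω k).map Prod.fst ∧
            ω (A.next (A.hist ω k)) = true) then (1:ℝ≥0∞) else 0) := by
        rw [Set.indicator_apply]
        by_cases h : ω ∈ B
        · rw [if_pos h, if_pos]
          exact (hB ▸ h).2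
        · rw [if_neg h, if_neg]
          intro hc
          exact h (hB ▸ ⟨trivial, hc⟩)
      rw [h2]
      by_cases h : A.next (A.hist ω k) ∉ (A.hist ω k).map Prod.fst ∧
          ω (A.next (A.hist ω k)) = true
      · rw [if_pos h]
        rw [if_pos h] at h1
        calc ((openE' (A.hist ω (k+1))).card : ℝ≥0∞) ≤
            (((openE' (A.hist ω k)).card + 1 : ℕ) : ℝ≥0∞) := by exact_mod_cast h1
          _ = _ := by push_cast; ring
      · rw [if_neg h]
        rw [if_neg h] at h1
        simpa using (Nat.cast_le (α := ℝ≥0∞)).2 h1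
    calc ∫⁻ ω, ((openE' (A.hist ω (k+1))).card : ℝ≥0∞) ∂μ
        ≤ ∫⁻ ω, (((openE' (A.hist ω k)).card : ℝ≥0∞) + B.indicator (fun _ => 1) ω) ∂μ :=
          lintegral_mono hpt
      _ = (∫⁻ ω, ((openE' (A.hist ω k)).card : ℝ≥0∞) ∂μ) +
          ∫⁻ ω, B.indicator (fun _ => 1) ω ∂μ :=
          lintegral_add_left (measurable_all _) _
      _ ≤ k * bern p {true} + bern p {true} := by
          refine add_le_add ih ?_
          rw [lintegral_indicator (meas_all _) _]
          simp only [lintegral_const, one_mul, Measure.restrict_apply MeasurableSet.univ,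
            Set.univ_inter]
          calc μ B ≤ bern p {true} * μ {ω | True} :=
                step_bound p A (fun _ => True) k
            _ ≤ bern p {true} * 1 := by
                refine mul_le_mul_right ?_ _
                exact prob_le_one
            _ = bern p {true} := mul_one _
      _ = ((k:ℝ≥0∞) + 1) * bern p {true} := by ring

lemma hit_bound (p : ℝ) {A : Alg V} {u v : V} (hloc : A.IsLocal ⊤ u) (huv : u ≠ v)
    (k m : ℕ) :
    perc (Sym2 V) p {ω | A.SucceedsBy ⊤ ω u v k ∧ (openE' (A.hist ω k)).card ≤ m}
      ≤ bern p {true} * (2 * m + 1 : ℕ) := by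
  set μ := perc (Sym2 V) p with hμ
  have hsub : {ω | A.SucceedsBy ⊤ ω u v k ∧ (openE' (A.hist ω k)).card ≤ m} ⊆
      ⋃ t ∈ Finset.range k, {ω | QH A u v m (A.hist ω t) ∧
        A.next (A.hist ω t) ∉ (A.hist ω t).map Prod.fst ∧ ω (A.next (A.hist ω t)) = true} := by
    rintro ω ⟨hs, hX⟩
    obtain ⟨t, htk, hQ, hop⟩ := succ_subset hloc huv ω hs hX
    refine Set.mem_biUnion (Finset.mem_range.2 htk) ?_
    exact ⟨hQ, hQ.2.2.1, hop⟩
  calc μ _ ≤ ∑ t ∈ Finset.range k, μ {ω | QH A u v m (A.hist ω t) ∧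
        A.next (A.hist ω t) ∉ (A.hist ω t).map Prod.fst ∧ ω (A.next (A.hist ω t)) = true} :=
        (measure_mono hsub).trans (measure_biUnion_finset_le _ _)
    _ ≤ ∑ t ∈ Finset.range k, bern p {true} * μ {ω | QH A u v m (A.hist ω t)} :=
        Finset.sum_le_sum (fun t _ => step_bound p A (QH A u v m) t)
    _ = bern p {true} * ∑ t ∈ Finset.range k, μ {ω | QH A u v m (A.hist ω t)} := by
        rw [Finset.mul_sum]
    _ ≤ bern p {true} * (2 * m + 1 : ℕ) := by
        refine mul_le_mul_right ?_ _
        have hind : ∀ t, μ {ω | QH A u v m (A.hist ω t)} =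
            ∫⁻ ω, ({ω | QH A u v m (A.hist ω t)}.indicator (fun _ => (1:ℝ≥0∞)) ω) ∂μ := by
          intro t
          rw [lintegral_indicator (meas_all _) _]
          simp [Measure.restrict_apply MeasurableSet.univ]
        calc ∑ t ∈ Finset.range k, μ {ω | QH A u v m (A.hist ω t)}
            = ∫⁻ ω, (∑ t ∈ Finset.range k,
                ({ω | QH A u v m (A.hist ω t)}.indicator (fun _ => (1:ℝ≥0∞)) ω)) ∂μ := by
              rw [lintegral_finset_sum _ (fun t _ => measurable_all _)]
              exact Finset.sum_congr rfl (fun t _ => hind t)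
          _ ≤ ∫⁻ _ω, ((2 * m + 1 : ℕ) : ℝ≥0∞) ∂μ := by
              refine lintegral_mono (fun ω => ?_)
              have : (∑ t ∈ Finset.range k,
                  ({ω | QH A u v m (A.hist ω t)}.indicator (fun _ => (1:ℝ≥0∞)) ω)) =
                  (((Finset.range k).filter (fun t => QH A u v m (A.hist ω t))).card : ℝ≥0∞) := by
                rw [Finset.card_filter]
                push_cast
                refine Finset.sum_congr rfl (fun t _ => ?_)
                rw [Set.indicator_apply]
                by_cases h : QH A u v m (A.hist ω t) <;> simp [h]
              rw [this]
              convert (Nat.cast_le (α := ℝ≥0∞)).2 (count_QH (v := v) hloc ω k m)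
          _ = ((2 * m + 1 : ℕ) : ℝ≥0∞) := by
              simp

lemma main_prob (p : ℝ) {A : Alg V} {u v : V} (hloc : A.IsLocal ⊤ u) (huv : u ≠ v) (k : ℕ) :
    perc (Sym2 V) p {ω | A.SucceedsBy ⊤ ω u v k}
      ≤ bern p {true} * ((3 * Nat.sqrt k + 2 : ℕ) : ℝ≥0∞) := by
  classical
  set μ := perc (Sym2 V) p with hμ
  set m := Nat.sqrt k with hm
  have hsplit : {ω | A.SucceedsBy ⊤ ω u v k} ⊆
      {ω | A.SucceedsBy ⊤ ω u v k ∧ (openE' (A.hist ω k)).card ≤ m} ∪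
      {ω | ((m:ℝ≥0∞) + 1) ≤ ((openE' (A.hist ω k)).card : ℝ≥0∞)} := by
    intro ω h
    by_cases hX : (openE' (A.hist ω k)).card ≤ m
    · exact Or.inl ⟨h, hX⟩
    · right
      have : m + 1 ≤ (openE' (A.hist ω k)).card := by omega
      exact_mod_cast (Nat.cast_le (α := ℝ≥0∞)).2 this
  have hmark : μ {ω | ((m:ℝ≥0∞) + 1) ≤ ((openE' (A.hist ω k)).card : ℝ≥0∞)} ≤
      ((m:ℝ≥0∞) + 1) * bern p {true} := by
    have h1 := mul_meas_ge_le_lintegral₀ (μ := μ)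
      (f := fun ω => ((openE' (A.hist ω k)).card : ℝ≥0∞))
      (measurable_all _).aemeasurable ((m:ℝ≥0∞) + 1)
    have h2 := (EX p A k).trans_eq' rfl
    have h3 : ((m:ℝ≥0∞) + 1) * μ {ω | ((m:ℝ≥0∞) + 1) ≤ ((openE' (A.hist ω k)).card : ℝ≥0∞)}
        ≤ (k : ℝ≥0∞) * bern p {true} := h1.trans (EX p A k)
    have hk : (k : ℝ≥0∞) ≤ ((m:ℝ≥0∞) + 1) * ((m:ℝ≥0∞) + 1) := by
      have : k ≤ (m + 1) * (m + 1) := le_of_lt (Nat.lt_succ_sqrt k)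
      exact_mod_cast (Nat.cast_le (α := ℝ≥0∞)).2 this
    have h4 : ((m:ℝ≥0∞) + 1) * μ {ω | ((m:ℝ≥0∞) + 1) ≤ ((openE' (A.hist ω k)).card : ℝ≥0∞)}
        ≤ ((m:ℝ≥0∞) + 1) * (((m:ℝ≥0∞) + 1) * bern p {true}) := by
      refine h3.trans ?_
      rw [← mul_assoc]
      exact mul_le_mul_left hk _
    have hne0 : ((m:ℝ≥0∞) + 1) ≠ 0 := by simp
    have hnetop : ((m:ℝ≥0∞) + 1) ≠ ⊤ := by
      simp [ENNReal.add_ne_top]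
    exact (ENNReal.mul_le_mul_iff_right hne0 hnetop).1 h4
  calc μ {ω | A.SucceedsBy ⊤ ω u v k} ≤
      μ ({ω | A.SucceedsBy ⊤ ω u v k ∧ (openE' (A.hist ω k)).card ≤ m} ∪
        {ω | ((m:ℝ≥0∞) + 1) ≤ ((openE' (A.hist ω k)).card : ℝ≥0∞)}) := measure_mono hsplit
    _ ≤ μ {ω | A.SucceedsBy ⊤ ω u v k ∧ (openE' (A.hist ω k)).card ≤ m} +
        μ {ω | ((m:ℝ≥0∞) + 1) ≤ ((openE' (A.hist ω k)).card : ℝ≥0∞)} := measure_union_le _ _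
    _ ≤ bern p {true} * (2 * m + 1 : ℕ) + ((m:ℝ≥0∞) + 1) * bern p {true} :=
        add_le_add (hit_bound p hloc huv k m) hmark
    _ = bern p {true} * ((3 * m + 2 : ℕ) : ℝ≥0∞) := by
        push_cast
        ring


lemma succ_mono {A : Alg V} {u v : V} {ω : Sym2 V → Bool} {s t : ℕ} (hst : s ≤ t)
    (h : A.SucceedsBy ⊤ ω u v s) : A.SucceedsBy ⊤ ω u v t := by
  rcases h with ⟨w, hw⟩
  exact ⟨w, fun e he => probedOpen_mono A ω hst (hw e he)⟩

lemma not_succ_zero {A : Alg V} {u v : V} (huv : u ≠ v) (ω : Sym2 V → Bool) :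
    ¬ A.SucceedsBy ⊤ ω u v 0 := by
  rintro ⟨w, hw⟩
  rcases last_edge w with h | ⟨e, he, _⟩
  · exact huv h.symm
  · have := hw e he
    simp [Alg.probedOpen, Alg.hist] at this

end RouteAux


/-- **Local routing in `G(n, c/n)` needs `Ω(n²)` probes.** For `p = c/n`,
`c > 1`, and vertices `u ≠ v` with `Pr[u ∼ v] ≥ a > 0`, any correct local
routing algorithm succeeds within `k` probes with conditional probability at
most `K·√k/n`, and consequently its expected number of probes (conditioned on
`u ∼ v`) is at least `K'·n²`. -/
theorem gnp_local_routing_lower (c : ℝ) (hc : 1 < c) (a : ℝ) (ha : 0 < a) :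
    ∃ K : ℝ, 0 < K ∧ ∃ K' : ℝ, 0 < K' ∧
      ∀ n : ℕ, 0 < n → ∀ u v : Fin n, u ≠ v → ∀ A : Alg (Fin n),
        A.IsLocal (⊤ : SimpleGraph (Fin n)) u →
        (∀ ω, OpenConn (⊤ : SimpleGraph (Fin n)) ω u v →
          ∃ t, A.SucceedsBy ⊤ ω u v t) →
        ENNReal.ofReal a ≤
          perc (Sym2 (Fin n)) (c / n) {ω | OpenConn (⊤ : SimpleGraph (Fin n)) ω u v} →
        (∀ k : ℕ,
          (perc (Sym2 (Fin n)) (c / n))[|{ω | OpenConn (⊤ : SimpleGraph (Fin n)) ω u v}]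
              {ω | ∃ s < k, A.SucceedsBy ⊤ ω u v s}
            ≤ ENNReal.ofReal (K * Real.sqrt k / n)) ∧
        ENNReal.ofReal (K' * n ^ 2) ≤
          ∫⁻ ω, ((sInf {t | A.SucceedsBy (⊤ : SimpleGraph (Fin n)) ω u v t} : ℕ) : ℝ≥0∞)
            ∂((perc (Sym2 (Fin n)) (c / n))[|{ω |
                OpenConn (⊤ : SimpleGraph (Fin n)) ω u v}]) := by
  classical
  have hc0 : 0 < c := lt_trans one_pos hc
  set K : ℝ := 5 * c / a with hK
  have hKpos : 0 < K := by positivity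
  set K' : ℝ := 1 / (16 * K ^ 2) with hK'
  have hK'pos : 0 < K' := by positivity
  refine ⟨K, hKpos, K', hK'pos, ?_⟩
  intro n hn u v huv A hloc hcorr hconn
  set p := c / (n : ℝ) with hp
  have hn0 : (0:ℝ) < n := by exact_mod_cast hn
  have hp0 : 0 ≤ p := by positivity
  set μ := perc (Sym2 (Fin n)) p with hμ
  set conn := {ω : Sym2 (Fin n) → Bool | OpenConn ⊤ ω u v} with hconnset
  set ν := μ[|conn] with hν
  have hpp : bern p {true} ≤ ENNReal.ofReal p := by
    rw [RouteAux.bern_true]; exact min_le_left _ _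
  have hμconn0 : μ conn ≠ 0 := ((ENNReal.ofReal_pos.2 ha).trans_le hconn).ne'
  have hνprob : IsProbabilityMeasure ν := cond_isProbabilityMeasure hμconn0
  -- Part 1
  have hmain : ∀ k : ℕ, ν {ω | ∃ s < k, A.SucceedsBy ⊤ ω u v s}
      ≤ ENNReal.ofReal (K * Real.sqrt k / n) := by
    intro k
    rcases Nat.eq_zero_or_pos k with rfl | hk
    · have hemp : {ω : Sym2 (Fin n) → Bool | ∃ s < 0, A.SucceedsBy ⊤ ω u v s} = ∅ := by
        ext ω; simp
      rw [hemp, measure_empty]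
      exact zero_le
    · have hsub : {ω : Sym2 (Fin n) → Bool | ∃ s < k, A.SucceedsBy ⊤ ω u v s} ⊆
          {ω | A.SucceedsBy ⊤ ω u v k} := by
        rintro ω ⟨s, hs, hss⟩
        exact RouteAux.succ_mono (le_of_lt hs) hss
      have h1 : ν {ω | ∃ s < k, A.SucceedsBy ⊤ ω u v s}
          ≤ (ENNReal.ofReal a)⁻¹ * μ {ω | A.SucceedsBy ⊤ ω u v k} := by
        rw [hν, cond_apply (RouteAux.meas_all _)]
        exact mul_le_mul (ENNReal.inv_le_inv' hconn)
          (measure_mono (Set.inter_subset_right.trans hsub)) (zero_le) (zero_le)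
      have h2 : μ {ω | A.SucceedsBy ⊤ ω u v k}
          ≤ ENNReal.ofReal (p * ((3 * Nat.sqrt k + 2 : ℕ) : ℝ)) := by
        refine (RouteAux.main_prob p hloc huv k).trans ?_
        calc bern p {true} * ((3 * Nat.sqrt k + 2 : ℕ) : ℝ≥0∞)
            ≤ ENNReal.ofReal p * ENNReal.ofReal ((3 * Nat.sqrt k + 2 : ℕ) : ℝ) := by
              refine mul_le_mul hpp ?_ (zero_le) (zero_le)
              rw [ENNReal.ofReal_natCast]
          _ = ENNReal.ofReal (p * ((3 * Nat.sqrt k + 2 : ℕ) : ℝ)) :=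
              (ENNReal.ofReal_mul hp0).symm
      have hreal : a⁻¹ * (p * ((3 * Nat.sqrt k + 2 : ℕ) : ℝ)) ≤ K * Real.sqrt k / n := by
        have hk1 : (1:ℝ) ≤ k := by exact_mod_cast hk
        have hs1 : 1 ≤ Real.sqrt k := by
          rw [show (1:ℝ) = Real.sqrt 1 from (Real.sqrt_one).symm]
          exact Real.sqrt_le_sqrt hk1
        have hs2 : (Nat.sqrt k : ℝ) ≤ Real.sqrt k := by
          rw [Real.le_sqrt (by positivity) (by positivity)]
          exact_mod_cast Nat.sqrt_le' k
        have hcast : ((3 * Nat.sqrt k + 2 : ℕ) : ℝ) ≤ 5 * Real.sqrt k := by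
          push_cast
          nlinarith [hs1, hs2]
        have hstep : a⁻¹ * (p * ((3 * Nat.sqrt k + 2 : ℕ) : ℝ))
            ≤ a⁻¹ * (p * (5 * Real.sqrt k)) := by
          have := mul_le_mul_of_nonneg_left hcast hp0
          exact mul_le_mul_of_nonneg_left this (by positivity)
        refine hstep.trans (le_of_eq ?_)
        rw [hK, hp]
        field_simp
      calc ν {ω | ∃ s < k, A.SucceedsBy ⊤ ω u v s}
          ≤ (ENNReal.ofReal a)⁻¹ * ENNReal.ofReal (p * ((3 * Nat.sqrt k + 2 : ℕ) : ℝ)) :=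
            h1.trans (mul_le_mul_right h2 _)
        _ = ENNReal.ofReal (a⁻¹ * (p * ((3 * Nat.sqrt k + 2 : ℕ) : ℝ))) := by
            rw [← ENNReal.ofReal_inv_of_pos ha, ← ENNReal.ofReal_mul (by positivity)]
        _ ≤ ENNReal.ofReal (K * Real.sqrt k / n) := ENNReal.ofReal_le_ofReal hreal
  refine ⟨hmain, ?_⟩
  -- Part 2
  set T : (Sym2 (Fin n) → Bool) → ℕ := fun ω => sInf {t | A.SucceedsBy ⊤ ω u v t} with hT
  have hνconnc : ν connᶜ = 0 := by
    rw [hν, cond_apply (RouteAux.meas_all _)]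
    simp
  have hTne : ∀ ω ∈ conn, {t | A.SucceedsBy ⊤ ω u v t}.Nonempty := fun ω hω => hcorr ω hω
  have hT1 : ∀ ω ∈ conn, 1 ≤ T ω := by
    intro ω hω
    rw [Nat.one_le_iff_ne_zero]
    intro h0
    have hmem := Nat.sInf_mem (hTne ω hω)
    rw [show sInf {t | A.SucceedsBy ⊤ ω u v t} = T ω from rfl, h0] at hmem
    exact RouteAux.not_succ_zero huv ω hmem
  have hsetone : ν {ω | (1:ℝ≥0∞) ≤ (T ω : ℝ≥0∞)} = 1 := by
    refine le_antisymm prob_le_one ?_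
    have hcover : Set.univ ⊆ {ω | (1:ℝ≥0∞) ≤ (T ω : ℝ≥0∞)} ∪ connᶜ := by
      intro ω _
      by_cases hω : ω ∈ conn
      · left
        exact_mod_cast (Nat.one_le_cast (α := ℝ≥0∞)).2 (hT1 ω hω)
      · right; exact hω
    calc (1:ℝ≥0∞) = ν Set.univ := measure_univ.symm
      _ ≤ ν ({ω | (1:ℝ≥0∞) ≤ (T ω : ℝ≥0∞)} ∪ connᶜ) := measure_mono hcover
      _ ≤ ν {ω | (1:ℝ≥0∞) ≤ (T ω : ℝ≥0∞)} + ν connᶜ := measure_union_le _ _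
      _ = ν {ω | (1:ℝ≥0∞) ≤ (T ω : ℝ≥0∞)} := by rw [hνconnc, add_zero]
  have hE1 : 1 ≤ ∫⁻ ω, (T ω : ℝ≥0∞) ∂ν := by
    have h := mul_meas_ge_le_lintegral₀ (μ := ν) (f := fun ω => (T ω : ℝ≥0∞))
      (RouteAux.measurable_all _).aemeasurable 1
    rw [hsetone, mul_one] at h
    exact h
  set k₀ : ℕ := ⌊(n:ℝ)^2 / (4 * K^2)⌋₊ with hk₀
  have hk₀le : (k₀ : ℝ) ≤ (n:ℝ)^2 / (4 * K^2) := Nat.floor_le (by positivity)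
  have hhalf : ν {ω | ∃ s < k₀, A.SucceedsBy ⊤ ω u v s} ≤ 2⁻¹ := by
    refine (hmain k₀).trans ?_
    have hr : K * Real.sqrt k₀ / n ≤ 1 / 2 := by
      have h1 : Real.sqrt k₀ ≤ (n:ℝ) / (2 * K) := by
        have heq : (n:ℝ)^2 / (4 * K^2) = ((n:ℝ) / (2 * K))^2 := by
          field_simp; ring
        calc Real.sqrt k₀ ≤ Real.sqrt ((n:ℝ)^2 / (4 * K^2)) := Real.sqrt_le_sqrt hk₀le
          _ = (n:ℝ) / (2 * K) := by rw [heq, Real.sqrt_sq (by positivity)]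
      have hKne : K ≠ 0 := ne_of_gt hKpos
      have hnne : (n:ℝ) ≠ 0 := ne_of_gt hn0
      calc K * Real.sqrt k₀ / n ≤ K * ((n:ℝ) / (2 * K)) / n := by gcongr
        _ = 1 / 2 := by field_simp
    calc ENNReal.ofReal (K * Real.sqrt k₀ / n) ≤ ENNReal.ofReal (1/2) :=
          ENNReal.ofReal_le_ofReal hr
      _ = 2⁻¹ := by
          rw [one_div, ENNReal.ofReal_inv_of_pos (by norm_num), ENNReal.ofReal_ofNat]
  have hgeT : 2⁻¹ ≤ ν {ω | (k₀:ℝ≥0∞) ≤ (T ω : ℝ≥0∞)} := by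
    have hcover : Set.univ ⊆ {ω | ∃ s < k₀, A.SucceedsBy ⊤ ω u v s} ∪ connᶜ ∪
        {ω | (k₀:ℝ≥0∞) ≤ (T ω : ℝ≥0∞)} := by
      intro ω _
      by_cases hω : ω ∈ conn
      · by_cases hs : ∃ s < k₀, A.SucceedsBy ⊤ ω u v s
        · exact Or.inl (Or.inl hs)
        · refine Or.inr ?_
          have hmem := Nat.sInf_mem (hTne ω hω)
          have : k₀ ≤ T ω := by
            by_contra hlt
            push_neg at hlt
            exact hs ⟨T ω, hlt, hmem⟩
          exact_mod_cast (Nat.cast_le (α := ℝ≥0∞)).2 this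
      · exact Or.inl (Or.inr hω)
    have h1 : (1:ℝ≥0∞) ≤ 2⁻¹ + ν {ω | (k₀:ℝ≥0∞) ≤ (T ω : ℝ≥0∞)} := by
      calc (1:ℝ≥0∞) = ν Set.univ := measure_univ.symm
        _ ≤ ν ({ω | ∃ s < k₀, A.SucceedsBy ⊤ ω u v s} ∪ connᶜ ∪
            {ω | (k₀:ℝ≥0∞) ≤ (T ω : ℝ≥0∞)}) := measure_mono hcover
        _ ≤ ν ({ω | ∃ s < k₀, A.SucceedsBy ⊤ ω u v s} ∪ connᶜ) +
            ν {ω | (k₀:ℝ≥0∞) ≤ (T ω : ℝ≥0∞)} := measure_union_le _ _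
        _ ≤ (ν {ω | ∃ s < k₀, A.SucceedsBy ⊤ ω u v s} + ν connᶜ) +
            ν {ω | (k₀:ℝ≥0∞) ≤ (T ω : ℝ≥0∞)} :=
            add_le_add_left (measure_union_le _ _) _
        _ ≤ 2⁻¹ + ν {ω | (k₀:ℝ≥0∞) ≤ (T ω : ℝ≥0∞)} := by
            rw [hνconnc, add_zero]
            exact add_le_add_left hhalf _
    have h2 : (1:ℝ≥0∞) - 2⁻¹ ≤ ν {ω | (k₀:ℝ≥0∞) ≤ (T ω : ℝ≥0∞)} :=
      tsub_le_iff_right.2 (by rwa [add_comm] at h1)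
    rwa [show (1:ℝ≥0∞) - 2⁻¹ = 2⁻¹ by
      rw [← ENNReal.inv_two_add_inv_two, ENNReal.add_sub_cancel_right (by simp)]] at h2
  have hE2 : (k₀:ℝ≥0∞) * 2⁻¹ ≤ ∫⁻ ω, (T ω : ℝ≥0∞) ∂ν := by
    have h := mul_meas_ge_le_lintegral₀ (μ := ν) (f := fun ω => (T ω : ℝ≥0∞))
      (RouteAux.measurable_all _).aemeasurable (k₀:ℝ≥0∞)
    exact (mul_le_mul_right hgeT _).trans h
  -- conclude
  show ENNReal.ofReal (K' * n ^ 2) ≤ ∫⁻ ω, (T ω : ℝ≥0∞) ∂ν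
  by_cases hbig : (n:ℝ)^2 / (4 * K^2) < 2
  · refine le_trans ?_ hE1
    rw [ENNReal.ofReal_le_one]
    rw [hK']
    rw [show 1 / (16 * K^2) * (n:ℝ)^2 = ((n:ℝ)^2 / (4 * K^2)) / 4 by field_simp; ring]
    nlinarith [hbig]
  · push_neg at hbig
    have hfl : (n:ℝ)^2 / (4 * K^2) / 2 ≤ (k₀ : ℝ) := by
      have := Nat.sub_one_lt_floor ((n:ℝ)^2 / (4 * K^2))
      rw [← hk₀] at this
      nlinarith [this, hbig]
    refine le_trans ?_ hE2
    have heq : K' * (n:ℝ)^2 = ((n:ℝ)^2 / (4 * K^2) / 2) / 2 := by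
      rw [hK']; field_simp; ring
    calc ENNReal.ofReal (K' * (n:ℝ)^2) ≤ ENNReal.ofReal ((k₀:ℝ) / 2) := by
          refine ENNReal.ofReal_le_ofReal ?_
          rw [heq]
          linarith [hfl]
      _ = (k₀:ℝ≥0∞) * 2⁻¹ := by
          rw [div_eq_mul_inv, ENNReal.ofReal_mul (by positivity),
            ENNReal.ofReal_natCast, ENNReal.ofReal_inv_of_pos (by norm_num),
            ENNReal.ofReal_ofNat]
end
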